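/- arXiv:2604.04201 — 7 statements merged into one kernel-verified Lean document; each statement's English description precedes it below -/
import Mathlib

section
/- Let w₀>0, E>0, let ρ(t;w₀) solve ρ̈=−w₀²·g(ρ)·g'(ρ) with ρ(0)=0, ρ̇(0)=√(2E), and define z(t;w₀) = w₀·∫₀^t g(ρ(s;w₀))² ds. Then the partial derivative of the vertical coordinate with respect to w₀ factorizes as z_{w₀}(t;w₀) = −(1/w₀)·ρ̇(t;w₀)·ρ_{w₀}(t;w₀), where ρ_{w₀}=∂ρ/∂w₀. -/
noncomputable section

/-- The radial (cylindrical) coordinate on `ℝ³`. -/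
def rad (q : ℝ × ℝ × ℝ) : ℝ := Real.sqrt (q.1 ^ 2 + q.2.1 ^ 2)

/-- The class `𝔉` of weight functions. -/
structure MemF (f : ℝ → ℝ) : Prop where
  cont : ContinuousOn f (Set.Ici 0)
  zero : f 0 = 0
  pos : ∀ r : ℝ, 0 < r → 0 < f r
  smooth : ContDiffOn ℝ 2 f (Set.Ioi 0)
  ratio_ext : ∃ c : ℝ, Filter.Tendsto (fun r : ℝ => f r * deriv f r / r)
      (nhdsWithin 0 (Set.Ioi 0)) (nhds c)
  strictMono : StrictMonoOn f (Set.Ici 0)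
  tendsto_top : Filter.Tendsto f Filter.atTop Filter.atTop
  sq_div_deriv : Filter.Tendsto (fun r : ℝ => f r ^ 2 / deriv f r) Filter.atTop Filter.atTop

/-- The odd extension of `f`. -/
def oddExt (f : ℝ → ℝ) (x : ℝ) : ℝ := if 0 ≤ x then f x else -f (-x)

open Filter Set Topology

section Aux

variable {f : ℝ → ℝ}

lemma memF_f_hasDeriv (hf : MemF f) {x : ℝ} (hx : 0 < x) : HasDerivAt f (deriv f x) x :=
  ((hf.smooth.contDiffAt (Ioi_mem_nhds hx)).differentiableAt (by norm_num)).hasDerivAt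

lemma oddExt_eq_pos {x : ℝ} (hx : 0 ≤ x) : oddExt f x = f x := if_pos hx

lemma oddExt_eventually_pos {x : ℝ} (hx : 0 < x) : oddExt f =ᶠ[nhds x] f := by
  filter_upwards [Ioi_mem_nhds hx] with y hy
  exact oddExt_eq_pos (le_of_lt hy)

lemma oddExt_eventually_neg {x : ℝ} (hx : x < 0) :
    oddExt f =ᶠ[nhds x] (fun y => -f (-y)) := by
  filter_upwards [Iio_mem_nhds hx] with y hy
  exact if_neg (not_le.mpr hy)

lemma oddExt_hasDeriv_pos (hf : MemF f) {x : ℝ} (hx : 0 < x) :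
    HasDerivAt (oddExt f) (deriv f x) x :=
  (memF_f_hasDeriv hf hx).congr_of_eventuallyEq (oddExt_eventually_pos hx)

lemma oddExt_deriv_pos (hf : MemF f) {x : ℝ} (hx : 0 < x) :
    deriv (oddExt f) x = deriv f x := (oddExt_hasDeriv_pos hf hx).deriv

lemma oddExt_hasDeriv_neg (hf : MemF f) {x : ℝ} (hx : x < 0) :
    HasDerivAt (oddExt f) (deriv f (-x)) x := by
  have h1 : HasDerivAt f (deriv f (-x)) (-x) := memF_f_hasDeriv hf (by linarith)
  have h2 : HasDerivAt (fun y : ℝ => f (-y)) (deriv f (-x) * (-1)) x :=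
    h1.comp x (hasDerivAt_neg x)
  have h3 : HasDerivAt (fun y : ℝ => -f (-y)) (deriv f (-x)) x := by
    have h4 := h2.neg; simp only [mul_neg, mul_one, neg_neg] at h4; exact h4
  exact h3.congr_of_eventuallyEq (oddExt_eventually_neg hx)

lemma oddExt_deriv_neg (hf : MemF f) {x : ℝ} (hx : x < 0) :
    deriv (oddExt f) x = deriv f (-x) := (oddExt_hasDeriv_neg hf hx).deriv

lemma memF_ff'_tendsto (hf : MemF f) :
    Tendsto (fun r => f r * deriv f r) (nhdsWithin 0 (Ioi 0)) (nhds 0) := by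
  obtain ⟨c, hc⟩ := hf.ratio_ext
  have hid : Tendsto (fun r : ℝ => r) (nhdsWithin 0 (Ioi 0)) (nhds 0) :=
    tendsto_id.mono_left nhdsWithin_le_nhds
  have := hc.mul hid
  rw [mul_zero] at this
  refine this.congr' ?_
  filter_upwards [self_mem_nhdsWithin] with r hr
  rw [div_mul_cancel₀ _ (ne_of_gt (mem_Ioi.mp hr))]

end Aux
section Aux2

open Filter Set Topology

variable {f : ℝ → ℝ}

lemma oddExt_eq_neg {x : ℝ} (hx : x < 0) : oddExt f x = -f (-x) := if_neg (not_le.mpr hx)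

lemma tendsto_neg_Iio_Ioi : Tendsto (fun r : ℝ => -r) (nhdsWithin 0 (Iio 0)) (nhdsWithin 0 (Ioi 0)) := by
  refine tendsto_nhdsWithin_iff.mpr ⟨?_, ?_⟩
  · have : Tendsto (fun r : ℝ => -r) (nhds 0) (nhds (-0)) := (continuous_neg).tendsto 0
    rw [neg_zero] at this
    exact this.mono_left nhdsWithin_le_nhds
  · filter_upwards [self_mem_nhdsWithin] with r hr
    simpa using (mem_Iio.mp hr)

lemma phi_cont (hf : MemF f) : Continuous (fun x => oddExt f x * deriv (oddExt f) x) := by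
  set φ := fun x => oddExt f x * deriv (oddExt f) x with hφdef
  have hfC : ContinuousOn f (Ioi 0) := hf.cont.mono (fun x hx => mem_Ici.mpr (le_of_lt (mem_Ioi.mp hx)))
  have hf'C : ContinuousOn (deriv f) (Ioi 0) :=
    hf.smooth.continuousOn_deriv_of_isOpen isOpen_Ioi (by norm_num)
  have hφ0 : φ 0 = 0 := by
    simp [hφdef, oddExt_eq_pos le_rfl, hf.zero]
  rw [continuous_iff_continuousAt]
  intro x
  rcases lt_trichotomy x 0 with hx | hx | hx
  · have hc : ContinuousAt (fun y => (-f (-y)) * deriv f (-y)) x := by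
      have h1 : ContinuousAt (fun y : ℝ => f (-y)) x :=
        (hfC.continuousAt (Ioi_mem_nhds (by linarith))).comp (continuous_neg.continuousAt)
      have h2 : ContinuousAt (fun y : ℝ => deriv f (-y)) x :=
        (hf'C.continuousAt (Ioi_mem_nhds (by linarith))).comp (continuous_neg.continuousAt)
      exact (h1.neg).mul h2
    refine hc.congr ?_
    filter_upwards [Iio_mem_nhds hx] with y hy
    have hy' : y < 0 := mem_Iio.mp hy
    simp only [hφdef, oddExt_deriv_neg hf hy', oddExt_eq_neg hy']
  · subst hx
    have key : Tendsto φ (nhdsWithin (0:ℝ) {(0:ℝ)}ᶜ) (nhds 0) := by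
      rw [← nhdsLT_sup_nhdsGT (0:ℝ), tendsto_sup]
      constructor
      · have := (memF_ff'_tendsto hf).comp tendsto_neg_Iio_Ioi
        have h2 : Tendsto (fun r : ℝ => -(f (-r) * deriv f (-r))) (nhdsWithin 0 (Iio 0)) (nhds 0) := by
          simpa using this.neg
        refine h2.congr' ?_
        filter_upwards [self_mem_nhdsWithin] with r hr
        have hr' : r < 0 := mem_Iio.mp hr
        simp only [hφdef, oddExt_deriv_neg hf hr', oddExt_eq_neg hr']
        ring
      · refine (memF_ff'_tendsto hf).congr' ?_
        filter_upwards [self_mem_nhdsWithin] with r hr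
        have hr' : (0:ℝ) < r := mem_Ioi.mp hr
        simp only [hφdef, oddExt_deriv_pos hf hr', oddExt_eq_pos (le_of_lt hr')]
    have key2 : Tendsto φ (nhdsWithin (0:ℝ) {(0:ℝ)}ᶜ ⊔ pure 0) (nhds 0) := by
      rw [tendsto_sup]
      refine ⟨key, ?_⟩
      rw [tendsto_pure_left]
      intro s hs
      rw [hφ0]
      exact mem_of_mem_nhds hs
    rw [nhdsNE_sup_pure] at key2
    rw [ContinuousAt, hφ0]
    exact key2
  · have hc : ContinuousAt (fun y => f y * deriv f y) x :=
      (hfC.continuousAt (Ioi_mem_nhds hx)).mul (hf'C.continuousAt (Ioi_mem_nhds hx))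
    refine hc.congr ?_
    filter_upwards [Ioi_mem_nhds hx] with y hy
    have hy' : (0:ℝ) < y := mem_Ioi.mp hy
    simp only [hφdef, oddExt_deriv_pos hf hy', oddExt_eq_pos (le_of_lt hy')]

end Aux2
section Aux3

open Filter Set Topology

variable {f : ℝ → ℝ}

lemma sq_slope_tendsto (hf : MemF f) :
    Tendsto (fun r => f r ^ 2 / r) (nhdsWithin 0 (Ioi 0)) (nhds 0) := by
  have hff' : ∀ᶠ x in nhdsWithin (0:ℝ) (Ioi 0), HasDerivAt (fun r => f r ^ 2)
      (2 * (f x * deriv f x)) x := by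
    filter_upwards [self_mem_nhdsWithin] with x hx
    have := (memF_f_hasDeriv hf (mem_Ioi.mp hx)).fun_pow 2
    refine this.congr_deriv ?_
    ring
  have hgg' : ∀ᶠ x in nhdsWithin (0:ℝ) (Ioi 0), HasDerivAt (fun r : ℝ => r) (1:ℝ) x :=
    Eventually.of_forall (fun x => hasDerivAt_id x)
  have hg' : ∀ᶠ x in nhdsWithin (0:ℝ) (Ioi 0), (1:ℝ) ≠ 0 :=
    Eventually.of_forall (fun _ => one_ne_zero)
  have hfa : Tendsto (fun r => f r ^ 2) (nhdsWithin 0 (Ioi 0)) (nhds 0) := by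
    have h0 : Tendsto f (nhdsWithin 0 (Ici 0)) (nhds 0) := by
      have := (hf.cont 0 (self_mem_Ici)).tendsto
      rwa [hf.zero] at this
    have h1 : Tendsto f (nhdsWithin 0 (Ioi 0)) (nhds 0) :=
      h0.mono_left (nhdsWithin_mono _ Ioi_subset_Ici_self)
    simpa using h1.pow 2
  have hga : Tendsto (fun r : ℝ => r) (nhdsWithin 0 (Ioi 0)) (nhds 0) :=
    tendsto_id.mono_left nhdsWithin_le_nhds
  have hdiv : Tendsto (fun x => 2 * (f x * deriv f x) / 1) (nhdsWithin 0 (Ioi 0)) (nhds 0) := by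
    simp only [div_one]
    simpa using (memF_ff'_tendsto hf).const_mul 2
  exact HasDerivAt.lhopital_zero_nhdsGT hff' hgg' hg' hfa hga hdiv

lemma oddExt_sq_hasDeriv (hf : MemF f) (x : ℝ) :
    HasDerivAt (fun y => oddExt f y ^ 2) (2 * (oddExt f x * deriv (oddExt f) x)) x := by
  rcases lt_trichotomy x 0 with hx | hx | hx
  · have := (oddExt_hasDeriv_neg hf hx).fun_pow 2
    rw [oddExt_deriv_neg hf hx]
    refine this.congr_deriv ?_
    ring
  · subst hx
    have h0 : oddExt f 0 = 0 := by simp [oddExt_eq_pos le_rfl, hf.zero]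
    rw [h0]
    simp only [zero_mul, mul_zero]
    rw [hasDerivAt_iff_tendsto_slope]
    rw [← nhdsLT_sup_nhdsGT (0:ℝ), tendsto_sup]
    have hpos : Tendsto (slope (fun y => oddExt f y ^ 2) 0) (nhdsWithin 0 (Ioi 0)) (nhds 0) := by
      refine (sq_slope_tendsto hf).congr' ?_
      filter_upwards [self_mem_nhdsWithin] with r hr
      have hr' : (0:ℝ) < r := mem_Ioi.mp hr
      rw [slope_def_field]
      simp [oddExt_eq_pos (le_of_lt hr'), h0]
    constructor
    · have := (sq_slope_tendsto hf).comp tendsto_neg_Iio_Ioi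
      have h2 : Tendsto (fun r : ℝ => -(f (-r) ^ 2 / (-r))) (nhdsWithin 0 (Iio 0)) (nhds 0) := by
        simpa using this.neg
      refine h2.congr' ?_
      filter_upwards [self_mem_nhdsWithin] with r hr
      have hr' : r < 0 := mem_Iio.mp hr
      rw [slope_def_field]
      rw [oddExt_eq_neg hr', h0]
      field_simp
      ring
    · exact hpos
  · have := (oddExt_hasDeriv_pos hf hx).fun_pow 2
    rw [oddExt_deriv_pos hf hx]
    refine this.congr_deriv ?_
    ring

lemma oddExt_sq_cont (hf : MemF f) : Continuous (fun y => oddExt f y ^ 2) :=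
  continuous_iff_continuousAt.mpr fun x => (oddExt_sq_hasDeriv hf x).continuousAt

end Aux3
open Filter Set Topology MeasureTheory intervalIntegral in
/-- factorization of the derivative of the vertical coordinate
`z(t;w₀) = w₀·∫₀ᵗ g(ρ(s;w₀))² ds` with respect to the parameter `w₀`:
`z_{w₀}(t;w₀) = −(1/w₀)·ρ̇(t;w₀)·ρ_{w₀}(t;w₀)`. -/
theorem z_w0_factorization
    (f : ℝ → ℝ) (hf : MemF f)
    (g : ℝ → ℝ) (hg : g = oddExt f)
    (E : ℝ) (hE : 0 < E)
    (ρ ρ' : ℝ → ℝ → ℝ)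
    (hρ : ∀ w t, HasDerivAt (ρ w) (ρ' w t) t)
    (hρ'' : ∀ w t, HasDerivAt (ρ' w) (-(w ^ 2) * g (ρ w t) * deriv g (ρ w t)) t)
    (h0 : ∀ w, ρ w 0 = 0) (h1 : ∀ w, ρ' w 0 = Real.sqrt (2 * E))
    (P : ℝ → ℝ → ℝ)
    (hP : ∀ w t, HasDerivAt (fun w' => ρ w' t) (P w t) w)
    (hPc : Continuous (fun p : ℝ × ℝ => P p.1 p.2))
    (hρc : Continuous (fun p : ℝ × ℝ => ρ p.1 p.2))
    (w₀ : ℝ) (hw : 0 < w₀) (t : ℝ) :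
    HasDerivAt (fun w => w * ∫ s in (0:ℝ)..t, g (ρ w s) ^ 2)
      (-(1 / w₀) * ρ' w₀ t * P w₀ t) w₀ := by
  subst hg
  set φ : ℝ → ℝ := fun x => oddExt f x * deriv (oddExt f) x with hφdef
  have hφc : Continuous φ := phi_cont hf
  have hGd : ∀ x, HasDerivAt (fun y => oddExt f y ^ 2) (2 * φ x) x := oddExt_sq_hasDeriv hf
  have hGc : Continuous (fun y => oddExt f y ^ 2) := oddExt_sq_cont hf
  have hO0 : oddExt f 0 = 0 := by simp [oddExt, hf.zero]
  have hρ2 : ∀ w s, HasDerivAt (ρ' w) (-(w ^ 2) * φ (ρ w s)) s := by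
    intro w s
    have := hρ'' w s
    rwa [mul_assoc] at this
  have hρsc : ∀ w, Continuous (ρ w) :=
    fun w => continuous_iff_continuousAt.mpr fun s => (hρ w s).continuousAt
  have hρ'sc : ∀ w, Continuous (ρ' w) :=
    fun w => continuous_iff_continuousAt.mpr fun s => (hρ2 w s).continuousAt
  have hPsc : ∀ w, Continuous (fun s => P w s) :=
    fun w => hPc.comp (Continuous.prodMk_right w)
  have hφρc : Continuous (fun p : ℝ × ℝ => φ (ρ p.1 p.2)) := hφc.comp hρc
  -- chain rule in w
  have hchain : ∀ w s, HasDerivAt (fun w' => oddExt f (ρ w' s) ^ 2) (2 * φ (ρ w s) * P w s) w := by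
    intro w s
    have := (hGd (ρ w s)).comp w (hP w s)
    exact this
  -- energy conservation
  have energy : ∀ w s, ρ' w s ^ 2 + w ^ 2 * oddExt f (ρ w s) ^ 2 = 2 * E := by
    intro w s
    set h : ℝ → ℝ := fun u => ρ' w u ^ 2 + w ^ 2 * oddExt f (ρ w u) ^ 2 with hh
    have hd : ∀ u, HasDerivAt h 0 u := by
      intro u
      have h1' : HasDerivAt (fun v => ρ' w v ^ 2)
          (2 * ρ' w u * (-(w ^ 2) * φ (ρ w u))) u := by
        have := (hρ2 w u).fun_pow 2
        refine this.congr_deriv ?_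
        push_cast
        ring
      have h2' : HasDerivAt (fun v => w ^ 2 * oddExt f (ρ w v) ^ 2)
          (w ^ 2 * (2 * φ (ρ w u) * ρ' w u)) u := by
        have := ((hGd (ρ w u)).comp u (hρ w u)).const_mul (w ^ 2)
        simpa [Function.comp] using this
      have := h1'.add h2'
      refine this.congr_deriv ?_
      ring
    have hcst : ∀ x y, h x = h y :=
      is_const_of_deriv_eq_zero (fun u => (hd u).differentiableAt) (fun u => (hd u).deriv)
    have := hcst s 0
    rw [hh] at this
    simp only at this
    rw [this, h0 w, h1 w, hO0]
    rw [Real.sq_sqrt (by linarith)]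
    ring
  -- setup
  have hII : ∀ (h : ℝ → ℝ), Continuous h → ∀ a b : ℝ, IntervalIntegrable h volume a b :=
    fun h hc a b => hc.intervalIntegrable a b
  set A : ℝ → ℝ := fun w => ∫ s in (0:ℝ)..t, oddExt f (ρ w s) ^ 2 with hAdef
  set L : ℝ := ∫ s in (0:ℝ)..t, 2 * φ (ρ w₀ s) * P w₀ s with hLdef
  have hKcomp : IsCompact (Icc (w₀ - 1) (w₀ + 1) ×ˢ uIcc (0:ℝ) t) :=
    isCompact_Icc.prod isCompact_uIcc
  have hw₀K : w₀ ∈ Icc (w₀ - 1) (w₀ + 1) := by constructor <;> linarith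
  have hIccNhds : Icc (w₀ - 1) (w₀ + 1) ∈ nhds w₀ :=
    Icc_mem_nhds (by linarith) (by linarith)
  -- derivative of A at w₀
  obtain ⟨C1, hC1⟩ := hKcomp.exists_bound_of_continuousOn
    (f := fun p : ℝ × ℝ => 2 * φ (ρ p.1 p.2) * P p.1 p.2)
    (((continuous_const.mul hφρc).mul hPc).continuousOn)
  have hA' : HasDerivAt A L w₀ := by
    rw [hasDerivAt_iff_tendsto_slope]
    have main : Tendsto (fun w => ∫ s in (0:ℝ)..t,
        (oddExt f (ρ w s) ^ 2 - oddExt f (ρ w₀ s) ^ 2) / (w - w₀))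
        (nhdsWithin w₀ {w₀}ᶜ) (nhds L) := by
      apply intervalIntegral.tendsto_integral_filter_of_dominated_convergence
        (bound := fun _ => C1)
      · apply Eventually.of_forall
        intro w
        exact (((hGc.comp (hρsc w)).sub (hGc.comp (hρsc w₀))).div_const _).aestronglyMeasurable
      · filter_upwards [mem_nhdsWithin_of_mem_nhds hIccNhds, self_mem_nhdsWithin]
          with w hwK hwne
        refine ae_of_all _ (fun s hs => ?_)
        have hsK : s ∈ uIcc (0:ℝ) t := uIoc_subset_uIcc hs
        have hmvt : ‖oddExt f (ρ w s) ^ 2 - oddExt f (ρ w₀ s) ^ 2‖ ≤ C1 * ‖w - w₀‖ := by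
          apply Convex.norm_image_sub_le_of_norm_hasDerivWithin_le
            (f' := fun u => 2 * φ (ρ u s) * P u s)
            (fun u _ => (hchain u s).hasDerivWithinAt)
            (fun u hu => hC1 (u, s) ⟨hu, hsK⟩) (convex_Icc _ _) hw₀K hwK
        have hwne' : w - w₀ ≠ 0 := sub_ne_zero.mpr hwne
        rw [norm_div]
        rw [div_le_iff₀ (norm_pos_iff.mpr hwne')]
        exact hmvt
      · exact intervalIntegrable_const
      · refine ae_of_all _ (fun s _ => ?_)
        have := hasDerivAt_iff_tendsto_slope.mp (hchain w₀ s)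
        refine this.congr' ?_
        filter_upwards [self_mem_nhdsWithin] with w hwne
        rw [slope_def_field]
    refine main.congr' ?_
    filter_upwards [self_mem_nhdsWithin] with w hwne
    have hwne' : w - w₀ ≠ 0 := sub_ne_zero.mpr hwne
    rw [intervalIntegral.integral_div, slope_def_field]
    simp only [hAdef]
    rw [intervalIntegral.integral_sub
      (hII (fun s => oddExt f (ρ w s) ^ 2) (hGc.comp (hρsc w)) 0 t)
      (hII (fun s => oddExt f (ρ w₀ s) ^ 2) (hGc.comp (hρsc w₀)) 0 t)]
  -- continuity of ρ' in w at fixed t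
  have hρ'w : Tendsto (fun w => ρ' w t) (nhds w₀) (nhds (ρ' w₀ t)) := by
    have hrep : ∀ w, ρ' w t = Real.sqrt (2 * E) + ∫ s in (0:ℝ)..t, -(w ^ 2) * φ (ρ w s) := by
      intro w
      have := intervalIntegral.integral_eq_sub_of_hasDerivAt (f := ρ' w)
        (fun s _ => hρ2 w s)
        (hII (fun s => -(w ^ 2) * φ (ρ w s)) (continuous_const.mul (hφc.comp (hρsc w))) 0 t)
      rw [h1 w] at this
      rw [this]
      ring
    obtain ⟨C2, hC2⟩ := hKcomp.exists_bound_of_continuousOn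
      (f := fun p : ℝ × ℝ => -(p.1 ^ 2) * φ (ρ p.1 p.2))
      (((continuous_fst.pow 2).neg.mul hφρc).continuousOn)
    have hint : Tendsto (fun w => ∫ s in (0:ℝ)..t, -(w ^ 2) * φ (ρ w s)) (nhds w₀)
        (nhds (∫ s in (0:ℝ)..t, -(w₀ ^ 2) * φ (ρ w₀ s))) := by
      apply intervalIntegral.tendsto_integral_filter_of_dominated_convergence
        (bound := fun _ => C2)
      · exact Eventually.of_forall fun w =>
          (continuous_const.mul (hφc.comp (hρsc w))).aestronglyMeasurable
      · filter_upwards [hIccNhds] with w hwK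
        refine ae_of_all _ (fun s hs => ?_)
        exact hC2 (w, s) ⟨hwK, uIoc_subset_uIcc hs⟩
      · exact intervalIntegrable_const
      · refine ae_of_all _ (fun s _ => ?_)
        have : Continuous (fun w => -(w ^ 2) * φ (ρ w s)) := by
          apply Continuous.mul
          · exact (continuous_id.pow 2).neg
          · exact hφρc.comp (Continuous.prodMk_left s)
        exact this.tendsto w₀
    have := (tendsto_const_nhds (x := Real.sqrt (2 * E))).add hint
    simp only [← hrep] at this
    exact this
  -- energy整 identity
  have hIdent : ∀ w, w ^ 2 * A w = 2 * E * t - ∫ s in (0:ℝ)..t, ρ' w s ^ 2 := by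
    intro w
    have e1 : w ^ 2 * A w = ∫ s in (0:ℝ)..t, w ^ 2 * oddExt f (ρ w s) ^ 2 := by
      rw [hAdef]
      rw [intervalIntegral.integral_const_mul]
    have e2 : (fun s => w ^ 2 * oddExt f (ρ w s) ^ 2) = fun s => 2 * E - ρ' w s ^ 2 := by
      funext s
      have := energy w s
      linarith
    rw [e1, e2]
    rw [intervalIntegral.integral_sub (hII _ continuous_const 0 t)
      (hII (fun s => ρ' w s ^ 2) ((hρ'sc w).pow 2) 0 t)]
    simp
    ring
  -- integration by parts identity
  have hIBP : ∀ w, (∫ s in (0:ℝ)..t, ρ' w s ^ 2) - (∫ s in (0:ℝ)..t, ρ' w₀ s ^ 2) =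
      (ρ' w t + ρ' w₀ t) * (ρ w t - ρ w₀ t) +
        ∫ s in (0:ℝ)..t, (w ^ 2 * φ (ρ w s) + w₀ ^ 2 * φ (ρ w₀ s)) * (ρ w s - ρ w₀ s) := by
    intro w
    have Hd : ∀ s, HasDerivAt (fun u => (ρ' w u + ρ' w₀ u) * (ρ w u - ρ w₀ u))
        ((ρ' w s ^ 2 - ρ' w₀ s ^ 2) -
          (w ^ 2 * φ (ρ w s) + w₀ ^ 2 * φ (ρ w₀ s)) * (ρ w s - ρ w₀ s)) s := by
      intro s
      have := ((hρ2 w s).add (hρ2 w₀ s)).mul ((hρ w s).sub (hρ w₀ s))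
      refine this.congr_deriv ?_
      simp only [Pi.add_apply, Pi.sub_apply]
      ring
    have hcont : Continuous (fun s => (ρ' w s ^ 2 - ρ' w₀ s ^ 2) -
        (w ^ 2 * φ (ρ w s) + w₀ ^ 2 * φ (ρ w₀ s)) * (ρ w s - ρ w₀ s)) := by
      apply Continuous.sub
      · exact ((hρ'sc w).pow 2).sub ((hρ'sc w₀).pow 2)
      · exact ((continuous_const.mul (hφc.comp (hρsc w))).add
          (continuous_const.mul (hφc.comp (hρsc w₀)))).mul ((hρsc w).sub (hρsc w₀))
    have key := intervalIntegral.integral_eq_sub_of_hasDerivAt (fun s _ => Hd s)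
      (hII _ hcont 0 t)
    rw [h0 w, h0 w₀] at key
    simp only [sub_self, mul_zero, sub_zero] at key
    rw [intervalIntegral.integral_sub
      (hII (fun s => ρ' w s ^ 2 - ρ' w₀ s ^ 2) (((hρ'sc w).pow 2).sub ((hρ'sc w₀).pow 2)) 0 t)
      (hII (fun s => (w ^ 2 * φ (ρ w s) + w₀ ^ 2 * φ (ρ w₀ s)) * (ρ w s - ρ w₀ s))
        (((continuous_const.mul (hφc.comp (hρsc w))).add
          (continuous_const.mul (hφc.comp (hρsc w₀)))).mul ((hρsc w).sub (hρsc w₀))) 0 t)] at key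
    rw [intervalIntegral.integral_sub (hII (fun s => ρ' w s ^ 2) ((hρ'sc w).pow 2) 0 t)
      (hII (fun s => ρ' w₀ s ^ 2) ((hρ'sc w₀).pow 2) 0 t)] at key
    linarith
  have hw₀ne : w₀ ≠ 0 := ne_of_gt hw
  have hwA : HasDerivAt (fun w => w * A w) (1 * A w₀ + w₀ * L) w₀ := (hasDerivAt_id w₀).mul hA'
  -- bounds for the second limit
  obtain ⟨C3, hC3⟩ := hKcomp.exists_bound_of_continuousOn
    (f := fun p : ℝ × ℝ => P p.1 p.2) (hPc.continuousOn)
  obtain ⟨C4, hC4⟩ := hKcomp.exists_bound_of_continuousOn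
    (f := fun p : ℝ × ℝ => p.1 ^ 2 * φ (ρ p.1 p.2) + w₀ ^ 2 * φ (ρ w₀ p.2))
    ((((continuous_fst.pow 2).mul hφρc).add
      ((continuous_const.mul (hφc.comp (hρc.comp (Continuous.prodMk_right w₀)))).comp continuous_snd)).continuousOn)
  have hC3' : 0 ≤ C3 := le_trans (norm_nonneg _) (hC3 (w₀, 0) ⟨hw₀K, left_mem_uIcc⟩)
  -- the R-limit
  have hR : Tendsto (fun w => ∫ s in (0:ℝ)..t,
      (w ^ 2 * φ (ρ w s) + w₀ ^ 2 * φ (ρ w₀ s)) * ((ρ w s - ρ w₀ s) / (w - w₀)))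
      (nhdsWithin w₀ {w₀}ᶜ)
      (nhds (∫ s in (0:ℝ)..t,
        (w₀ ^ 2 * φ (ρ w₀ s) + w₀ ^ 2 * φ (ρ w₀ s)) * P w₀ s)) := by
    apply intervalIntegral.tendsto_integral_filter_of_dominated_convergence
      (bound := fun _ => C4 * C3)
    · apply Eventually.of_forall
      intro w
      apply Continuous.aestronglyMeasurable
      exact ((continuous_const.mul (hφc.comp (hρsc w))).add
        (continuous_const.mul (hφc.comp (hρsc w₀)))).mul
        (((hρsc w).sub (hρsc w₀)).div_const _)
    · filter_upwards [mem_nhdsWithin_of_mem_nhds hIccNhds, self_mem_nhdsWithin]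
        with w hwK hwne
      refine ae_of_all _ (fun s hs => ?_)
      have hsK : s ∈ uIcc (0:ℝ) t := uIoc_subset_uIcc hs
      have hwne' : w - w₀ ≠ 0 := sub_ne_zero.mpr hwne
      have hmvt : ‖ρ w s - ρ w₀ s‖ ≤ C3 * ‖w - w₀‖ := by
        apply Convex.norm_image_sub_le_of_norm_hasDerivWithin_le
          (f' := fun u => P u s)
          (fun u _ => (hP u s).hasDerivWithinAt)
          (fun u hu => hC3 (u, s) ⟨hu, hsK⟩) (convex_Icc _ _) hw₀K hwK
      have h2 : ‖(ρ w s - ρ w₀ s) / (w - w₀)‖ ≤ C3 := by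
        rw [norm_div, div_le_iff₀ (norm_pos_iff.mpr hwne')]
        exact hmvt
      have h3 : ‖w ^ 2 * φ (ρ w s) + w₀ ^ 2 * φ (ρ w₀ s)‖ ≤ C4 := hC4 (w, s) ⟨hwK, hsK⟩
      calc ‖(w ^ 2 * φ (ρ w s) + w₀ ^ 2 * φ (ρ w₀ s)) * ((ρ w s - ρ w₀ s) / (w - w₀))‖
          = ‖w ^ 2 * φ (ρ w s) + w₀ ^ 2 * φ (ρ w₀ s)‖ * ‖(ρ w s - ρ w₀ s) / (w - w₀)‖ :=
            norm_mul _ _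
        _ ≤ C4 * C3 := mul_le_mul h3 h2 (norm_nonneg _) (le_trans (norm_nonneg _) h3)
    · exact intervalIntegrable_const
    · refine ae_of_all _ (fun s _ => ?_)
      have t1 : Tendsto (fun w => w ^ 2 * φ (ρ w s) + w₀ ^ 2 * φ (ρ w₀ s))
          (nhdsWithin w₀ {w₀}ᶜ) (nhds (w₀ ^ 2 * φ (ρ w₀ s) + w₀ ^ 2 * φ (ρ w₀ s))) := by
        have : Continuous (fun w => w ^ 2 * φ (ρ w s) + w₀ ^ 2 * φ (ρ w₀ s)) :=
          ((continuous_id.pow 2).mul (hφρc.comp (Continuous.prodMk_left s))).add continuous_const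
        exact (this.tendsto w₀).mono_left nhdsWithin_le_nhds
      have t2 : Tendsto (fun w => (ρ w s - ρ w₀ s) / (w - w₀))
          (nhdsWithin w₀ {w₀}ᶜ) (nhds (P w₀ s)) := by
        have := hasDerivAt_iff_tendsto_slope.mp (hP w₀ s)
        refine this.congr' ?_
        filter_upwards [self_mem_nhdsWithin] with w _
        rw [slope_def_field]
      exact t1.mul t2
  -- the second slope limit
  have hwt : Tendsto (fun w : ℝ => w) (nhdsWithin w₀ {w₀}ᶜ) (nhds w₀) :=
    tendsto_id.mono_left nhdsWithin_le_nhds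
  have hslope2 : Tendsto (slope (fun w => w * A w) w₀) (nhdsWithin w₀ {w₀}ᶜ)
      (nhds (-(w₀ * A w₀) / w₀ - (1 / w₀) * ((ρ' w₀ t + ρ' w₀ t) * P w₀ t +
        ∫ s in (0:ℝ)..t, (w₀ ^ 2 * φ (ρ w₀ s) + w₀ ^ 2 * φ (ρ w₀ s)) * P w₀ s))) := by
    have T1 : Tendsto (fun w => -(w₀ * A w₀) / w) (nhdsWithin w₀ {w₀}ᶜ)
        (nhds (-(w₀ * A w₀) / w₀)) := tendsto_const_nhds.div hwt hw₀ne
    have Tinv : Tendsto (fun w => (1:ℝ) / w) (nhdsWithin w₀ {w₀}ᶜ) (nhds (1 / w₀)) :=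
      tendsto_const_nhds.div hwt hw₀ne
    have Tslope : Tendsto (fun w => (ρ w t - ρ w₀ t) / (w - w₀)) (nhdsWithin w₀ {w₀}ᶜ)
        (nhds (P w₀ t)) := by
      have := hasDerivAt_iff_tendsto_slope.mp (hP w₀ t)
      refine this.congr' ?_
      filter_upwards [self_mem_nhdsWithin] with w _
      rw [slope_def_field]
    have T2 : Tendsto (fun w => (ρ' w t + ρ' w₀ t) * ((ρ w t - ρ w₀ t) / (w - w₀)))
        (nhdsWithin w₀ {w₀}ᶜ) (nhds ((ρ' w₀ t + ρ' w₀ t) * P w₀ t)) :=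
      (((hρ'w.mono_left nhdsWithin_le_nhds).add tendsto_const_nhds)).mul Tslope
    have Tall := T1.sub (Tinv.mul (T2.add hR))
    refine Tall.congr' ?_
    filter_upwards [self_mem_nhdsWithin,
      mem_nhdsWithin_of_mem_nhds (Ioi_mem_nhds hw)] with w hwne hwpos
    have hwne0 : w ≠ 0 := ne_of_gt (mem_Ioi.mp hwpos)
    have hd : w - w₀ ≠ 0 := sub_ne_zero.mpr hwne
    -- pull the division out of the R integral
    have hRpull : (∫ s in (0:ℝ)..t,
        (w ^ 2 * φ (ρ w s) + w₀ ^ 2 * φ (ρ w₀ s)) * ((ρ w s - ρ w₀ s) / (w - w₀)))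
        = (∫ s in (0:ℝ)..t,
          (w ^ 2 * φ (ρ w s) + w₀ ^ 2 * φ (ρ w₀ s)) * (ρ w s - ρ w₀ s)) / (w - w₀) := by
      rw [← intervalIntegral.integral_div]
      congr 1
      funext s
      ring
    rw [hRpull, slope_def_field]
    have hIw := hIdent w
    have hIw0 := hIdent w₀
    have hIBPw := hIBP w
    set S := ∫ s in (0:ℝ)..t, (w ^ 2 * φ (ρ w s) + w₀ ^ 2 * φ (ρ w₀ s)) * (ρ w s - ρ w₀ s) with hS
    have hw2 : w * (w * A w - w₀ * A w₀) = -(w₀ * A w₀) * (w - w₀) -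
        ((ρ' w t + ρ' w₀ t) * (ρ w t - ρ w₀ t) + S) := by
      linear_combination hIw - hIw0 - hIBPw
    have expand : -(w₀ * A w₀) / w - 1 / w * ((ρ' w t + ρ' w₀ t) * ((ρ w t - ρ w₀ t) / (w - w₀)) + S / (w - w₀))
        = (-(w₀ * A w₀) * (w - w₀) - ((ρ' w t + ρ' w₀ t) * (ρ w t - ρ w₀ t) + S)) / (w * (w - w₀)) := by
      field_simp
    have expand2 : (w * A w - w₀ * A w₀) / (w - w₀) = (w * (w * A w - w₀ * A w₀)) / (w * (w - w₀)) := by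
      rw [mul_div_mul_left _ _ hwne0]
    rw [expand, expand2, hw2]
  -- combine the two limits
  have heq := tendsto_nhds_unique (hasDerivAt_iff_tendsto_slope.mp hwA) hslope2
  have hVL : (∫ s in (0:ℝ)..t, (w₀ ^ 2 * φ (ρ w₀ s) + w₀ ^ 2 * φ (ρ w₀ s)) * P w₀ s)
      = w₀ ^ 2 * L := by
    rw [hLdef, ← intervalIntegral.integral_const_mul]
    congr 1
    funext s
    ring
  rw [hVL] at heq
  have hfinal : 1 * A w₀ + w₀ * L = -(1 / w₀) * ρ' w₀ t * P w₀ t := by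
    have h2 : -(w₀ * A w₀) / w₀ = -A w₀ := by rw [div_eq_iff hw₀ne]; ring
    rw [h2] at heq
    have h3 : (1 / w₀) * ((ρ' w₀ t + ρ' w₀ t) * P w₀ t + w₀ ^ 2 * L)
        = 2 * ρ' w₀ t * P w₀ t / w₀ + w₀ * L := by field_simp; ring
    rw [h3] at heq
    have hx : 2 * ρ' w₀ t * P w₀ t / w₀ = 2 * (ρ' w₀ t * P w₀ t / w₀) := by ring
    rw [hx] at heq
    have : A w₀ + w₀ * L = -(ρ' w₀ t * P w₀ t / w₀) := by linarith
    rw [one_mul, this]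
    ring
  exact hfinal ▸ hwA
end
end

section
/- Assume f(r)²/f'(r) → +∞ as r → +∞. For w₀>0 let ρ*(w₀)>0 be defined by f(ρ*(w₀))=1/w₀. Then the integral I(w₀) = w₀·∫₀^{ρ*(w₀)} f(ρ)²/√(1 − w₀²·f(ρ)²) dρ tends to +∞ as w₀ → 0⁺. -/
noncomputable section

set_option maxHeartbeats 1000000 in
/-- with `ρ*(w₀)` defined by `f(ρ*(w₀)) = 1/w₀`, the integral
`I(w₀) = w₀·∫₀^{ρ*(w₀)} f(ρ)²/√(1 − w₀²f(ρ)²) dρ` tends to `+∞` as `w₀ → 0⁺`. -/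
theorem I_tendsto_atTop
    (f : ℝ → ℝ) (hf : MemF f)
    (ρs : ℝ → ℝ)
    (hρs : ∀ w : ℝ, 0 < w → 0 < ρs w ∧ f (ρs w) = 1 / w) :
    Filter.Tendsto
      (fun w : ℝ => w * ∫ ρ in (0:ℝ)..(ρs w), f ρ ^ 2 / Real.sqrt (1 - w ^ 2 * f ρ ^ 2))
      (nhdsWithin 0 (Set.Ioi 0)) Filter.atTop := by
  rw [Filter.tendsto_atTop]
  intro M
  obtain ⟨R₀, hR₀⟩ := Filter.eventually_atTop.mp
    ((Filter.tendsto_atTop.1 hf.sq_div_deriv) (max (8 * M) 1))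
  set R : ℝ := max R₀ 1 with hRdef
  have hR1 : (1:ℝ) ≤ R := le_max_right _ _
  have hRpos : (0:ℝ) < R := lt_of_lt_of_le one_pos hR1
  have hfmono : MonotoneOn f (Set.Ici 0) := hf.strictMono.monotoneOn
  have hfnn : ∀ r : ℝ, 0 ≤ r → 0 ≤ f r := by
    intro r hr
    rcases hr.eq_or_lt with h | h
    · rw [← h, hf.zero]
    · exact (hf.pos r h).le
  have hfdiff : DifferentiableOn ℝ f (Set.Ioi 0) :=
    hf.smooth.differentiableOn (by norm_num)
  have hMVT : ∀ x y : ℝ, 0 < x → x < y →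
      ∃ ξ ∈ Set.Ioo x y, deriv f ξ = (f y - f x) / (y - x) := by
    intro x y hx hxy
    refine exists_deriv_eq_slope f hxy ?_ ?_
    · exact hf.cont.mono (fun z hz => le_trans hx.le hz.1)
    · exact hfdiff.mono (fun z hz => lt_trans hx hz.1)
  have hkey : ∀ r : ℝ, R ≤ r → 0 < deriv f r ∧ max (8 * M) 1 ≤ f r ^ 2 / deriv f r := by
    intro r hr
    have hb := hR₀ r (le_trans (le_max_left _ _) hr)
    have h1 : (0:ℝ) < f r ^ 2 / deriv f r :=
      lt_of_lt_of_le (lt_of_lt_of_le one_pos (le_max_right _ _)) hb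
    have hD : 0 < deriv f r := by
      rcases div_pos_iff.mp h1 with ⟨_, h⟩ | ⟨h, _⟩
      · exact h
      · exact absurd h (not_lt.mpr (sq_nonneg _))
    exact ⟨hD, hb⟩
  have hfR : 0 < f R := hf.pos R hRpos
  have hden : (0:ℝ) < 2 * (f R + 1) := by linarith
  have hεpos : (0:ℝ) < 1 / (2 * (f R + 1)) := by positivity
  filter_upwards [Ioo_mem_nhdsGT_of_mem
    (show (0:ℝ) ∈ Set.Ico (0:ℝ) (1 / (2 * (f R + 1))) from ⟨le_refl 0, hεpos⟩)] with w hw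
  obtain ⟨hw0, hwε⟩ := hw
  show M ≤ w * ∫ ρ in (0:ℝ)..(ρs w), f ρ ^ 2 / Real.sqrt (1 - w ^ 2 * f ρ ^ 2)
  have h2w : 0 < 2 * w := by linarith
  obtain ⟨hbpos, hfb⟩ := hρs (2 * w) h2w
  obtain ⟨hPpos, hfP⟩ := hρs w hw0
  set b : ℝ := ρs (2 * w) with hbdef
  set P : ℝ := ρs w with hPdef
  set F : ℝ → ℝ := fun ρ => f ρ ^ 2 / Real.sqrt (1 - w ^ 2 * f ρ ^ 2) with hFdef
  have hFnn : ∀ ρ : ℝ, 0 ≤ F ρ := fun ρ => div_nonneg (sq_nonneg _) (Real.sqrt_nonneg _)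
  -- b > R
  have hfRb : f R < f b := by
    rw [hfb]
    rw [lt_div_iff₀ h2w]
    rw [lt_div_iff₀ hden] at hwε
    nlinarith
  have hRb : R < b := by
    by_contra h
    push_neg at h
    exact absurd (hfmono (Set.mem_Ici.mpr hbpos.le) (Set.mem_Ici.mpr hRpos.le) h)
      (not_le.mpr hfRb)
  -- b < P
  have hfbP : f b < f P := by
    rw [hfb, hfP, div_lt_div_iff₀ h2w hw0]
    nlinarith
  have hbP : b < P := by
    by_contra h
    push_neg at h
    exact absurd (hfmono (Set.mem_Ici.mpr hPpos.le) (Set.mem_Ici.mpr hbpos.le) h)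
      (not_le.mpr hfbP)
  -- minimum of deriv f on [b, P]
  have hderivCont : ContinuousOn (deriv f) (Set.Icc b P) :=
    (hf.smooth.continuousOn_deriv_of_isOpen isOpen_Ioi (by norm_num)).mono
      (fun x hx => lt_of_lt_of_le hbpos hx.1)
  obtain ⟨ξ₀, hξ₀mem, hξ₀min⟩ :=
    isCompact_Icc.exists_isMinOn (Set.nonempty_Icc.mpr hbP.le) hderivCont
  set c : ℝ := deriv f ξ₀ with hcdef
  have hcpos : 0 < c := (hkey ξ₀ (le_trans hRb.le hξ₀mem.1)).1
  -- key lower bound on 1 - w² f²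
  have hlow : ∀ x ∈ Set.Icc b P, w * (c * (P - x)) ≤ 1 - w ^ 2 * f x ^ 2 := by
    intro x hx
    have hx0 : 0 < x := lt_of_lt_of_le hbpos hx.1
    have hfx0 : 0 ≤ f x := hfnn x hx0.le
    have hfxP : f x ≤ f P :=
      hfmono (Set.mem_Ici.mpr hx0.le) (Set.mem_Ici.mpr hPpos.le) hx.2
    have h1 : w * f x ≤ 1 := by
      have h1' : w * f x ≤ w * f P := by
        exact mul_le_mul_of_nonneg_left hfxP hw0.le
      rw [hfP] at h1'
      calc w * f x ≤ w * (1 / w) := h1'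
        _ = 1 := by field_simp
    have h2 : c * (P - x) ≤ f P - f x := by
      rcases eq_or_lt_of_le hx.2 with heq | hlt
      · simp [heq]
      · obtain ⟨ξ, hξ, hslope⟩ := hMVT x P hx0 hlt
        have hcξ : c ≤ deriv f ξ := hξ₀min ⟨le_trans hx.1 hξ.1.le, hξ.2.le⟩
        have hPx : 0 < P - x := sub_pos.mpr hlt
        calc c * (P - x) ≤ deriv f ξ * (P - x) :=
              mul_le_mul_of_nonneg_right hcξ hPx.le
          _ = f P - f x := by rw [hslope]; field_simp
    have h3 : w * (f P - f x) = 1 - w * f x := by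
      rw [hfP]; field_simp
    nlinarith [mul_le_mul_of_nonneg_left h2 hw0.le,
      mul_nonneg (mul_nonneg hw0.le hfx0) (sub_nonneg.mpr h1)]
  -- integrability on [0, b]
  have hcont0b : ContinuousOn F (Set.Icc 0 b) := by
    have hfc : ContinuousOn f (Set.Icc 0 b) := hf.cont.mono (fun x hx => hx.1)
    refine ContinuousOn.div (hfc.pow 2)
      (Real.continuous_sqrt.comp_continuousOn
        (continuousOn_const.sub (continuousOn_const.mul (hfc.pow 2)))) ?_
    intro x hx
    have hfx0 : 0 ≤ f x := hfnn x hx.1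
    have hfxb : f x ≤ f b :=
      hfmono (Set.mem_Ici.mpr hx.1) (Set.mem_Ici.mpr hbpos.le) hx.2
    rw [hfb] at hfxb
    have hpos : 0 < 1 - w ^ 2 * f x ^ 2 := by
      have h4 : w * f x ≤ 1 / 2 := by
        have := mul_le_mul_of_nonneg_left hfxb hw0.le
        calc w * f x ≤ w * (1 / (2 * w)) := this
          _ = 1 / 2 := by field_simp
      nlinarith [mul_nonneg hw0.le hfx0]
    exact (Real.sqrt_pos.mpr hpos).ne'
  have hFint1 : IntervalIntegrable F MeasureTheory.volume 0 b := by
    apply ContinuousOn.intervalIntegrable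
    rwa [Set.uIcc_of_le hbpos.le]
  -- integrability on [b, P] by domination
  set K : ℝ := (1 / w) ^ 2 / Real.sqrt (w * c) with hKdef
  have hKnn : 0 ≤ K := by positivity
  have hGint : IntervalIntegrable (fun x => K * (P - x) ^ (-(1/2) : ℝ))
      MeasureTheory.volume b P := by
    have h1 : IntervalIntegrable (fun x : ℝ => x ^ (-(1/2) : ℝ))
        MeasureTheory.volume (P - b) (P - P) :=
      intervalIntegral.intervalIntegrable_rpow' (by norm_num)
    have h2 := (h1.comp_sub_left P).const_mul K
    simpa using h2
  have hg : Measurable (fun x : ℝ => x ^ 2 / Real.sqrt (1 - w ^ 2 * x ^ 2)) :=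
    (measurable_id.pow_const 2).div
      (Real.continuous_sqrt.measurable.comp
        (measurable_const.sub (measurable_const.mul (measurable_id.pow_const 2))))
  have hfae : AEMeasurable f (MeasureTheory.volume.restrict (Set.uIoc b P)) := by
    rw [Set.uIoc_of_le hbP.le]
    exact (hf.cont.mono (fun x hx => le_trans hbpos.le hx.1.le)).aemeasurable
      measurableSet_Ioc
  have hFmeas : MeasureTheory.AEStronglyMeasurable F
      (MeasureTheory.volume.restrict (Set.uIoc b P)) :=
    (hg.comp_aemeasurable hfae).aestronglyMeasurable
  have hmemIoc : ∀ᵐ x ∂(MeasureTheory.volume.restrict (Set.uIoc b P)),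
      x ∈ Set.Ioc b P := by
    rw [Set.uIoc_of_le hbP.le]
    exact MeasureTheory.ae_restrict_mem measurableSet_Ioc
  have hle : (fun x => ‖F x‖) ≤ᵐ[MeasureTheory.volume.restrict (Set.uIoc b P)]
      (fun x => ‖K * (P - x) ^ (-(1/2) : ℝ)‖) := by
    filter_upwards [hmemIoc] with x hx
    rcases hx.2.eq_or_lt with heq | hlt
    · have hz : 1 - w ^ 2 * f x ^ 2 = 0 := by
        rw [heq, hfP]; field_simp; ring
      have : F x = 0 := by
        rw [hFdef]; simp [hz]
      rw [this, norm_zero]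
      exact norm_nonneg _
    · have hx0 : 0 < x := lt_trans hbpos hx.1
      have hPx : 0 < P - x := sub_pos.mpr hlt
      have hlow' := hlow x ⟨hx.1.le, hx.2⟩
      have hs1 : Real.sqrt (w * (c * (P - x))) ≤ Real.sqrt (1 - w ^ 2 * f x ^ 2) :=
        Real.sqrt_le_sqrt hlow'
      have hsplit : Real.sqrt (w * (c * (P - x)))
          = Real.sqrt (w * c) * Real.sqrt (P - x) := by
        rw [← Real.sqrt_mul (by positivity) (P - x), mul_assoc]
      have hd : 0 < Real.sqrt (w * c) * Real.sqrt (P - x) := by positivity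
      have hnum : f x ^ 2 ≤ (1 / w) ^ 2 := by
        have hfxP : f x ≤ f P :=
          hfmono (Set.mem_Ici.mpr hx0.le) (Set.mem_Ici.mpr hPpos.le) hx.2
        rw [hfP] at hfxP
        exact pow_le_pow_left₀ (hfnn x hx0.le) hfxP 2
      have hFle : F x ≤ (1 / w) ^ 2 / (Real.sqrt (w * c) * Real.sqrt (P - x)) := by
        refine div_le_div₀ (by positivity) hnum hd ?_
        rw [← hsplit]; exact hs1
      have hr : K * (P - x) ^ (-(1/2) : ℝ)
          = (1 / w) ^ 2 / (Real.sqrt (w * c) * Real.sqrt (P - x)) := by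
        rw [Real.rpow_neg hPx.le, ← Real.sqrt_eq_rpow, hKdef,
          ← div_eq_mul_inv, div_div]
      rw [Real.norm_eq_abs, Real.norm_eq_abs, abs_of_nonneg (hFnn x),
        abs_of_nonneg (by rw [hr]; positivity), hr]
      exact hFle
  have hFint2 : IntervalIntegrable F MeasureTheory.volume b P := hGint.mono_fun hFmeas hle
  -- lower bound of the integral on [b, P]
  have hconst : IntervalIntegrable (fun _ : ℝ => 1 / (4 * w ^ 2))
      MeasureTheory.volume b P := intervalIntegrable_const
  have haeP : ∀ᵐ x ∂(MeasureTheory.volume.restrict (Set.Icc b P)), x ≠ P := by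
    rw [MeasureTheory.ae_iff]
    have hset : {x : ℝ | ¬ x ≠ P} = {P} := by ext y; simp
    rw [hset, MeasureTheory.Measure.restrict_apply (measurableSet_singleton P)]
    exact MeasureTheory.measure_mono_null Set.inter_subset_left
      (MeasureTheory.measure_singleton P)
  have hmemIcc : ∀ᵐ x ∂(MeasureTheory.volume.restrict (Set.Icc b P)),
      x ∈ Set.Icc b P := MeasureTheory.ae_restrict_mem measurableSet_Icc
  have hmono : (fun _ : ℝ => 1 / (4 * w ^ 2))
      ≤ᵐ[MeasureTheory.volume.restrict (Set.Icc b P)] F := by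
    filter_upwards [haeP, hmemIcc] with x hxP hx
    have hx0 : 0 < x := lt_of_lt_of_le hbpos hx.1
    have hxltP : x < P := lt_of_le_of_ne hx.2 hxP
    have hfx : 1 / (2 * w) ≤ f x := by
      rw [← hfb]
      exact hfmono (Set.mem_Ici.mpr hbpos.le) (Set.mem_Ici.mpr hx0.le) hx.1
    have hfxP : f x < f P :=
      hf.strictMono (Set.mem_Ici.mpr hx0.le) (Set.mem_Ici.mpr hPpos.le) hxltP
    have hfx0 : 0 ≤ f x := hfnn x hx0.le
    have hpos : 0 < 1 - w ^ 2 * f x ^ 2 := by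
      rw [hfP] at hfxP
      have h5 : w * f x < 1 := by
        have := mul_lt_mul_of_pos_left hfxP hw0
        calc w * f x < w * (1 / w) := this
          _ = 1 := by field_simp
      nlinarith [mul_nonneg hw0.le hfx0]
    have hsq : Real.sqrt (1 - w ^ 2 * f x ^ 2) ≤ 1 :=
      Real.sqrt_le_one.mpr (by nlinarith [sq_nonneg (w * f x)])
    have hsqpos : 0 < Real.sqrt (1 - w ^ 2 * f x ^ 2) := Real.sqrt_pos.mpr hpos
    have h6 : (1 / (2 * w)) * (1 / (2 * w)) ≤ f x * f x :=
      mul_le_mul hfx hfx (by positivity) ((le_of_lt (by positivity)).trans hfx)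
    calc 1 / (4 * w ^ 2) = (1 / (2 * w)) * (1 / (2 * w)) := by ring
      _ ≤ f x * f x := h6
      _ = f x ^ 2 := (pow_two _).symm
      _ = f x ^ 2 / 1 := (div_one _).symm
      _ ≤ F x := by
          rw [hFdef]
          exact div_le_div_of_nonneg_left (sq_nonneg _) hsqpos hsq
  have hint_lower : (P - b) * (1 / (4 * w ^ 2)) ≤ ∫ ρ in b..P, F ρ := by
    have h7 := intervalIntegral.integral_mono_ae_restrict hbP.le hconst hFint2 hmono
    rwa [intervalIntegral.integral_const, smul_eq_mul] at h7
  have hsplitInt : (∫ ρ in (0:ℝ)..P, F ρ)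
      = (∫ ρ in (0:ℝ)..b, F ρ) + ∫ ρ in b..P, F ρ :=
    (intervalIntegral.integral_add_adjacent_intervals hFint1 hFint2).symm
  have h0b : 0 ≤ ∫ ρ in (0:ℝ)..b, F ρ :=
    intervalIntegral.integral_nonneg hbpos.le (fun u _ => hFnn u)
  have hIlow : (P - b) * (1 / (4 * w ^ 2)) ≤ ∫ ρ in (0:ℝ)..P, F ρ := by
    rw [hsplitInt]; linarith
  -- final MVT step
  obtain ⟨ξ, hξ, hslope⟩ := hMVT b P hbpos hbP
  have hξR : R ≤ ξ := le_of_lt (lt_of_lt_of_le hRb hξ.1.le)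
  obtain ⟨hDpos, hDbound⟩ := hkey ξ hξR
  have hξ0 : 0 < ξ := lt_of_lt_of_le hRpos hξR
  have hfξ : f ξ ≤ 1 / w := by
    rw [← hfP]
    exact (hf.strictMono (Set.mem_Ici.mpr hξ0.le) (Set.mem_Ici.mpr hPpos.le) hξ.2).le
  have hfξ0 : 0 ≤ f ξ := hfnn ξ hξ0.le
  have hdiffPb : f P - f b = 1 / (2 * w) := by
    rw [hfP, hfb]; field_simp; ring
  have hDP : f P - f b = deriv f ξ * (P - b) :=
    (div_eq_iff (sub_ne_zero.mpr hbP.ne')).mp hslope.symm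
  have hPb' : P - b = (1 / (2 * w)) / deriv f ξ := by
    rw [eq_div_iff hDpos.ne']
    rw [hdiffPb] at hDP
    linarith [hDP]
  have hnum2 : f ξ ^ 2 ≤ (1 / w) ^ 2 := pow_le_pow_left₀ hfξ0 hfξ 2
  have h8 : 8 * M ≤ f ξ ^ 2 / deriv f ξ := le_trans (le_max_left _ _) hDbound
  have h9 : f ξ ^ 2 / deriv f ξ ≤ (1 / w) ^ 2 / deriv f ξ := by gcongr
  have hRHS : w * ((P - b) * (1 / (4 * w ^ 2)))
      = ((1 / w) ^ 2 / deriv f ξ) / 8 := by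
    rw [hPb']
    field_simp
    ring
  have h7 : M ≤ w * ((P - b) * (1 / (4 * w ^ 2))) := by
    rw [hRHS]
    linarith
  calc M ≤ w * ((P - b) * (1 / (4 * w ^ 2))) := h7
    _ ≤ w * ∫ ρ in (0:ℝ)..P, F ρ := mul_le_mul_of_nonneg_left hIlow hw0.le
end
end

section
/- The Carnot–Carathéodory distance d_CC(q,q') = inf{ℓ(γ) : γ admissible, γ(0)=q, γ(T)=q'} is a well-defined metric on ℝ³ which induces the Euclidean topology, and the metric space (ℝ³, d_CC) is complete. -/
noncomputable section

/-- Euclidean norm of a control value. -/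
def ctrlNorm (u : ℝ × ℝ × ℝ) : ℝ := Real.sqrt (u.1 ^ 2 + u.2.1 ^ 2 + u.2.2 ^ 2)

/-- An admissible curve `γ` on `[0,T]` together with an `L²` control `u`
for the Carnot–Carathéodory structure generated by `∂x, ∂y, f(r)∂z`. -/
structure IsAdmissiblePair (f : ℝ → ℝ) (T : ℝ) (γ u : ℝ → ℝ × ℝ × ℝ) : Prop where
  hT : 0 ≤ T
  meas : MeasureTheory.AEStronglyMeasurable u (MeasureTheory.volume.restrict (Set.Icc 0 T))
  sqInt : MeasureTheory.IntegrableOn (fun t => ctrlNorm (u t) ^ 2) (Set.Icc 0 T)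
  hx : ∀ t ∈ Set.Icc 0 T, (γ t).1 = (γ 0).1 + ∫ s in (0:ℝ)..t, (u s).1
  hy : ∀ t ∈ Set.Icc 0 T, (γ t).2.1 = (γ 0).2.1 + ∫ s in (0:ℝ)..t, (u s).2.1
  hz : ∀ t ∈ Set.Icc 0 T, (γ t).2.2 = (γ 0).2.2 + ∫ s in (0:ℝ)..t, (u s).2.2 * f (rad (γ s))

/-- Length of an admissible pair. -/
def pairLength (T : ℝ) (u : ℝ → ℝ × ℝ × ℝ) : ℝ := ∫ t in (0:ℝ)..T, ctrlNorm (u t)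

/-- The Carnot–Carathéodory distance. -/
def dCC (f : ℝ → ℝ) (q q' : ℝ × ℝ × ℝ) : ℝ :=
  sInf {L : ℝ | ∃ T γ u, IsAdmissiblePair f T γ u ∧ γ 0 = q ∧ γ T = q' ∧ L = pairLength T u}

open MeasureTheory Set Filter intervalIntegral

namespace CC

lemma ctrlNorm_nonneg (u : ℝ × ℝ × ℝ) : 0 ≤ ctrlNorm u := Real.sqrt_nonneg _

lemma abs1_le (u : ℝ × ℝ × ℝ) : |u.1| ≤ ctrlNorm u := by
  rw [← Real.sqrt_sq_eq_abs]
  exact Real.sqrt_le_sqrt (by nlinarith [sq_nonneg u.2.1, sq_nonneg u.2.2])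

lemma abs21_le (u : ℝ × ℝ × ℝ) : |u.2.1| ≤ ctrlNorm u := by
  rw [← Real.sqrt_sq_eq_abs]
  exact Real.sqrt_le_sqrt (by nlinarith [sq_nonneg u.1, sq_nonneg u.2.2])

lemma abs22_le (u : ℝ × ℝ × ℝ) : |u.2.2| ≤ ctrlNorm u := by
  rw [← Real.sqrt_sq_eq_abs]
  exact Real.sqrt_le_sqrt (by nlinarith [sq_nonneg u.1, sq_nonneg u.2.1])

lemma ctrlNorm_neg (u : ℝ × ℝ × ℝ) : ctrlNorm (-u) = ctrlNorm u := by
  simp [ctrlNorm, Prod.fst_neg, Prod.snd_neg, neg_sq]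

lemma continuous_ctrlNorm : Continuous ctrlNorm := by
  unfold ctrlNorm; fun_prop

lemma rad_nonneg (q : ℝ × ℝ × ℝ) : 0 ≤ rad q := Real.sqrt_nonneg _

lemma sqrt_add_sq_le (a b : ℝ) : Real.sqrt (a ^ 2 + b ^ 2) ≤ |a| + |b| := by
  have h : a ^ 2 + b ^ 2 ≤ (|a| + |b|) ^ 2 := by
    nlinarith [mul_nonneg (abs_nonneg a) (abs_nonneg b), sq_abs a, sq_abs b]
  calc Real.sqrt (a ^ 2 + b ^ 2) ≤ Real.sqrt ((|a| + |b|) ^ 2) := Real.sqrt_le_sqrt h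
    _ = |a| + |b| := Real.sqrt_sq (by positivity)

lemma rad_le (x y x0 y0 : ℝ) :
    Real.sqrt (x ^ 2 + y ^ 2) ≤ Real.sqrt (x0 ^ 2 + y0 ^ 2) + (|x - x0| + |y - y0|) := by
  set r0 := Real.sqrt (x0 ^ 2 + y0 ^ 2) with hr0def
  have hr0 : 0 ≤ r0 := Real.sqrt_nonneg _
  have hr0sq : r0 ^ 2 = x0 ^ 2 + y0 ^ 2 := Real.sq_sqrt (by positivity)
  have hx0 : |x0| ≤ r0 := by
    rw [← Real.sqrt_sq_eq_abs]; exact Real.sqrt_le_sqrt (by nlinarith [sq_nonneg y0])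
  have hy0 : |y0| ≤ r0 := by
    rw [← Real.sqrt_sq_eq_abs]; exact Real.sqrt_le_sqrt (by nlinarith [sq_nonneg x0])
  obtain ⟨hx0a, hx0b⟩ := abs_le.mp hx0
  obtain ⟨hy0a, hy0b⟩ := abs_le.mp hy0
  set d1 := |x - x0| with hd1
  set d2 := |y - y0| with hd2
  have hd1a := le_abs_self (x - x0); have hd1b := neg_abs_le (x - x0)
  have hd2a := le_abs_self (y - y0); have hd2b := neg_abs_le (y - y0)
  have h1 : 0 ≤ (r0 - x0) * (d1 - (x - x0)) := mul_nonneg (by linarith) (by linarith)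
  have h2 : 0 ≤ (r0 + x0) * (d1 + (x - x0)) := mul_nonneg (by linarith) (by linarith)
  have h3 : 0 ≤ (r0 - y0) * (d2 - (y - y0)) := mul_nonneg (by linarith) (by linarith)
  have h4 : 0 ≤ (r0 + y0) * (d2 + (y - y0)) := mul_nonneg (by linarith) (by linarith)
  have h5 : 0 ≤ d1 * d2 := mul_nonneg (abs_nonneg _) (abs_nonneg _)
  have key : x ^ 2 + y ^ 2 ≤ (r0 + (d1 + d2)) ^ 2 := by
    have e1 : d1 ^ 2 = (x - x0) ^ 2 := by rw [hd1, sq_abs]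
    have e2 : d2 ^ 2 = (y - y0) ^ 2 := by rw [hd2, sq_abs]
    nlinarith [h1, h2, h3, h4, h5]
  calc Real.sqrt (x ^ 2 + y ^ 2) ≤ Real.sqrt ((r0 + (d1 + d2)) ^ 2) := Real.sqrt_le_sqrt key
    _ = r0 + (d1 + d2) := Real.sqrt_sq (by positivity)

lemma _root_.MemF.f_nonneg {f : ℝ → ℝ} (hf : MemF f) {r : ℝ} (hr : 0 ≤ r) : 0 ≤ f r := by
  rcases eq_or_lt_of_le hr with h | h
  · simp [← h, hf.zero]
  · exact (hf.pos r h).le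

lemma _root_.MemF.f_mono {f : ℝ → ℝ} (hf : MemF f) : MonotoneOn f (Set.Ici 0) :=
  hf.strictMono.monotoneOn


section PairLemmas

variable {f : ℝ → ℝ} {T : ℝ} {γ u : ℝ → ℝ × ℝ × ℝ}

lemma pairLength_nonneg (P : IsAdmissiblePair f T γ u) : 0 ≤ pairLength T u :=
  intervalIntegral.integral_nonneg P.hT (fun _ _ => ctrlNorm_nonneg _)

lemma meas_norm (P : IsAdmissiblePair f T γ u) :
    AEStronglyMeasurable (fun t => ctrlNorm (u t)) (volume.restrict (Icc 0 T)) :=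
  continuous_ctrlNorm.comp_aestronglyMeasurable P.meas

lemma int_norm (P : IsAdmissiblePair f T γ u) :
    IntegrableOn (fun t => ctrlNorm (u t)) (Icc 0 T) := by
  have hg : IntegrableOn (fun t => 1 + ctrlNorm (u t) ^ 2) (Icc 0 T) :=
    (integrableOn_const measure_Icc_lt_top.ne enorm_ne_top).add P.sqInt
  refine hg.mono' (meas_norm P) ?_
  filter_upwards with t
  have h0 := ctrlNorm_nonneg (u t)
  rw [Real.norm_eq_abs, abs_of_nonneg h0]
  nlinarith

lemma int_fst (P : IsAdmissiblePair f T γ u) :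
    IntegrableOn (fun t => (u t).1) (Icc 0 T) := by
  refine (int_norm P).mono' (continuous_fst.comp_aestronglyMeasurable P.meas) ?_
  filter_upwards with t
  rw [Real.norm_eq_abs]; exact abs1_le (u t)

lemma int_snd_fst (P : IsAdmissiblePair f T γ u) :
    IntegrableOn (fun t => (u t).2.1) (Icc 0 T) := by
  refine (int_norm P).mono'
    ((continuous_fst.comp continuous_snd).comp_aestronglyMeasurable P.meas) ?_
  filter_upwards with t
  rw [Real.norm_eq_abs]; exact abs21_le (u t)

lemma int_snd_snd (P : IsAdmissiblePair f T γ u) :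
    IntegrableOn (fun t => (u t).2.2) (Icc 0 T) := by
  refine (int_norm P).mono'
    ((continuous_snd.comp continuous_snd).comp_aestronglyMeasurable P.meas) ?_
  filter_upwards with t
  rw [Real.norm_eq_abs]; exact abs22_le (u t)

lemma II_of_Icc {g : ℝ → ℝ} {a b c d : ℝ} (h : IntegrableOn g (Icc a b))
    (hc : c ∈ Icc a b) (hd : d ∈ Icc a b) : IntervalIntegrable g volume c d := by
  rw [intervalIntegrable_iff]
  exact h.mono_set ((Set.Ioc_subset_Icc_self).trans (Set.uIcc_subset_Icc hc hd))

lemma intNorm_mono (P : IsAdmissiblePair f T γ u) {t : ℝ} (ht : t ∈ Icc 0 T) :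
    (∫ s in (0:ℝ)..t, ctrlNorm (u s)) ≤ pairLength T u := by
  have h1 : IntervalIntegrable (fun s => ctrlNorm (u s)) volume 0 t :=
    II_of_Icc (int_norm P) (Set.left_mem_Icc.2 P.hT) ht
  have h2 : IntervalIntegrable (fun s => ctrlNorm (u s)) volume t T :=
    II_of_Icc (int_norm P) ht (Set.right_mem_Icc.2 P.hT)
  have h3 : 0 ≤ ∫ s in t..T, ctrlNorm (u s) :=
    intervalIntegral.integral_nonneg ht.2 (fun _ _ => ctrlNorm_nonneg _)
  have := intervalIntegral.integral_add_adjacent_intervals h1 h2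
  unfold pairLength
  linarith [this]

lemma disp_fst (P : IsAdmissiblePair f T γ u) {t : ℝ} (ht : t ∈ Icc 0 T) :
    |(γ t).1 - (γ 0).1| ≤ pairLength T u := by
  rw [P.hx t ht, add_sub_cancel_left]
  have h1 : IntervalIntegrable (fun s => (u s).1) volume 0 t :=
    II_of_Icc (int_fst P) (Set.left_mem_Icc.2 P.hT) ht
  calc |∫ s in (0:ℝ)..t, (u s).1| ≤ ∫ s in (0:ℝ)..t, |(u s).1| :=
        intervalIntegral.abs_integral_le_integral_abs ht.1
    _ ≤ ∫ s in (0:ℝ)..t, ctrlNorm (u s) := by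
        refine intervalIntegral.integral_mono_on ht.1 h1.abs
          (II_of_Icc (int_norm P) (Set.left_mem_Icc.2 P.hT) ht) (fun s _ => abs1_le (u s))
    _ ≤ pairLength T u := intNorm_mono P ht

lemma disp_snd_fst (P : IsAdmissiblePair f T γ u) {t : ℝ} (ht : t ∈ Icc 0 T) :
    |(γ t).2.1 - (γ 0).2.1| ≤ pairLength T u := by
  rw [P.hy t ht, add_sub_cancel_left]
  have h1 : IntervalIntegrable (fun s => (u s).2.1) volume 0 t :=
    II_of_Icc (int_snd_fst P) (Set.left_mem_Icc.2 P.hT) ht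
  calc |∫ s in (0:ℝ)..t, (u s).2.1| ≤ ∫ s in (0:ℝ)..t, |(u s).2.1| :=
        intervalIntegral.abs_integral_le_integral_abs ht.1
    _ ≤ ∫ s in (0:ℝ)..t, ctrlNorm (u s) := by
        refine intervalIntegral.integral_mono_on ht.1 h1.abs
          (II_of_Icc (int_norm P) (Set.left_mem_Icc.2 P.hT) ht) (fun s _ => abs21_le (u s))
    _ ≤ pairLength T u := intNorm_mono P ht

lemma rad_bound (P : IsAdmissiblePair f T γ u) {t : ℝ} (ht : t ∈ Icc 0 T) :
    rad (γ t) ≤ rad (γ 0) + 2 * pairLength T u := by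
  have h := rad_le (γ t).1 (γ t).2.1 (γ 0).1 (γ 0).2.1
  have h1 := disp_fst P ht
  have h2 := disp_snd_fst P ht
  unfold rad at *
  linarith


lemma aesm_frad (hf : MemF f) (P : IsAdmissiblePair f T γ u) :
    AEStronglyMeasurable (fun s => f (rad (γ s))) (volume.restrict (Icc 0 T)) := by
  set X : ℝ → ℝ := fun t => (γ 0).1 + ∫ s in Ioc (0:ℝ) t, (u s).1 with hX
  set Y : ℝ → ℝ := fun t => (γ 0).2.1 + ∫ s in Ioc (0:ℝ) t, (u s).2.1 with hY
  have hXc : ContinuousOn X (Icc 0 T) :=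
    continuousOn_const.add (intervalIntegral.continuousOn_primitive (int_fst P))
  have hYc : ContinuousOn Y (Icc 0 T) :=
    continuousOn_const.add (intervalIntegral.continuousOn_primitive (int_snd_fst P))
  have hRc : ContinuousOn (fun t => Real.sqrt (X t ^ 2 + Y t ^ 2)) (Icc 0 T) :=
    Real.continuous_sqrt.comp_continuousOn ((hXc.pow 2).add (hYc.pow 2))
  have hWc : ContinuousOn (fun t => f (Real.sqrt (X t ^ 2 + Y t ^ 2))) (Icc 0 T) := by
    refine hf.cont.comp hRc (fun t _ => Real.sqrt_nonneg _)
  have hEq : Set.EqOn (fun t => f (Real.sqrt (X t ^ 2 + Y t ^ 2)))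
      (fun s => f (rad (γ s))) (Icc 0 T) := by
    intro t ht
    have hx' : (γ t).1 = X t := by
      rw [P.hx t ht, hX]
      simp only [intervalIntegral.integral_of_le ht.1]
    have hy' : (γ t).2.1 = Y t := by
      rw [P.hy t ht, hY]
      simp only [intervalIntegral.integral_of_le ht.1]
    simp only [rad, hx', hy']
  refine (hWc.aestronglyMeasurable measurableSet_Icc).congr ?_
  exact (MeasureTheory.ae_restrict_mem measurableSet_Icc).mono (fun t ht => hEq ht)

lemma int_z (hf : MemF f) (P : IsAdmissiblePair f T γ u) :
    IntegrableOn (fun s => (u s).2.2 * f (rad (γ s))) (Icc 0 T) := by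
  set R := rad (γ 0) + 2 * pairLength T u with hR
  have hR0 : 0 ≤ R := by
    have := pairLength_nonneg P
    have := rad_nonneg (γ 0)
    linarith
  have hfR : ∀ s ∈ Icc (0:ℝ) T, f (rad (γ s)) ≤ f R := fun s hs =>
    hf.f_mono (rad_nonneg _) hR0 (rad_bound P hs)
  refine ((int_norm P).const_mul (f R)).mono'
    (((continuous_snd.comp continuous_snd).comp_aestronglyMeasurable P.meas).mul
      (aesm_frad hf P)) ?_
  filter_upwards [MeasureTheory.ae_restrict_mem measurableSet_Icc] with s hs
  have h1 : 0 ≤ f (rad (γ s)) := hf.f_nonneg (rad_nonneg _)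
  rw [Real.norm_eq_abs, abs_mul, abs_of_nonneg h1]
  calc |(u s).2.2| * f (rad (γ s)) ≤ ctrlNorm (u s) * f R :=
        mul_le_mul (abs22_le (u s)) (hfR s hs) h1 (ctrlNorm_nonneg _)
    _ = f R * ctrlNorm (u s) := mul_comm _ _

lemma disp_snd_snd (hf : MemF f) (P : IsAdmissiblePair f T γ u) :
    |(γ T).2.2 - (γ 0).2.2| ≤ f (rad (γ 0) + 2 * pairLength T u) * pairLength T u := by
  set R := rad (γ 0) + 2 * pairLength T u with hR
  have hR0 : 0 ≤ R := by
    have := pairLength_nonneg P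
    have := rad_nonneg (γ 0)
    linarith
  have hTm : T ∈ Icc (0:ℝ) T := Set.right_mem_Icc.2 P.hT
  rw [P.hz T hTm, add_sub_cancel_left]
  have hI : IntervalIntegrable (fun s => (u s).2.2 * f (rad (γ s))) volume 0 T :=
    II_of_Icc (int_z hf P) (Set.left_mem_Icc.2 P.hT) hTm
  have hIN : IntervalIntegrable (fun s => f R * ctrlNorm (u s)) volume 0 T :=
    (II_of_Icc (int_norm P) (Set.left_mem_Icc.2 P.hT) hTm).const_mul (f R)
  calc |∫ s in (0:ℝ)..T, (u s).2.2 * f (rad (γ s))|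
      ≤ ∫ s in (0:ℝ)..T, |(u s).2.2 * f (rad (γ s))| :=
        intervalIntegral.abs_integral_le_integral_abs P.hT
    _ ≤ ∫ s in (0:ℝ)..T, f R * ctrlNorm (u s) := by
        refine intervalIntegral.integral_mono_on P.hT hI.abs hIN (fun s hs => ?_)
        have h1 : 0 ≤ f (rad (γ s)) := hf.f_nonneg (rad_nonneg _)
        rw [abs_mul, abs_of_nonneg h1]
        calc |(u s).2.2| * f (rad (γ s)) ≤ ctrlNorm (u s) * f R :=
              mul_le_mul (abs22_le (u s)) (hf.f_mono (rad_nonneg _) hR0 (rad_bound P hs))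
                h1 (ctrlNorm_nonneg _)
          _ = f R * ctrlNorm (u s) := mul_comm _ _
    _ = f R * pairLength T u := by
        rw [pairLength, intervalIntegral.integral_const_mul]

end PairLemmas


def lengthSet (f : ℝ → ℝ) (q q' : ℝ × ℝ × ℝ) : Set ℝ :=
  {L : ℝ | ∃ T γ u, IsAdmissiblePair f T γ u ∧ γ 0 = q ∧ γ T = q' ∧ L = pairLength T u}

lemma dCC_eq (f : ℝ → ℝ) (q q' : ℝ × ℝ × ℝ) : dCC f q q' = sInf (lengthSet f q q') := rfl

lemma lengthSet_nonneg {f : ℝ → ℝ} {q q' : ℝ × ℝ × ℝ} {L : ℝ} (h : L ∈ lengthSet f q q') :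
    0 ≤ L := by
  obtain ⟨T, γ, u, P, -, -, rfl⟩ := h
  exact pairLength_nonneg P

lemma lengthSet_bddBelow (f : ℝ → ℝ) (q q' : ℝ × ℝ × ℝ) : BddBelow (lengthSet f q q') :=
  ⟨0, fun _ hL => lengthSet_nonneg hL⟩

lemma dCC_nonneg (f : ℝ → ℝ) (q q' : ℝ × ℝ × ℝ) : 0 ≤ dCC f q q' :=
  Real.sInf_nonneg (fun _ hL => lengthSet_nonneg hL)

lemma dCC_le_of_mem {f : ℝ → ℝ} {q q' : ℝ × ℝ × ℝ} {L : ℝ} (h : L ∈ lengthSet f q q') :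
    dCC f q q' ≤ L := csInf_le (lengthSet_bddBelow f q q') h

lemma zero_mem_self (f : ℝ → ℝ) (q : ℝ × ℝ × ℝ) : (0:ℝ) ∈ lengthSet f q q := by
  refine ⟨0, fun _ => q, fun _ => 0, ?_, rfl, rfl, ?_⟩
  · refine ⟨le_refl 0, aestronglyMeasurable_const, ?_, ?_, ?_, ?_⟩
    · simpa [ctrlNorm] using (integrableOn_const (C := (0:ℝ))).2 (Or.inl rfl)
    · intro t _; simp
    · intro t _; simp
    · intro t _; simp
  · simp [pairLength, ctrlNorm]

lemma dCC_self (f : ℝ → ℝ) (q : ℝ × ℝ × ℝ) : dCC f q q = 0 :=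
  le_antisymm (dCC_le_of_mem (zero_mem_self f q)) (dCC_nonneg f q q)

section Reverse

variable {f : ℝ → ℝ} {T : ℝ} {γ u : ℝ → ℝ × ℝ × ℝ}

lemma mp_refl (T : ℝ) : MeasurePreserving (fun x : ℝ => T - x)
    (volume.restrict (Icc 0 T)) (volume.restrict (Icc 0 T)) := by
  have hmp : MeasurePreserving (fun x : ℝ => T - x) volume volume := by
    have h := (measurePreserving_add_left (volume : Measure ℝ) T).comp
      (Measure.measurePreserving_neg (volume : Measure ℝ))
    simpa [Function.comp_def, sub_eq_add_neg] using h
  have hpre : (fun x : ℝ => T - x) ⁻¹' (Icc 0 T) = Icc 0 T := by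
    ext x
    simp only [Set.mem_preimage, Set.mem_Icc]
    constructor <;> (intro h; constructor <;> linarith [h.1, h.2])
  have h := hmp.restrict_preimage (measurableSet_Icc (a := (0:ℝ)) (b := T))
  rwa [hpre] at h

lemma rev_pair (hf : MemF f) (P : IsAdmissiblePair f T γ u) :
    IsAdmissiblePair f T (fun t => γ (T - t)) (fun t => -u (T - t)) := by
  have mpT := mp_refl T
  refine ⟨P.hT, ?_, ?_, ?_, ?_, ?_⟩
  · have h := P.meas.comp_measurePreserving mpT
    exact (h.neg).congr (by filter_upwards with t; simp [Function.comp])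
  · have h : Integrable ((fun t => ctrlNorm (u t) ^ 2) ∘ (fun t => T - t))
        (volume.restrict (Icc 0 T)) :=
      (mpT.integrable_comp P.sqInt.aestronglyMeasurable).2 P.sqInt
    refine h.congr (by filter_upwards with t; simp [Function.comp, ctrlNorm_neg])
  · intro t ht
    have ht' : T - t ∈ Icc (0:ℝ) T := ⟨by linarith [ht.2], by linarith [ht.1]⟩
    have hmem0 : (0:ℝ) ∈ Icc (0:ℝ) T := Set.left_mem_Icc.2 P.hT
    have hmemT : T ∈ Icc (0:ℝ) T := Set.right_mem_Icc.2 P.hT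
    have e1 : (∫ s in (0:ℝ)..t, (-u (T - s)).1) = -(∫ s in (T-t)..T, (u s).1) := by
      have h2 := intervalIntegral.integral_comp_sub_left (a := (0:ℝ)) (b := t)
        (fun s => (u s).1) T
      simp only [Prod.fst_neg]
      rw [intervalIntegral.integral_neg, h2, sub_zero]
    have e2 := intervalIntegral.integral_add_adjacent_intervals
      (II_of_Icc (int_fst P) hmem0 ht') (II_of_Icc (int_fst P) ht' hmemT)
    have h3 := P.hx (T - t) ht'
    have h4 := P.hx T hmemT
    simp only [sub_zero]
    rw [show (∫ s in (0:ℝ)..t, ((fun t => -u (T - t)) s).1) = -(∫ s in (T-t)..T, (u s).1)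
      from e1]
    linarith
  · intro t ht
    have ht' : T - t ∈ Icc (0:ℝ) T := ⟨by linarith [ht.2], by linarith [ht.1]⟩
    have hmem0 : (0:ℝ) ∈ Icc (0:ℝ) T := Set.left_mem_Icc.2 P.hT
    have hmemT : T ∈ Icc (0:ℝ) T := Set.right_mem_Icc.2 P.hT
    have e1 : (∫ s in (0:ℝ)..t, (-u (T - s)).2.1) = -(∫ s in (T-t)..T, (u s).2.1) := by
      have h2 := intervalIntegral.integral_comp_sub_left (a := (0:ℝ)) (b := t)
        (fun s => (u s).2.1) T
      simp only [Prod.snd_neg, Prod.fst_neg]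
      rw [intervalIntegral.integral_neg, h2, sub_zero]
    have e2 := intervalIntegral.integral_add_adjacent_intervals
      (II_of_Icc (int_snd_fst P) hmem0 ht') (II_of_Icc (int_snd_fst P) ht' hmemT)
    have h3 := P.hy (T - t) ht'
    have h4 := P.hy T hmemT
    simp only [sub_zero]
    rw [show (∫ s in (0:ℝ)..t, ((fun t => -u (T - t)) s).2.1) = -(∫ s in (T-t)..T, (u s).2.1)
      from e1]
    linarith
  · intro t ht
    have ht' : T - t ∈ Icc (0:ℝ) T := ⟨by linarith [ht.2], by linarith [ht.1]⟩
    have hmem0 : (0:ℝ) ∈ Icc (0:ℝ) T := Set.left_mem_Icc.2 P.hT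
    have hmemT : T ∈ Icc (0:ℝ) T := Set.right_mem_Icc.2 P.hT
    have e1 : (∫ s in (0:ℝ)..t, (-u (T - s)).2.2 * f (rad (γ (T - s))))
        = -(∫ s in (T-t)..T, (u s).2.2 * f (rad (γ s))) := by
      have h2 := intervalIntegral.integral_comp_sub_left (a := (0:ℝ)) (b := t)
        (fun s => (u s).2.2 * f (rad (γ s))) T
      calc (∫ s in (0:ℝ)..t, (-u (T - s)).2.2 * f (rad (γ (T - s))))
          = ∫ s in (0:ℝ)..t, -((u (T - s)).2.2 * f (rad (γ (T - s)))) := by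
            refine intervalIntegral.integral_congr (fun s _ => ?_)
            simp [Prod.snd_neg]
        _ = -(∫ s in (0:ℝ)..t, (u (T - s)).2.2 * f (rad (γ (T - s)))) :=
            intervalIntegral.integral_neg
        _ = -(∫ s in (T-t)..T, (u s).2.2 * f (rad (γ s))) := by rw [h2, sub_zero]
    have e2 := intervalIntegral.integral_add_adjacent_intervals
      (II_of_Icc (int_z hf P) hmem0 ht') (II_of_Icc (int_z hf P) ht' hmemT)
    have h3 := P.hz (T - t) ht'
    have h4 := P.hz T hmemT
    simp only [sub_zero]
    rw [show (∫ s in (0:ℝ)..t, ((fun t => -u (T - t)) s).2.2 *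
        f (rad ((fun t => γ (T - t)) s)))
        = -(∫ s in (T-t)..T, (u s).2.2 * f (rad (γ s))) from e1]
    linarith

lemma rev_length (P : IsAdmissiblePair f T γ u) :
    pairLength T (fun t => -u (T - t)) = pairLength T u := by
  unfold pairLength
  calc (∫ t in (0:ℝ)..T, ctrlNorm (-u (T - t)))
      = ∫ t in (0:ℝ)..T, ctrlNorm (u (T - t)) := by
        refine intervalIntegral.integral_congr (fun s _ => ?_); exact ctrlNorm_neg _
    _ = ∫ t in (0:ℝ)..T, ctrlNorm (u t) := by
        have h := intervalIntegral.integral_comp_sub_left (a := (0:ℝ)) (b := T)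
          (fun s => ctrlNorm (u s)) T
        rw [h]; norm_num

lemma rev_mem (hf : MemF f) {q q' : ℝ × ℝ × ℝ} {L : ℝ} (h : L ∈ lengthSet f q q') :
    L ∈ lengthSet f q' q := by
  obtain ⟨T, γ, u, P, h0, hT, rfl⟩ := h
  refine ⟨T, fun t => γ (T - t), fun t => -u (T - t), rev_pair hf P, ?_, ?_, (rev_length P).symm⟩
  · simp only [sub_zero]; exact hT
  · simp only [sub_self]; exact h0

end Reverse


section Concat

variable {f : ℝ → ℝ} {T T' : ℝ} {γ u γ' u' : ℝ → ℝ × ℝ × ℝ}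

lemma mp_shift (T T' : ℝ) : MeasurePreserving (fun x : ℝ => x - T)
    (volume.restrict (Icc T (T + T'))) (volume.restrict (Icc 0 T')) := by
  have hpre : (fun x : ℝ => x - T) ⁻¹' (Icc 0 T') = Icc T (T + T') := by
    ext x
    simp only [Set.mem_preimage, Set.mem_Icc]
    constructor <;> (intro h; constructor <;> linarith [h.1, h.2])
  have h := (measurePreserving_sub_right (volume : Measure ℝ) T).restrict_preimage
    (measurableSet_Icc (a := (0:ℝ)) (b := T'))
  rwa [hpre] at h

lemma concat_integrableOn {g g' G : ℝ → ℝ} (hT : 0 ≤ T) (hT' : 0 ≤ T')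
    (hg : IntegrableOn g (Icc 0 T)) (hg' : IntegrableOn g' (Icc 0 T'))
    (h1 : ∀ s, s ≤ T → G s = g s) (h2 : ∀ s, T < s → G s = g' (s - T)) :
    IntegrableOn G (Icc 0 (T + T')) := by
  rw [← Set.Icc_union_Ioc_eq_Icc hT (by linarith : T ≤ T + T')]
  refine IntegrableOn.union ?_ ?_
  · exact hg.congr ((ae_restrict_mem measurableSet_Icc).mono fun s hs => (h1 s hs.2).symm)
  · have hshift : Integrable (g' ∘ fun s => s - T) (volume.restrict (Icc T (T + T'))) :=
      ((mp_shift T T').integrable_comp hg'.aestronglyMeasurable).2 hg'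
    exact (hshift.mono_measure (Measure.restrict_mono Set.Ioc_subset_Icc_self le_rfl)).congr
      ((ae_restrict_mem measurableSet_Ioc).mono fun s hs => (h2 s hs.1).symm)

lemma concat_integral_eq {g g' G : ℝ → ℝ} {t : ℝ} (hT : 0 ≤ T) (hT' : 0 ≤ T')
    (hg : IntegrableOn g (Icc 0 T)) (hg' : IntegrableOn g' (Icc 0 T'))
    (h1 : ∀ s, s ≤ T → G s = g s) (h2 : ∀ s, T < s → G s = g' (s - T))
    (ht : t ∈ Icc 0 (T + T')) :
    (∫ s in (0:ℝ)..t, G s) = if t ≤ T then ∫ s in (0:ℝ)..t, g s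
      else (∫ s in (0:ℝ)..T, g s) + ∫ s in (0:ℝ)..(t - T), g' s := by
  by_cases hc : t ≤ T
  · rw [if_pos hc]
    refine intervalIntegral.integral_congr (fun s hs => ?_)
    rw [Set.uIcc_of_le ht.1] at hs
    exact h1 s (le_trans hs.2 hc)
  · rw [if_neg hc]
    push_neg at hc
    have hG0T : IntegrableOn G (Icc 0 T) :=
      hg.congr ((ae_restrict_mem measurableSet_Icc).mono fun s hs => (h1 s hs.2).symm)
    have hshift : Integrable (g' ∘ fun s => s - T) (volume.restrict (Icc T (T + T'))) :=
      ((mp_shift T T').integrable_comp hg'.aestronglyMeasurable).2 hg'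
    have hGT : IntegrableOn G (Ioc T (T + T')) :=
      (hshift.mono_measure (Measure.restrict_mono Set.Ioc_subset_Icc_self le_rfl)).congr
        ((ae_restrict_mem measurableSet_Ioc).mono fun s hs => (h2 s hs.1).symm)
    have hI1 : IntervalIntegrable G volume 0 T := by
      rw [intervalIntegrable_iff, Set.uIoc_of_le hT]
      exact hG0T.mono_set Set.Ioc_subset_Icc_self
    have hI2 : IntervalIntegrable G volume T t := by
      rw [intervalIntegrable_iff, Set.uIoc_of_le hc.le]
      exact hGT.mono_set (Set.Ioc_subset_Ioc le_rfl ht.2)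
    rw [← intervalIntegral.integral_add_adjacent_intervals hI1 hI2]
    congr 1
    · refine intervalIntegral.integral_congr (fun s hs => ?_)
      rw [Set.uIcc_of_le hT] at hs
      exact h1 s hs.2
    · calc (∫ s in T..t, G s) = ∫ s in T..t, g' (s - T) := by
            refine intervalIntegral.integral_congr_ae (Filter.Eventually.of_forall
              (fun s hs => ?_))
            rw [Set.uIoc_of_le hc.le] at hs
            exact h2 s hs.1
        _ = ∫ s in (T - T)..(t - T), g' s := intervalIntegral.integral_comp_sub_right g' T
        _ = ∫ s in (0:ℝ)..(t - T), g' s := by rw [sub_self]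

lemma concat_pair (hf : MemF f) (P : IsAdmissiblePair f T γ u)
    (Q : IsAdmissiblePair f T' γ' u') (hglue : γ T = γ' 0) :
    IsAdmissiblePair f (T + T') (fun t => if t ≤ T then γ t else γ' (t - T))
      (fun t => if t ≤ T then u t else u' (t - T)) := by
  set Γ : ℝ → ℝ × ℝ × ℝ := fun t => if t ≤ T then γ t else γ' (t - T) with hΓ
  set U : ℝ → ℝ × ℝ × ℝ := fun t => if t ≤ T then u t else u' (t - T) with hU
  have hTT : T ≤ T + T' := by linarith [Q.hT]
  have hU1 : ∀ s, s ≤ T → U s = u s := fun s hs => if_pos hs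
  have hU2 : ∀ s, T < s → U s = u' (s - T) := fun s hs => if_neg (not_le.2 hs)
  have hΓ1 : ∀ s, s ≤ T → Γ s = γ s := fun s hs => if_pos hs
  have hΓ2 : ∀ s, T < s → Γ s = γ' (s - T) := fun s hs => if_neg (not_le.2 hs)
  have hΓ0 : Γ 0 = γ 0 := hΓ1 0 P.hT
  refine ⟨by linarith [P.hT, Q.hT], ?_, ?_, ?_, ?_, ?_⟩
  · -- measurability
    rw [← Set.Icc_union_Ioc_eq_Icc P.hT hTT,
      Measure.restrict_union (by rw [Set.disjoint_left]; exact fun x hx hx' => (not_le.2 hx'.1) hx.2)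
        measurableSet_Ioc]
    rw [aestronglyMeasurable_add_measure_iff]
    constructor
    · exact P.meas.congr ((ae_restrict_mem measurableSet_Icc).mono
        fun s hs => (hU1 s hs.2).symm)
    · have h1 : AEStronglyMeasurable (u' ∘ fun s => s - T)
          (volume.restrict (Icc T (T + T'))) :=
        Q.meas.comp_measurePreserving (mp_shift T T')
      exact (h1.mono_measure (Measure.restrict_mono Set.Ioc_subset_Icc_self le_rfl)).congr
        ((ae_restrict_mem measurableSet_Ioc).mono fun s hs => (hU2 s hs.1).symm)
  · -- square integrability
    exact concat_integrableOn P.hT Q.hT P.sqInt Q.sqInt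
      (fun s hs => by simp only [hU1 s hs]) (fun s hs => by simp only [hU2 s hs])
  · -- x component
    intro t ht
    have hint := concat_integral_eq (G := fun s => (U s).1) P.hT Q.hT (int_fst P) (int_fst Q)
      (fun s hs => by simp only [hU1 s hs]) (fun s hs => by simp only [hU2 s hs]) ht
    by_cases hc : t ≤ T
    · rw [hΓ1 t hc, hΓ0, hint, if_pos hc]
      exact P.hx t ⟨ht.1, hc⟩
    · push_neg at hc
      rw [hΓ2 t hc, hΓ0, hint, if_neg (not_le.2 hc)]
      have h4 := P.hx T (Set.right_mem_Icc.2 P.hT)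
      have h5 := Q.hx (t - T) ⟨by linarith, by linarith [ht.2]⟩
      have h6 : (γ' 0).1 = (γ T).1 := by rw [hglue]
      rw [h5, h6, h4]
      ring
  · -- y component
    intro t ht
    have hint := concat_integral_eq (G := fun s => (U s).2.1) P.hT Q.hT (int_snd_fst P) (int_snd_fst Q)
      (fun s hs => by simp only [hU1 s hs]) (fun s hs => by simp only [hU2 s hs]) ht
    by_cases hc : t ≤ T
    · rw [hΓ1 t hc, hΓ0, hint, if_pos hc]
      exact P.hy t ⟨ht.1, hc⟩
    · push_neg at hc
      rw [hΓ2 t hc, hΓ0, hint, if_neg (not_le.2 hc)]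
      have h4 := P.hy T (Set.right_mem_Icc.2 P.hT)
      have h5 := Q.hy (t - T) ⟨by linarith, by linarith [ht.2]⟩
      have h6 : (γ' 0).2.1 = (γ T).2.1 := by rw [hglue]
      rw [h5, h6, h4]
      ring
  · -- z component
    intro t ht
    have hint := concat_integral_eq (G := fun s => (U s).2.2 * f (rad (Γ s)))
      P.hT Q.hT (int_z hf P) (int_z hf Q)
      (fun s hs => by simp only [hU1 s hs, hΓ1 s hs])
      (fun s hs => by simp only [hU2 s hs, hΓ2 s hs]) ht
    by_cases hc : t ≤ T
    · rw [hΓ1 t hc, hΓ0, hint, if_pos hc]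
      exact P.hz t ⟨ht.1, hc⟩
    · push_neg at hc
      rw [hΓ2 t hc, hΓ0, hint, if_neg (not_le.2 hc)]
      have h4 := P.hz T (Set.right_mem_Icc.2 P.hT)
      have h5 := Q.hz (t - T) ⟨by linarith, by linarith [ht.2]⟩
      have h6 : (γ' 0).2.2 = (γ T).2.2 := by rw [hglue]
      rw [h5, h6, h4]
      ring

lemma concat_length (P : IsAdmissiblePair f T γ u) (Q : IsAdmissiblePair f T' γ' u') :
    pairLength (T + T') (fun t => if t ≤ T then u t else u' (t - T)) =
      pairLength T u + pairLength T' u' := by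
  set U : ℝ → ℝ × ℝ × ℝ := fun t => if t ≤ T then u t else u' (t - T) with hU
  have hU1 : ∀ s, s ≤ T → ctrlNorm (U s) = ctrlNorm (u s) := fun s hs => by
    simp only [hU, if_pos hs]
  have hU2 : ∀ s, T < s → ctrlNorm (U s) = ctrlNorm (u' (s - T)) := fun s hs => by
    simp only [hU, if_neg (not_le.2 hs)]
  have hmem : T + T' ∈ Icc (0:ℝ) (T + T') :=
    Set.right_mem_Icc.2 (by linarith [P.hT, Q.hT])
  have hint := concat_integral_eq (G := fun s => ctrlNorm (U s)) P.hT Q.hT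
    (int_norm P) (int_norm Q) hU1 hU2 hmem
  unfold pairLength
  rw [hint]
  by_cases hc : T + T' ≤ T
  · have hT0 : T' = 0 := le_antisymm (by linarith) Q.hT
    rw [if_pos hc, hT0]
    simp
  · rw [if_neg hc, add_sub_cancel_left]

lemma concat_mem (hf : MemF f) {q q' q'' : ℝ × ℝ × ℝ} {L L' : ℝ}
    (h : L ∈ lengthSet f q q') (h' : L' ∈ lengthSet f q' q'') :
    L + L' ∈ lengthSet f q q'' := by
  obtain ⟨T, γ, u, P, h0, hT, rfl⟩ := h
  obtain ⟨T', γ', u', Q, h0', hT', rfl⟩ := h'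
  have hglue : γ T = γ' 0 := by rw [hT, h0']
  refine ⟨T + T', _, _, concat_pair hf P Q hglue, ?_, ?_, (concat_length P Q).symm⟩
  · simpa [P.hT] using h0
  · by_cases hc : T + T' ≤ T
    · have hT0 : T' = 0 := le_antisymm (by linarith) Q.hT
      simp only [if_pos hc]
      rw [show T + T' = T by rw [hT0]; ring, hT, ← hT', hT0, h0']
    · simp only [if_neg hc, add_sub_cancel_left]
      exact hT'

end Concat


section Explicit

variable {f : ℝ → ℝ}

lemma horiz_mem (f : ℝ → ℝ) (q : ℝ × ℝ × ℝ) (a b : ℝ) :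
    Real.sqrt (a ^ 2 + b ^ 2) ∈ lengthSet f q (q.1 + a, q.2.1 + b, q.2.2) := by
  refine ⟨1, fun t => (q.1 + t * a, q.2.1 + t * b, q.2.2), fun _ => (a, b, 0), ?_, ?_, ?_, ?_⟩
  · refine ⟨zero_le_one, aestronglyMeasurable_const,
      integrableOn_const measure_Icc_lt_top.ne enorm_ne_top, ?_, ?_, ?_⟩
    · intro t _; simp [intervalIntegral.integral_const, smul_eq_mul, mul_comm]
    · intro t _; simp [intervalIntegral.integral_const, smul_eq_mul, mul_comm]
    · intro t _; simp
  · simp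
  · simp
  · simp [pairLength, ctrlNorm, intervalIntegral.integral_const]

lemma vert_mem (hf : MemF f) (q : ℝ × ℝ × ℝ) (hq : 0 < rad q) (c : ℝ) :
    |c| / f (rad q) ∈ lengthSet f q (q.1, q.2.1, q.2.2 + c) := by
  have hfr : 0 < f (rad q) := hf.pos _ hq
  have hcancel : c / f (rad q) * f (rad q) = c := div_mul_cancel₀ c hfr.ne'
  refine ⟨1, fun t => (q.1, q.2.1, q.2.2 + t * c), fun _ => (0, 0, c / f (rad q)),
    ?_, ?_, ?_, ?_⟩
  · refine ⟨zero_le_one, aestronglyMeasurable_const,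
      integrableOn_const measure_Icc_lt_top.ne enorm_ne_top, ?_, ?_, ?_⟩
    · intro t _; simp
    · intro t _; simp
    · intro t _
      have hrad : ∀ s : ℝ, rad ((q.1, q.2.1, q.2.2 + s * c) : ℝ × ℝ × ℝ) = rad q :=
        fun s => rfl
      simp only [hrad, intervalIntegral.integral_const, hcancel, smul_eq_mul]
      ring
  · simp
  · simp
  · simp only [pairLength, ctrlNorm, intervalIntegral.integral_const, smul_eq_mul]
    rw [show (0:ℝ)^2 + 0^2 + (c / f (rad q))^2 = (c / f (rad q))^2 by ring,
      Real.sqrt_sq_eq_abs, abs_div, abs_of_pos hfr]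
    ring

lemma exists_dir (x y : ℝ) : ∃ e1 e2 : ℝ, e1 ^ 2 + e2 ^ 2 = 1 ∧ ∀ ρ : ℝ, 0 ≤ ρ →
    Real.sqrt ((x + ρ * e1) ^ 2 + (y + ρ * e2) ^ 2) = Real.sqrt (x ^ 2 + y ^ 2) + ρ := by
  rcases eq_or_lt_of_le (Real.sqrt_nonneg (x ^ 2 + y ^ 2)) with h0 | h0
  · have hxy : x ^ 2 + y ^ 2 = 0 := by
      have := (Real.sqrt_eq_zero (by positivity)).mp h0.symm
      exact this
    have hx : x = 0 := by nlinarith [sq_nonneg x, sq_nonneg y]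
    have hy : y = 0 := by nlinarith [sq_nonneg x, sq_nonneg y]
    refine ⟨1, 0, by norm_num, fun ρ hρ => ?_⟩
    rw [hx, hy]
    simp [Real.sqrt_sq_eq_abs, abs_of_nonneg hρ]
  · set r := Real.sqrt (x ^ 2 + y ^ 2) with hr
    have hr2 : r ^ 2 = x ^ 2 + y ^ 2 := Real.sq_sqrt (by positivity)
    refine ⟨x / r, y / r, ?_, fun ρ hρ => ?_⟩
    · field_simp
      linarith
    · have expand : (x + ρ * (x / r)) ^ 2 + (y + ρ * (y / r)) ^ 2
          = (x ^ 2 + y ^ 2) * (1 + ρ / r) ^ 2 := by ring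
      have hmul : r * (1 + ρ / r) = r + ρ := by field_simp
      have key : (x + ρ * (x / r)) ^ 2 + (y + ρ * (y / r)) ^ 2 = (r + ρ) ^ 2 := by
        rw [expand, ← hr2, show r ^ 2 * (1 + ρ / r) ^ 2 = (r * (1 + ρ / r)) ^ 2 by ring, hmul]
      rw [key, Real.sqrt_sq (by linarith)]

lemma upper_mem (hf : MemF f) (q q' : ℝ × ℝ × ℝ) {ρ : ℝ} (hρ : 0 < ρ) :
    ∃ L ∈ lengthSet f q q',
      L ≤ |q'.1 - q.1| + |q'.2.1 - q.2.1| + 2 * ρ + |q'.2.2 - q.2.2| / f ρ := by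
  obtain ⟨e1, e2, he, hdir⟩ := exists_dir q'.1 q'.2.1
  have hρe : (ρ * e1) ^ 2 + (ρ * e2) ^ 2 = ρ ^ 2 := by
    calc (ρ * e1) ^ 2 + (ρ * e2) ^ 2 = ρ ^ 2 * (e1 ^ 2 + e2 ^ 2) := by ring
      _ = ρ ^ 2 := by rw [he, mul_one]
  have hsqρ : Real.sqrt ((ρ * e1) ^ 2 + (ρ * e2) ^ 2) = ρ := by
    rw [hρe, Real.sqrt_sq hρ.le]
  -- step 1 : q → a
  have m1 : Real.sqrt ((q'.1 - q.1) ^ 2 + (q'.2.1 - q.2.1) ^ 2)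
      ∈ lengthSet f q (q'.1, q'.2.1, q.2.2) := by
    have h := horiz_mem f q (q'.1 - q.1) (q'.2.1 - q.2.1)
    rwa [show (q.1 + (q'.1 - q.1), q.2.1 + (q'.2.1 - q.2.1), q.2.2)
      = ((q'.1, q'.2.1, q.2.2) : ℝ × ℝ × ℝ) by
        simp only [Prod.mk.injEq]
        exact ⟨by ring, by ring, trivial⟩] at h
  -- step 2 : a → b
  have m2 : ρ ∈ lengthSet f ((q'.1, q'.2.1, q.2.2) : ℝ × ℝ × ℝ)
      ((q'.1 + ρ * e1, q'.2.1 + ρ * e2, q.2.2) : ℝ × ℝ × ℝ) := by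
    have h := horiz_mem f ((q'.1, q'.2.1, q.2.2) : ℝ × ℝ × ℝ) (ρ * e1) (ρ * e2)
    rwa [hsqρ] at h
  -- step 3 : b → c (vertical)
  have hradb : rad ((q'.1 + ρ * e1, q'.2.1 + ρ * e2, q.2.2) : ℝ × ℝ × ℝ)
      = Real.sqrt (q'.1 ^ 2 + q'.2.1 ^ 2) + ρ := hdir ρ hρ.le
  have hradb0 : 0 < rad ((q'.1 + ρ * e1, q'.2.1 + ρ * e2, q.2.2) : ℝ × ℝ × ℝ) := by
    rw [hradb]; have := Real.sqrt_nonneg (q'.1 ^ 2 + q'.2.1 ^ 2); linarith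
  have m3 : |q'.2.2 - q.2.2| / f (rad ((q'.1 + ρ * e1, q'.2.1 + ρ * e2, q.2.2) : ℝ × ℝ × ℝ))
      ∈ lengthSet f ((q'.1 + ρ * e1, q'.2.1 + ρ * e2, q.2.2) : ℝ × ℝ × ℝ)
        ((q'.1 + ρ * e1, q'.2.1 + ρ * e2, q.2.2 + (q'.2.2 - q.2.2)) : ℝ × ℝ × ℝ) :=
    vert_mem hf _ hradb0 _
  -- step 4 : c → q'
  have m4 : ρ ∈ lengthSet f
      ((q'.1 + ρ * e1, q'.2.1 + ρ * e2, q.2.2 + (q'.2.2 - q.2.2)) : ℝ × ℝ × ℝ) q' := by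
    have h := horiz_mem f
      ((q'.1 + ρ * e1, q'.2.1 + ρ * e2, q.2.2 + (q'.2.2 - q.2.2)) : ℝ × ℝ × ℝ)
      (-(ρ * e1)) (-(ρ * e2))
    have hend : ((q'.1 + ρ * e1 + -(ρ * e1), q'.2.1 + ρ * e2 + -(ρ * e2),
        q.2.2 + (q'.2.2 - q.2.2)) : ℝ × ℝ × ℝ) = q' := by
      have h1 : q'.1 + ρ * e1 + -(ρ * e1) = q'.1 := by ring
      have h2 : q'.2.1 + ρ * e2 + -(ρ * e2) = q'.2.1 := by ring
      have h3 : q.2.2 + (q'.2.2 - q.2.2) = q'.2.2 := by ring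
      rw [h1, h2, h3]
    have hlen : Real.sqrt ((-(ρ * e1)) ^ 2 + (-(ρ * e2)) ^ 2) = ρ := by
      rw [show (-(ρ * e1)) ^ 2 + (-(ρ * e2)) ^ 2 = (ρ * e1) ^ 2 + (ρ * e2) ^ 2 by ring, hsqρ]
    rwa [hlen, hend] at h
  have mem := concat_mem hf (concat_mem hf (concat_mem hf m1 m2) m3) m4
  refine ⟨_, mem, ?_⟩
  have h1 := sqrt_add_sq_le (q'.1 - q.1) (q'.2.1 - q.2.1)
  have hfρ : 0 < f ρ := hf.pos _ hρ
  have hfb : f ρ ≤ f (rad ((q'.1 + ρ * e1, q'.2.1 + ρ * e2, q.2.2) : ℝ × ℝ × ℝ)) := by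
    refine hf.f_mono hρ.le (rad_nonneg _) ?_
    rw [hradb]
    have := Real.sqrt_nonneg (q'.1 ^ 2 + q'.2.1 ^ 2)
    linarith
  have h2 : |q'.2.2 - q.2.2| / f (rad ((q'.1 + ρ * e1, q'.2.1 + ρ * e2, q.2.2) : ℝ × ℝ × ℝ))
      ≤ |q'.2.2 - q.2.2| / f ρ := by
    gcongr
  linarith

lemma lengthSet_nonempty (hf : MemF f) (q q' : ℝ × ℝ × ℝ) : (lengthSet f q q').Nonempty := by
  obtain ⟨L, hL, -⟩ := upper_mem hf q q' one_pos
  exact ⟨L, hL⟩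

lemma dCC_le_upper (hf : MemF f) (q q' : ℝ × ℝ × ℝ) {ρ : ℝ} (hρ : 0 < ρ) :
    dCC f q q' ≤ |q'.1 - q.1| + |q'.2.1 - q.2.1| + 2 * ρ + |q'.2.2 - q.2.2| / f ρ := by
  obtain ⟨L, hL, hle⟩ := upper_mem hf q q' hρ
  exact le_trans (dCC_le_of_mem hL) hle

lemma dCC_symm (hf : MemF f) (q q' : ℝ × ℝ × ℝ) : dCC f q q' = dCC f q' q := by
  have h : ∀ a b : ℝ × ℝ × ℝ, dCC f a b ≤ dCC f b a := fun a b =>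
    le_csInf (lengthSet_nonempty hf b a) (fun L hL => dCC_le_of_mem (rev_mem hf hL))
  exact le_antisymm (h q q') (h q' q)

lemma dCC_triangle (hf : MemF f) (q q' q'' : ℝ × ℝ × ℝ) :
    dCC f q q'' ≤ dCC f q q' + dCC f q' q'' := by
  refine le_of_forall_pos_le_add (fun ε hε => ?_)
  obtain ⟨L, hL, hL2⟩ := exists_lt_of_csInf_lt (lengthSet_nonempty hf q q')
    (lt_add_of_pos_right _ (by linarith : (0:ℝ) < ε/2))
  obtain ⟨L', hL', hL2'⟩ := exists_lt_of_csInf_lt (lengthSet_nonempty hf q' q'')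
    (lt_add_of_pos_right _ (by linarith : (0:ℝ) < ε/2))
  have h := dCC_le_of_mem (concat_mem hf hL hL')
  rw [← dCC_eq] at hL2 hL2'
  linarith

lemma norm3_eq (p : ℝ × ℝ × ℝ) : ‖p‖ = max |p.1| (max |p.2.1| |p.2.2|) := by
  simp [Prod.norm_def, Real.norm_eq_abs]

lemma norm_le_of_mem (hf : MemF f) {q q' : ℝ × ℝ × ℝ} {L : ℝ} (h : L ∈ lengthSet f q q') :
    ‖q' - q‖ ≤ L + f (rad q + 2 * L) * L := by
  obtain ⟨T, γ, u, P, h0, hT, rfl⟩ := h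
  have hL0 : 0 ≤ pairLength T u := pairLength_nonneg P
  have hx := disp_fst P (Set.right_mem_Icc.2 P.hT)
  have hy := disp_snd_fst P (Set.right_mem_Icc.2 P.hT)
  have hz := disp_snd_snd hf P
  have hfz : 0 ≤ f (rad (γ 0) + 2 * pairLength T u) * pairLength T u :=
    mul_nonneg (hf.f_nonneg (add_nonneg (rad_nonneg _) (by linarith))) hL0
  rw [← h0, ← hT, norm3_eq]
  simp only [Prod.fst_sub, Prod.snd_sub]
  refine max_le (by linarith) (max_le (by linarith) (by linarith))

lemma norm_lt_of_dCC_lt (hf : MemF f) {q q' : ℝ × ℝ × ℝ} {δ : ℝ} (hδ : δ ≤ 1)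
    (h : dCC f q q' < δ) : ‖q' - q‖ < (1 + f (rad q + 2)) * δ := by
  obtain ⟨L, hL, hLδ⟩ := exists_lt_of_csInf_lt (lengthSet_nonempty hf q q') h
  have hL0 := lengthSet_nonneg hL
  have h1 := norm_le_of_mem hf hL
  have hmono : f (rad q + 2 * L) ≤ f (rad q + 2) :=
    hf.f_mono (add_nonneg (rad_nonneg q) (by linarith)) (add_nonneg (rad_nonneg q)
      (by norm_num)) (by linarith)
  have hfpos : 0 < f (rad q + 2) := hf.pos _ (by linarith [rad_nonneg q])
  calc ‖q' - q‖ ≤ L + f (rad q + 2 * L) * L := h1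
    _ ≤ L + f (rad q + 2) * L := by nlinarith
    _ = (1 + f (rad q + 2)) * L := by ring
    _ < (1 + f (rad q + 2)) * δ := by nlinarith

end Explicit


lemma comp1_le_norm (p : ℝ × ℝ × ℝ) : |p.1| ≤ ‖p‖ := by
  rw [norm3_eq]; exact le_max_left _ _

lemma comp21_le_norm (p : ℝ × ℝ × ℝ) : |p.2.1| ≤ ‖p‖ := by
  rw [norm3_eq]; exact le_trans (le_max_left _ _) (le_max_right _ _)

lemma comp22_le_norm (p : ℝ × ℝ × ℝ) : |p.2.2| ≤ ‖p‖ := by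
  rw [norm3_eq]; exact le_trans (le_max_right _ _) (le_max_right _ _)

end CC

/-- `d_CC` is a well-defined metric on `ℝ³` inducing the Euclidean
topology, and `(ℝ³, d_CC)` is complete. -/
theorem dCC_metric_and_complete
    (f : ℝ → ℝ) (hf : MemF f) :
    (∀ q : ℝ × ℝ × ℝ, dCC f q q = 0) ∧
    (∀ q q' : ℝ × ℝ × ℝ, 0 ≤ dCC f q q') ∧
    (∀ q q' : ℝ × ℝ × ℝ, dCC f q q' = dCC f q' q) ∧
    (∀ q q' q'' : ℝ × ℝ × ℝ, dCC f q q'' ≤ dCC f q q' + dCC f q' q'') ∧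
    (∀ q q' : ℝ × ℝ × ℝ, dCC f q q' = 0 → q = q') ∧
    -- the topology induced by d_CC is the Euclidean topology
    (∀ q : ℝ × ℝ × ℝ, ∀ ε : ℝ, 0 < ε → ∃ δ : ℝ, 0 < δ ∧
      (∀ q' : ℝ × ℝ × ℝ, dCC f q q' < δ → ‖q' - q‖ < ε) ∧
      (∀ q' : ℝ × ℝ × ℝ, ‖q' - q‖ < δ → dCC f q q' < ε)) ∧
    -- completeness
    (∀ s : ℕ → ℝ × ℝ × ℝ,
      (∀ ε : ℝ, 0 < ε → ∃ N : ℕ, ∀ m ≥ N, ∀ n ≥ N, dCC f (s m) (s n) < ε) →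
      ∃ q : ℝ × ℝ × ℝ, Filter.Tendsto (fun n => dCC f (s n) q) Filter.atTop (nhds 0)) := by
  have topo : ∀ q : ℝ × ℝ × ℝ, ∀ ε : ℝ, 0 < ε → ∃ δ : ℝ, 0 < δ ∧
      (∀ q' : ℝ × ℝ × ℝ, dCC f q q' < δ → ‖q' - q‖ < ε) ∧
      (∀ q' : ℝ × ℝ × ℝ, ‖q' - q‖ < δ → dCC f q q' < ε) := by
    intro q ε hε
    set C := 1 + f (rad q + 2) with hC
    have hfpos : 0 < f (rad q + 2) := hf.pos _ (by linarith [CC.rad_nonneg q])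
    have hCpos : 0 < C := by rw [hC]; linarith
    set ρ := ε / 8 with hρdef
    have hρ : 0 < ρ := by rw [hρdef]; linarith
    have hfρ : 0 < f ρ := hf.pos _ hρ
    set δ1 := min 1 (ε / C) with hδ1
    set δ2 := min ρ (f ρ * ρ) with hδ2
    refine ⟨min δ1 δ2, lt_min (lt_min one_pos (by positivity)) (lt_min hρ (by positivity)),
      ?_, ?_⟩
    · intro q' hq'
      have hlt : dCC f q q' < δ1 := lt_of_lt_of_le hq' (min_le_left _ _)
      have h := CC.norm_lt_of_dCC_lt hf (min_le_left 1 (ε / C)) hlt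
      calc ‖q' - q‖ < C * δ1 := h
        _ ≤ C * (ε / C) := mul_le_mul_of_nonneg_left (min_le_right _ _) hCpos.le
        _ = ε := mul_div_cancel₀ ε hCpos.ne'
    · intro q' hq'
      have hub := CC.dCC_le_upper hf q q' hρ
      have h1 : |q'.1 - q.1| ≤ ‖q' - q‖ := by
        have := CC.comp1_le_norm (q' - q); rwa [Prod.fst_sub] at this
      have h2 : |q'.2.1 - q.2.1| ≤ ‖q' - q‖ := by
        have := CC.comp21_le_norm (q' - q); rwa [Prod.snd_sub, Prod.fst_sub] at this
      have h3 : |q'.2.2 - q.2.2| ≤ ‖q' - q‖ := by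
        have := CC.comp22_le_norm (q' - q); rwa [Prod.snd_sub, Prod.snd_sub] at this
      have hmin2 : ‖q' - q‖ < δ2 := lt_of_lt_of_le hq' (min_le_right _ _)
      have hza : |q'.2.2 - q.2.2| / f ρ < ρ := by
        rw [div_lt_iff₀ hfρ]
        calc |q'.2.2 - q.2.2| ≤ ‖q' - q‖ := h3
          _ < δ2 := hmin2
          _ ≤ f ρ * ρ := min_le_right _ _
          _ = ρ * f ρ := mul_comm _ _
      have hxa : |q'.1 - q.1| < ρ := lt_of_le_of_lt h1 (lt_of_lt_of_le hmin2 (min_le_left _ _))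
      have hya : |q'.2.1 - q.2.1| < ρ :=
        lt_of_le_of_lt h2 (lt_of_lt_of_le hmin2 (min_le_left _ _))
      have h5 : dCC f q q' < 5 * ρ := by linarith
      rw [hρdef] at h5
      linarith
  refine ⟨fun q => CC.dCC_self f q, fun q q' => CC.dCC_nonneg f q q',
    fun q q' => CC.dCC_symm hf q q', fun q q' q'' => CC.dCC_triangle hf q q' q'',
    ?_, topo, ?_⟩
  · -- positivity
    intro q q' h
    by_contra hne
    have hpos : 0 < ‖q' - q‖ := by
      rw [norm_pos_iff]
      exact sub_ne_zero.2 (Ne.symm hne)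
    obtain ⟨δ, hδ0, hfwd, -⟩ := topo q ‖q' - q‖ hpos
    exact absurd (hfwd q' (by rw [h]; exact hδ0)) (lt_irrefl _)
  · -- completeness
    intro s hC
    obtain ⟨N0, hN0⟩ := hC 1 one_pos
    set B := ‖s N0‖ + (1 + f (rad (s N0) + 2)) with hB
    have hfN0 : 0 < f (rad (s N0) + 2) := hf.pos _ (by linarith [CC.rad_nonneg (s N0)])
    have hBn : ∀ n, N0 ≤ n → ‖s n‖ ≤ B := by
      intro n hn
      have h := CC.norm_lt_of_dCC_lt hf le_rfl (hN0 N0 le_rfl n hn)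
      have h2 : ‖s n‖ ≤ ‖s N0‖ + ‖s n - s N0‖ := by
        calc ‖s n‖ = ‖s N0 + (s n - s N0)‖ := by rw [show s N0 + (s n - s N0) = s n by abel]
          _ ≤ ‖s N0‖ + ‖s n - s N0‖ := norm_add_le _ _
      rw [mul_one] at h
      rw [hB]
      linarith
    have hB0 : 0 ≤ B := by
      have := norm_nonneg (s N0); rw [hB]; linarith
    have hrad : ∀ n, N0 ≤ n → rad (s n) ≤ 2 * B := by
      intro n hn
      have h1 := CC.comp1_le_norm (s n)
      have h2 := CC.comp21_le_norm (s n)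
      have h3 := CC.sqrt_add_sq_le (s n).1 (s n).2.1
      have h4 := hBn n hn
      have hr : rad (s n) = Real.sqrt ((s n).1 ^ 2 + (s n).2.1 ^ 2) := rfl
      rw [hr]; linarith
    set C2 := 1 + f (2 * B + 2) with hC2
    have hfB : 0 < f (2 * B + 2) := hf.pos _ (by linarith)
    have hC2pos : 0 < C2 := by rw [hC2]; linarith
    have hcauchy : CauchySeq s := by
      rw [Metric.cauchySeq_iff]
      intro ε hε
      have hδ0 : 0 < min 1 (ε / (2 * C2)) := lt_min one_pos (by positivity)
      obtain ⟨N1, hN1⟩ := hC _ hδ0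
      refine ⟨max N0 N1, fun m hm n hn => ?_⟩
      have hd := hN1 m (le_trans (le_max_right _ _) hm) n (le_trans (le_max_right _ _) hn)
      have h1 := CC.norm_lt_of_dCC_lt hf (min_le_left 1 (ε / (2 * C2))) hd
      have hm0 : N0 ≤ m := le_trans (le_max_left _ _) hm
      have hmon : f (rad (s m) + 2) ≤ f (2 * B + 2) :=
        hf.f_mono (Set.mem_Ici.2 (by linarith [CC.rad_nonneg (s m)]))
          (Set.mem_Ici.2 (by linarith)) (by linarith [hrad m hm0])
      rw [dist_eq_norm, norm_sub_rev]
      calc ‖s n - s m‖ < (1 + f (rad (s m) + 2)) * min 1 (ε / (2 * C2)) := h1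
        _ ≤ C2 * min 1 (ε / (2 * C2)) := by
            refine mul_le_mul_of_nonneg_right ?_ hδ0.le
            rw [hC2]; linarith
        _ ≤ C2 * (ε / (2 * C2)) := mul_le_mul_of_nonneg_left (min_le_right _ _) hC2pos.le
        _ = ε / 2 := by field_simp
        _ < ε := by linarith
    obtain ⟨q, hq⟩ := cauchySeq_tendsto_of_complete hcauchy
    refine ⟨q, ?_⟩
    rw [Metric.tendsto_atTop]
    intro ε hε
    set ρ := ε / 8 with hρdef
    have hρ : 0 < ρ := by rw [hρdef]; linarith
    have hfρ : 0 < f ρ := hf.pos _ hρ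
    have hδ'0 : 0 < min ρ (f ρ * ρ) := lt_min hρ (by positivity)
    obtain ⟨N, hN⟩ := Metric.tendsto_atTop.1 hq _ hδ'0
    refine ⟨N, fun n hn => ?_⟩
    have hdist := hN n hn
    rw [Real.dist_eq, sub_zero, abs_of_nonneg (CC.dCC_nonneg f _ _)]
    have hub := CC.dCC_le_upper hf (s n) q hρ
    have h1 : |q.1 - (s n).1| ≤ dist (s n) q := by
      rw [dist_eq_norm]
      have := CC.comp1_le_norm (s n - q)
      rw [Prod.fst_sub] at this
      rwa [abs_sub_comm]
    have h2 : |q.2.1 - (s n).2.1| ≤ dist (s n) q := by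
      rw [dist_eq_norm]
      have := CC.comp21_le_norm (s n - q)
      rw [Prod.snd_sub, Prod.fst_sub] at this
      rwa [abs_sub_comm]
    have h3 : |q.2.2 - (s n).2.2| ≤ dist (s n) q := by
      rw [dist_eq_norm]
      have := CC.comp22_le_norm (s n - q)
      rw [Prod.snd_sub, Prod.snd_sub] at this
      rwa [abs_sub_comm]
    have hza : |q.2.2 - (s n).2.2| / f ρ < ρ := by
      rw [div_lt_iff₀ hfρ]
      calc |q.2.2 - (s n).2.2| ≤ dist (s n) q := h3
        _ < min ρ (f ρ * ρ) := hdist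
        _ ≤ f ρ * ρ := min_le_right _ _
        _ = ρ * f ρ := mul_comm _ _
    have hxa : |q.1 - (s n).1| < ρ :=
      lt_of_le_of_lt h1 (lt_of_lt_of_le hdist (min_le_left _ _))
    have hya : |q.2.1 - (s n).2.1| < ρ :=
      lt_of_le_of_lt h2 (lt_of_lt_of_le hdist (min_le_left _ _))
    have h5 : dCC f (s n) q < 5 * ρ := by linarith
    rw [hρdef] at h5
    linarith
end
end

section
/- Let q₀=(x₀,y₀,z₀) with (x₀,y₀)≠(0,0) and let γ be the normal geodesic from q₀ with initial covector λ₀=(u₀,v₀,w₀). In cylindrical coordinates γ=(r,θ,z) solves r̈ = −w₀²f(r)f'(r) + K²/r³, θ̇ = K/r², ż = w₀f(r)², with K=x₀v₀−y₀u₀ conserved, r(0)=r₀=√(x₀²+y₀²), ṙ(0)=L/r₀, θ(0)=θ₀, z(0)=z₀, where L=x₀u₀+y₀v₀. Let λ̂₀=(û₀,v̂₀,w₀) be the reflected covector defined by (û₀,v̂₀)ᵀ = (1/(x₀²+y₀²))·[[x₀²−y₀², 2x₀y₀],[2x₀y₀, y₀²−x₀²]]·(u₀,v₀)ᵀ, and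 let γ̂ be the geodesic from q₀ with covector λ̂₀. Then K(λ̂₀)=−K(λ₀) and L(λ̂₀)=L(λ₀), so γ̂ has the same radial component r̂(t)=r(t) and opposing angle θ̂(t)−θ₀ = −(θ(t)−θ₀); if K≠0, γ and γ̂ are distinct geodesics which intersect for the first time at the time T = min{t>0 : ∫₀^t |K|/r(s)² ds = π}, at a point on the half-plane {θ = θ₀+π}. -/
noncomputable section

/-- A pair vector field `(a, b) ↦ (b, F a)` is Lipschitz on `s ×ˢ univ` when `F` is
Lipschitz on `s`. -/
lemma pair_lipschitz {F : ℝ → ℝ} {s : Set ℝ} {c : NNReal} (h : LipschitzOnWith c F s) :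
    LipschitzOnWith (max 1 c) (fun p : ℝ × ℝ => (p.2, F p.1))
      (s ×ˢ (Set.univ : Set ℝ)) := by
  intro p hp q hq
  have h1 : edist p.2 q.2 ≤ edist p q := by
    rw [Prod.edist_eq]; exact le_max_right _ _
  have h2 : edist (F p.1) (F q.1) ≤ (c : ENNReal) * edist p q := by
    refine (h hp.1 hq.1).trans ?_
    exact mul_le_mul_right (by rw [Prod.edist_eq]; exact le_max_left _ _) _
  have hc1 : (1 : ENNReal) ≤ ((max 1 c : NNReal) : ENNReal) := by
    exact_mod_cast le_max_left 1 c
  have hc2 : ((c : NNReal) : ENNReal) ≤ ((max 1 c : NNReal) : ENNReal) := by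
    exact_mod_cast le_max_right 1 c
  calc edist ((fun p : ℝ × ℝ => (p.2, F p.1)) p) ((fun p : ℝ × ℝ => (p.2, F p.1)) q)
      = max (edist p.2 q.2) (edist (F p.1) (F q.1)) := Prod.edist_eq _ _
    _ ≤ max (edist p q) ((c : ENNReal) * edist p q) := max_le_max h1 h2
    _ ≤ ((max 1 c : NNReal) : ENNReal) * edist p q := by
        refine max_le ?_ ?_
        · calc edist p q = 1 * edist p q := (one_mul _).symm
            _ ≤ _ := mul_le_mul_left hc1 _
        · exact mul_le_mul_left hc2 _

set_option maxHeartbeats 1600000 in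
/-- the reflected covector `λ̂₀` gives a symmetrizing geodesic `γ̂`
with `K(λ̂₀) = −K(λ₀)`, `L(λ̂₀) = L(λ₀)`, the same radial component and opposing
angle; if `K ≠ 0` the two geodesics are distinct and intersect for the first time
at the time `T` with `∫₀ᵀ |K|/r² = π`, on the half plane `{θ = θ₀ + π}`. -/
theorem symmetrizing_geodesic
    (f : ℝ → ℝ) (hf : MemF f)
    (x₀ y₀ z₀ u₀ v₀ w₀ : ℝ) (hq : 0 < x₀ ^ 2 + y₀ ^ 2)
    (θ₀ : ℝ)
    (hx₀ : x₀ = Real.sqrt (x₀ ^ 2 + y₀ ^ 2) * Real.cos θ₀)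
    (hy₀ : y₀ = Real.sqrt (x₀ ^ 2 + y₀ ^ 2) * Real.sin θ₀)
    (K L : ℝ) (hK : K = x₀ * v₀ - y₀ * u₀) (hL : L = x₀ * u₀ + y₀ * v₀) (hKne : K ≠ 0)
    (uh vh : ℝ)
    (huh : uh = ((x₀ ^ 2 - y₀ ^ 2) * u₀ + 2 * x₀ * y₀ * v₀) / (x₀ ^ 2 + y₀ ^ 2))
    (hvh : vh = (2 * x₀ * y₀ * u₀ + (y₀ ^ 2 - x₀ ^ 2) * v₀) / (x₀ ^ 2 + y₀ ^ 2))
    (Kh Lh : ℝ) (hKh : Kh = x₀ * vh - y₀ * uh) (hLh : Lh = x₀ * uh + y₀ * vh)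
    -- the geodesic γ in cylindrical coordinates
    (r θ z r' : ℝ → ℝ)
    (hrpos : ∀ t, 0 < r t)
    (hr : ∀ t, HasDerivAt r (r' t) t)
    (hr' : ∀ t, HasDerivAt r'
      (-(w₀ ^ 2) * f (r t) * deriv f (r t) + K ^ 2 / r t ^ 3) t)
    (hθ : ∀ t, HasDerivAt θ (K / r t ^ 2) t)
    (hz : ∀ t, HasDerivAt z (w₀ * f (r t) ^ 2) t)
    (hr0 : r 0 = Real.sqrt (x₀ ^ 2 + y₀ ^ 2))
    (hr'0 : r' 0 = L / Real.sqrt (x₀ ^ 2 + y₀ ^ 2))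
    (hθ0 : θ 0 = θ₀) (hz0 : z 0 = z₀)
    -- the reflected geodesic γ̂ in cylindrical coordinates
    (rh θh zh rh' : ℝ → ℝ)
    (hrhpos : ∀ t, 0 < rh t)
    (hrh : ∀ t, HasDerivAt rh (rh' t) t)
    (hrh' : ∀ t, HasDerivAt rh'
      (-(w₀ ^ 2) * f (rh t) * deriv f (rh t) + Kh ^ 2 / rh t ^ 3) t)
    (hθh : ∀ t, HasDerivAt θh (Kh / rh t ^ 2) t)
    (hzh : ∀ t, HasDerivAt zh (w₀ * f (rh t) ^ 2) t)
    (hrh0 : rh 0 = Real.sqrt (x₀ ^ 2 + y₀ ^ 2))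
    (hrh'0 : rh' 0 = Lh / Real.sqrt (x₀ ^ 2 + y₀ ^ 2))
    (hθh0 : θh 0 = θ₀) (hzh0 : zh 0 = z₀) :
    Kh = -K ∧ Lh = L ∧
    (∀ t, rh t = r t) ∧
    (∀ t, θh t - θ₀ = -(θ t - θ₀)) ∧
    (∀ T : ℝ, 0 < T → (∫ s in (0:ℝ)..T, |K| / r s ^ 2) = Real.pi →
      ((∃ t : ℝ, (r t * Real.cos (θ t), r t * Real.sin (θ t), z t) ≠
          (rh t * Real.cos (θh t), rh t * Real.sin (θh t), zh t)) ∧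
       (∀ t ∈ Set.Ioo (0:ℝ) T,
          (r t * Real.cos (θ t), r t * Real.sin (θ t), z t) ≠
          (rh t * Real.cos (θh t), rh t * Real.sin (θh t), zh t)) ∧
       (r T * Real.cos (θ T), r T * Real.sin (θ T), z T) =
          (rh T * Real.cos (θh T), rh T * Real.sin (θh T), zh T) ∧
       |θ T - θ₀| = Real.pi)) := by
  have hqne : x₀ ^ 2 + y₀ ^ 2 ≠ 0 := ne_of_gt hq
  have hKh' : Kh = -K := by
    rw [hKh, huh, hvh, hK]; field_simp; ring
  have hLh' : Lh = L := by
    rw [hLh, huh, hvh, hL]; field_simp; ring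
  -- continuity facts
  have hrc : Continuous r := continuous_iff_continuousAt.2 fun t => (hr t).continuousAt
  have hrhc : Continuous rh := continuous_iff_continuousAt.2 fun t => (hrh t).continuousAt
  have hr'c : Continuous r' := continuous_iff_continuousAt.2 fun t => (hr' t).continuousAt
  have hrh'c : Continuous rh' := continuous_iff_continuousAt.2 fun t => (hrh' t).continuousAt
  -- the radial vector field
  set G : ℝ → ℝ := fun a => -(w₀ ^ 2) * f a * deriv f a + K ^ 2 / a ^ 3 with hG
  have hG1 : ContDiffOn ℝ 1 G (Set.Ioi 0) := by
    have h1 : ContDiffOn ℝ 1 f (Set.Ioi 0) := hf.smooth.of_le one_le_two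
    have h2 : ContDiffOn ℝ 1 (deriv f) (Set.Ioi 0) :=
      hf.smooth.deriv_of_isOpen isOpen_Ioi (by norm_num)
    exact ((contDiffOn_const.mul h1).mul h2).add
      (contDiffOn_const.div ((contDiff_id.pow 3).contDiffOn)
        (fun a ha => pow_ne_zero 3 (ne_of_gt ha)))
  have hKsq : Kh ^ 2 = K ^ 2 := by rw [hKh']; ring
  have hmem0 : rh 0 = r 0 ∧ rh' 0 = r' 0 :=
    ⟨by rw [hr0, hrh0], by rw [hr'0, hrh'0, hLh']⟩
  -- uniqueness: the two radial solutions agree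
  have key : ∀ t, rh t = r t ∧ rh' t = r' t := by
    have hclopen : IsClopen {t : ℝ | rh t = r t ∧ rh' t = r' t} := by
      constructor
      · exact (isClosed_eq hrhc hrc).inter (isClosed_eq hrh'c hr'c)
      · rw [isOpen_iff_mem_nhds]
        rintro t₀ ⟨he1, he2⟩
        have hρ : (0:ℝ) < r t₀ := hrpos t₀
        have hGat : ContDiffAt ℝ 1 G (r t₀) := hG1.contDiffAt (isOpen_Ioi.mem_nhds hρ)
        obtain ⟨c, u, hu, hlip⟩ := hGat.exists_lipschitzOnWith
        have hVlip : LipschitzOnWith (max 1 c) (fun p : ℝ × ℝ => (p.2, G p.1))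
            (u ×ˢ (Set.univ : Set ℝ)) := pair_lipschitz hlip
        have hru : ∀ᶠ t in nhds t₀, r t ∈ u := (hr t₀).continuousAt.eventually_mem hu
        have hrhu : ∀ᶠ t in nhds t₀, rh t ∈ u :=
          (hrh t₀).continuousAt.eventually_mem (by rw [he1]; exact hu)
        have hequ := ODE_solution_unique_of_eventually (K := max 1 c)
          (v := fun _ => fun p : ℝ × ℝ => (p.2, G p.1))
          (s := fun _ => u ×ˢ (Set.univ : Set ℝ))
          (Filter.Eventually.of_forall fun _ => hVlip)
          (f := fun t => (rh t, rh' t)) (g := fun t => (r t, r' t))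
          (by
            filter_upwards [hrhu] with t htu
            refine ⟨?_, htu, trivial⟩
            have hd : HasDerivAt rh' (G (rh t)) t := by
              have := hrh' t
              rw [hG]
              simp only
              rw [← hKsq]
              exact this
            exact (hrh t).prodMk hd)
          (by
            filter_upwards [hru] with t htu
            refine ⟨?_, htu, trivial⟩
            exact (hr t).prodMk (hr' t))
          (by simp [he1, he2])
        have hev : ∀ᶠ t in nhds t₀, rh t = r t ∧ rh' t = r' t := by
          filter_upwards [hequ] with t ht
          exact ⟨congrArg Prod.fst ht, congrArg Prod.snd ht⟩
        exact hev
    have hne : {t : ℝ | rh t = r t ∧ rh' t = r' t}.Nonempty := ⟨0, hmem0⟩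
    intro t
    have ht : t ∈ {t : ℝ | rh t = r t ∧ rh' t = r' t} := by
      rw [hclopen.eq_univ hne]; exact Set.mem_univ t
    exact ht
  have hrr : ∀ t, rh t = r t := fun t => (key t).1
  -- opposing angles
  have hθsum : ∀ t, θh t + θ t = 2 * θ₀ := by
    have hW : ∀ t, HasDerivAt (fun t => θh t + θ t) 0 t := by
      intro t
      have h := (hθh t).add (hθ t)
      refine h.congr_deriv ?_
      rw [hrr t, hKh']
      field_simp
      ring
    have hconst := is_const_of_deriv_eq_zero (f := fun t => θh t + θ t)
      (fun t => (hW t).differentiableAt) (fun t => (hW t).deriv)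
    intro t
    have h := hconst t 0
    rw [hθh0, hθ0] at h
    linarith only [h]
  have hθopp : ∀ t, θh t - θ₀ = -(θ t - θ₀) := fun t => by
    have := hθsum t; linarith only [this]
  -- equal vertical components
  have hzz : ∀ t, zh t = z t := by
    have hW : ∀ t, HasDerivAt (fun t => zh t - z t) 0 t := by
      intro t
      have h := (hzh t).sub (hz t)
      refine h.congr_deriv ?_
      rw [hrr t]; ring
    have hconst := is_const_of_deriv_eq_zero (f := fun t => zh t - z t)
      (fun t => (hW t).differentiableAt) (fun t => (hW t).deriv)
    intro t
    have h := hconst t 0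
    rw [hzh0, hz0] at h
    linarith only [h]
  refine ⟨hKh', hLh', hrr, hθopp, ?_⟩
  intro T hT hint
  -- sign of K
  set σ : ℝ := if 0 < K then 1 else -1 with hσ
  have hσK : |K| = σ * K := by
    rcases lt_trichotomy K 0 with h | h | h
    · rw [hσ, if_neg (by linarith), abs_of_neg h]; ring
    · exact absurd h hKne
    · rw [hσ, if_pos h, abs_of_pos h]; ring
  have hσabs : |σ| = 1 := by
    rw [hσ]; split_ifs <;> simp
  have hcontK : Continuous fun s => K / r s ^ 2 :=
    continuous_const.div (hrc.pow 2) (fun s => pow_ne_zero 2 (hrpos s).ne')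
  have hFTC : ∀ t : ℝ, (∫ s in (0:ℝ)..t, K / r s ^ 2) = θ t - θ 0 := fun t =>
    intervalIntegral.integral_eq_sub_of_hasDerivAt (fun s _ => hθ s)
      (hcontK.intervalIntegrable 0 t)
  have hΨint : ∀ t : ℝ, (∫ s in (0:ℝ)..t, |K| / r s ^ 2) = σ * (θ t - θ₀) := by
    intro t
    have heqf : (fun s => |K| / r s ^ 2) = fun s => σ * (K / r s ^ 2) := by
      funext s; rw [hσK, mul_div_assoc]
    rw [heqf, intervalIntegral.integral_const_mul, hFTC, hθ0]
  have hΨmono : StrictMono (fun t => σ * (θ t - θ₀)) := by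
    apply strictMono_of_hasDerivAt_pos (f' := fun t => |K| / r t ^ 2)
    · intro t
      have h := ((hθ t).sub_const θ₀).const_mul σ
      refine h.congr_deriv ?_
      rw [hσK]; ring
    · intro t
      exact div_pos (abs_pos.2 hKne) (pow_pos (hrpos t) 2)
  have hΨ0 : σ * (θ 0 - θ₀) = 0 := by rw [hθ0]; ring
  have hΨT : σ * (θ T - θ₀) = Real.pi := by rw [← hΨint T]; exact hint
  have habsσ : ∀ t, |θ t - θ₀| = |σ * (θ t - θ₀)| := by
    intro t; rw [abs_mul, hσabs, one_mul]
  have habsT : |θ T - θ₀| = Real.pi := by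
    rw [habsσ, hΨT, abs_of_pos Real.pi_pos]
  have hmid : ∀ t ∈ Set.Ioo (0:ℝ) T, 0 < σ * (θ t - θ₀) ∧ σ * (θ t - θ₀) < Real.pi := by
    intro t ht
    have h1 := hΨmono ht.1
    have h2 := hΨmono ht.2
    dsimp only at h1 h2
    exact ⟨by linarith only [h1, hΨ0], by linarith only [h2, hΨT]⟩
  -- no intersection in the interior
  have hdist : ∀ t ∈ Set.Ioo (0:ℝ) T,
      (r t * Real.cos (θ t), r t * Real.sin (θ t), z t) ≠
      (rh t * Real.cos (θh t), rh t * Real.sin (θh t), zh t) := by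
    intro t ht heq
    obtain ⟨h1, h2, _⟩ : r t * Real.cos (θ t) = rh t * Real.cos (θh t) ∧
        r t * Real.sin (θ t) = rh t * Real.sin (θh t) ∧ z t = zh t := by
      simpa [Prod.ext_iff] using heq
    rw [hrr t] at h1 h2
    have hcos : Real.cos (θ t) = Real.cos (θh t) := mul_left_cancel₀ (hrpos t).ne' h1
    have hsin : Real.sin (θ t) = Real.sin (θh t) := mul_left_cancel₀ (hrpos t).ne' h2
    have hone : Real.cos (θ t - θh t) = 1 := by
      rw [Real.cos_sub, hcos, hsin]
      linear_combination Real.sin_sq_add_cos_sq (θh t)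
    obtain ⟨n, hn⟩ := (Real.cos_eq_one_iff _).1 hone
    have hopp := hθopp t
    have hrel : θ t - θ₀ = n * Real.pi := by linarith only [hn, hopp]
    obtain ⟨hpos, hlt⟩ := hmid t ht
    rcases eq_or_ne n 0 with h | h
    · rw [h] at hrel
      simp at hrel
      rw [hrel] at hpos
      simp at hpos
    · have h1le : (1:ℝ) ≤ |(n:ℝ)| := by
        exact_mod_cast Int.one_le_abs h
      have hge : Real.pi ≤ |θ t - θ₀| := by
        rw [hrel, abs_mul, abs_of_pos Real.pi_pos]
        exact le_mul_of_one_le_left Real.pi_pos.le h1le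
      have hlt' : |θ t - θ₀| < Real.pi := by
        rw [habsσ t, abs_of_pos hpos]; exact hlt
      linarith only [hge, hlt']
  -- intersection at T
  have hTeq : (r T * Real.cos (θ T), r T * Real.sin (θ T), z T) =
      (rh T * Real.cos (θh T), rh T * Real.sin (θh T), zh T) := by
    have hh := hθopp T
    rcases (abs_eq Real.pi_pos.le).1 habsT with hcase | hcase
    · have hθhT : θh T = θ T - 2 * Real.pi := by linarith only [hh, hcase]
      rw [hrr T, hzz T, hθhT, Real.cos_sub_two_pi, Real.sin_sub_two_pi]
    · have hθhT : θh T = θ T + 2 * Real.pi := by linarith only [hh, hcase]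
      rw [hrr T, hzz T, hθhT, Real.cos_add_two_pi, Real.sin_add_two_pi]
  exact ⟨⟨T / 2, hdist (T / 2) ⟨by linarith only [hT], by linarith only [hT]⟩⟩, hdist, hTeq, habsT⟩
end
end

section
/- Let q₀=(x₀,y₀,z₀) with (x₀,y₀)≠(0,0) and let γ be a constant-speed normal geodesic from q₀ with initial covector λ₀=(u₀,v₀,w₀) whose angular momentum K=x₀v₀−y₀u₀ is nonzero, with cylindrical radial component r(t). Then γ is not a length minimizer on [0,t] for any t > T, where T = min{t>0 : ∫₀^t |K|/r(s)² ds = π}; in particular t_cut(γ) ≤ T. -/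
noncomputable section

lemma rad_cyl (a b t : ℝ) (ha : 0 ≤ a) :
    rad (a * Real.cos t, a * Real.sin t, b) = a := by
  have h := Real.sin_sq_add_cos_sq t
  have : (a * Real.cos t) ^ 2 + (a * Real.sin t) ^ 2 = a ^ 2 := by nlinarith [h]
  rw [rad]; simp only; rw [this, Real.sqrt_sq ha]

set_option maxHeartbeats 2000000 in
/-- a constant speed geodesic from a Riemannian point with
angular momentum `K ≠ 0` is not a length minimizer on `[0,t]` for any `t > T`,
where `T` is the first time with `∫₀ᵀ |K|/r² = π`; in particular `t_cut(γ) ≤ T`. -/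
theorem not_minimizing_past_symmetry_time
    (f : ℝ → ℝ) (hf : MemF f)
    (x₀ y₀ z₀ u₀ v₀ w₀ : ℝ) (hq : 0 < x₀ ^ 2 + y₀ ^ 2)
    (θ₀ : ℝ)
    (hx₀ : x₀ = Real.sqrt (x₀ ^ 2 + y₀ ^ 2) * Real.cos θ₀)
    (hy₀ : y₀ = Real.sqrt (x₀ ^ 2 + y₀ ^ 2) * Real.sin θ₀)
    (K L : ℝ) (hK : K = x₀ * v₀ - y₀ * u₀) (hL : L = x₀ * u₀ + y₀ * v₀) (hKne : K ≠ 0)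
    (r θ z r' : ℝ → ℝ)
    (hrpos : ∀ t, 0 < r t)
    (hr : ∀ t, HasDerivAt r (r' t) t)
    (hr' : ∀ t, HasDerivAt r'
      (-(w₀ ^ 2) * f (r t) * deriv f (r t) + K ^ 2 / r t ^ 3) t)
    (hθ : ∀ t, HasDerivAt θ (K / r t ^ 2) t)
    (hz : ∀ t, HasDerivAt z (w₀ * f (r t) ^ 2) t)
    (hr0 : r 0 = Real.sqrt (x₀ ^ 2 + y₀ ^ 2))
    (hr'0 : r' 0 = L / Real.sqrt (x₀ ^ 2 + y₀ ^ 2))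
    (hθ0 : θ 0 = θ₀) (hz0 : z 0 = z₀)
    (c : ℝ)
    (hc : c = Real.sqrt (u₀ ^ 2 + v₀ ^ 2 + f (Real.sqrt (x₀ ^ 2 + y₀ ^ 2)) ^ 2 * w₀ ^ 2))
    (γ : ℝ → ℝ × ℝ × ℝ)
    (hγ : ∀ t, γ t = (r t * Real.cos (θ t), r t * Real.sin (θ t), z t))
    (T : ℝ) (hTpos : 0 < T)
    (hTeq : (∫ s in (0:ℝ)..T, |K| / r s ^ 2) = Real.pi) :
    (∀ t : ℝ, T < t → dCC f (γ 0) (γ t) < c * t) ∧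
    sSup {t : ℝ | 0 < t ∧ dCC f (γ 0) (γ t) = c * t} ≤ T := by
  -- basic continuity facts
  have hrc : Continuous r := continuous_iff_continuousAt.2 fun s => (hr s).continuousAt
  have hr'c : Continuous r' := continuous_iff_continuousAt.2 fun s => (hr' s).continuousAt
  have hθc : Continuous θ := continuous_iff_continuousAt.2 fun s => (hθ s).continuousAt
  have hrne : ∀ s : ℝ, r s ≠ 0 := fun s => (hrpos s).ne'
  have hfr : ∀ s : ℝ, HasDerivAt f (deriv f (r s)) (r s) := by
    intro s
    have h1 : DifferentiableOn ℝ f (Set.Ioi 0) := hf.smooth.differentiableOn (by norm_num)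
    exact (h1.differentiableAt (Ioi_mem_nhds (hrpos s))).hasDerivAt
  have hfc : Continuous (fun s => f (r s)) := continuous_iff_continuousAt.2 fun s =>
    ((hfr s).differentiableAt.continuousAt).comp hrc.continuousAt
  have hK2 : (0:ℝ) < K ^ 2 := by
    have := abs_pos.2 hKne
    calc (0:ℝ) < |K| ^ 2 := by positivity
    _ = K ^ 2 := sq_abs K
  -- c is positive
  have huv : 0 < u₀ ^ 2 + v₀ ^ 2 := by
    rcases lt_or_eq_of_le (by positivity : (0:ℝ) ≤ u₀ ^ 2 + v₀ ^ 2) with h | h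
    · exact h
    · exfalso
      have hu : u₀ = 0 := by nlinarith [sq_nonneg u₀, sq_nonneg v₀]
      have hv : v₀ = 0 := by nlinarith [sq_nonneg u₀, sq_nonneg v₀]
      exact hKne (by rw [hK, hu, hv]; ring)
  have hcpos : 0 < c := by
    rw [hc]
    apply Real.sqrt_pos.2
    nlinarith [sq_nonneg (f (Real.sqrt (x₀ ^ 2 + y₀ ^ 2)) * w₀)]
  have hr₀pos : 0 < Real.sqrt (x₀ ^ 2 + y₀ ^ 2) := Real.sqrt_pos.2 hq
  have hc2 : c ^ 2 = u₀ ^ 2 + v₀ ^ 2 + f (Real.sqrt (x₀ ^ 2 + y₀ ^ 2)) ^ 2 * w₀ ^ 2 := by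
    rw [hc, Real.sq_sqrt]
    nlinarith [sq_nonneg (f (Real.sqrt (x₀ ^ 2 + y₀ ^ 2)) * w₀)]
  -- energy conservation
  have hEderiv : ∀ s : ℝ, HasDerivAt
      (fun τ => r' τ ^ 2 + K ^ 2 / r τ ^ 2 + w₀ ^ 2 * f (r τ) ^ 2) 0 s := by
    intro s
    have h1 : HasDerivAt (fun τ => r' τ ^ 2)
        ((2:ℕ) * r' s ^ 1 * (-(w₀ ^ 2) * f (r s) * deriv f (r s) + K ^ 2 / r s ^ 3)) s :=
      (hr' s).pow 2
    have h2 : HasDerivAt (fun τ => K ^ 2 / r τ ^ 2)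
        ((0 * r s ^ 2 - K ^ 2 * ((2:ℕ) * r s ^ 1 * r' s)) / (r s ^ 2) ^ 2) s :=
      (hasDerivAt_const s (K ^ 2)).div ((hr s).pow 2) (pow_ne_zero 2 (hrne s))
    have h3' : HasDerivAt (fun τ => f (r τ)) (deriv f (r s) * r' s) s :=
      (hfr s).comp s (hr s)
    have h3 : HasDerivAt (fun τ => w₀ ^ 2 * f (r τ) ^ 2)
        (w₀ ^ 2 * ((2:ℕ) * f (r s) ^ 1 * (deriv f (r s) * r' s))) s :=
      (h3'.pow 2).const_mul (w₀ ^ 2)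
    have := (h1.add h2).add h3
    refine this.congr_deriv ?_
    have hrne' := hrne s
    field_simp
    ring
  have hE : ∀ s : ℝ, r' s ^ 2 + K ^ 2 / r s ^ 2 + w₀ ^ 2 * f (r s) ^ 2 = c ^ 2 := by
    have hconst := is_const_of_deriv_eq_zero
      (f := fun τ => r' τ ^ 2 + K ^ 2 / r τ ^ 2 + w₀ ^ 2 * f (r τ) ^ 2)
      (fun x => (hEderiv x).differentiableAt) (fun x => (hEderiv x).deriv)
    intro s
    have h0 : r' 0 ^ 2 + K ^ 2 / r 0 ^ 2 + w₀ ^ 2 * f (r 0) ^ 2 = c ^ 2 := by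
      rw [hr0, hr'0, hc2]
      set R : ℝ := Real.sqrt (x₀ ^ 2 + y₀ ^ 2) with hRdef
      have h1 : R ^ 2 = x₀ ^ 2 + y₀ ^ 2 := Real.sq_sqrt hq.le
      have hRne : R ^ 2 ≠ 0 := by positivity
      have h2 : L ^ 2 + K ^ 2 = R ^ 2 * (u₀ ^ 2 + v₀ ^ 2) := by
        rw [h1, hK, hL]; ring
      rw [div_pow, ← add_div, h2, mul_div_cancel_left₀ _ hRne]
      ring
    calc r' s ^ 2 + K ^ 2 / r s ^ 2 + w₀ ^ 2 * f (r s) ^ 2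
        = r' 0 ^ 2 + K ^ 2 / r 0 ^ 2 + w₀ ^ 2 * f (r 0) ^ 2 := hconst s 0
      _ = c ^ 2 := h0
  -- main claim
  have main : ∀ t : ℝ, T < t → dCC f (γ 0) (γ t) < c * t := by
    intro t ht
    have ht0 : 0 < t := lt_trans hTpos ht
    -- the swept angle exceeds π in absolute value
    have hKrc : Continuous (fun s => K / r s ^ 2) :=
      continuous_const.div (hrc.pow 2) fun s => pow_ne_zero 2 (hrne s)
    have hKrac : Continuous (fun s => |K| / r s ^ 2) :=
      continuous_const.div (hrc.pow 2) fun s => pow_ne_zero 2 (hrne s)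
    have hFTC : ∫ s in (0:ℝ)..t, K / r s ^ 2 = θ t - θ 0 :=
      intervalIntegral.integral_eq_sub_of_hasDerivAt (fun s _ => hθ s)
        (hKrc.intervalIntegrable 0 t)
    have hsplit : (∫ s in (0:ℝ)..T, |K| / r s ^ 2) + ∫ s in T..t, |K| / r s ^ 2
        = ∫ s in (0:ℝ)..t, |K| / r s ^ 2 :=
      intervalIntegral.integral_add_adjacent_intervals (hKrac.intervalIntegrable 0 T)
        (hKrac.intervalIntegrable T t)
    have hpos2 : 0 < ∫ s in T..t, |K| / r s ^ 2 :=
      intervalIntegral.intervalIntegral_pos_of_pos_on (hKrac.intervalIntegrable T t)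
        (fun x _ => div_pos (abs_pos.2 hKne) (pow_pos (hrpos x) 2)) ht
    have habs : Real.pi < ∫ s in (0:ℝ)..t, |K| / r s ^ 2 := by
      rw [← hsplit, hTeq]; linarith
    set D : ℝ := θ t - θ 0 with hDdef
    have hDabs : Real.pi < |D| := by
      rcases lt_or_gt_of_ne hKne with hKneg | hKpos
      · have heq : ∀ s : ℝ, |K| / r s ^ 2 = -(K / r s ^ 2) := by
          intro s; rw [abs_of_neg hKneg]; ring
        have : (∫ s in (0:ℝ)..t, |K| / r s ^ 2) = -D := by
          rw [← hFTC, ← intervalIntegral.integral_neg]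
          exact intervalIntegral.integral_congr fun s _ => heq s
        rw [this] at habs
        calc Real.pi < -D := habs
          _ ≤ |D| := neg_le_abs D
      · have heq : ∀ s : ℝ, |K| / r s ^ 2 = K / r s ^ 2 := by
          intro s; rw [abs_of_pos hKpos]
        have : (∫ s in (0:ℝ)..t, |K| / r s ^ 2) = D := by
          rw [← hFTC]; exact intervalIntegral.integral_congr fun s _ => heq s
        rw [this] at habs
        calc Real.pi < D := habs
          _ ≤ |D| := le_abs_self D
    have hDne : D ≠ 0 := by
      intro h; rw [h] at hDabs; simp at hDabs; linarith [Real.pi_pos]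
    set ε : ℝ := if 0 < D then 2 * Real.pi else -(2 * Real.pi) with hεdef
    set l : ℝ := (D - ε) / D with hldef
    have hlD : l * D = D - ε := div_mul_cancel₀ _ hDne
    have hDεabs : |D - ε| < |D| := by
      by_cases hD : 0 < D
      · have hε : ε = 2 * Real.pi := if_pos hD
        have hDgt : Real.pi < D := by rwa [abs_of_pos hD] at hDabs
        rw [hε, abs_of_pos hD]
        rw [abs_lt]
        constructor <;> linarith [Real.pi_pos]
      · have hDlt : D < 0 := lt_of_le_of_ne (not_lt.1 hD) hDne
        have hε : ε = -(2 * Real.pi) := if_neg hD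
        have hDgt : Real.pi < -D := by rwa [abs_of_neg hDlt] at hDabs
        rw [hε, abs_of_neg hDlt, abs_lt]
        constructor <;> linarith [Real.pi_pos]
    have hl2 : l ^ 2 < 1 := by
      have h1 : |l| < 1 := by
        rw [hldef, abs_div]
        exact div_lt_one (abs_pos.2 hDne) |>.2 hDεabs
      nlinarith [abs_nonneg l, sq_abs l]
    -- the competitor curve
    set θh : ℝ → ℝ := fun s => θ₀ + l * (θ s - θ₀) with hθhdef
    have hθhc : Continuous θh := by
      apply continuous_const.add (continuous_const.mul (hθc.sub continuous_const))
    have hθhderiv : ∀ s : ℝ, HasDerivAt θh (l * (K / r s ^ 2)) s := fun s =>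
      (((hθ s).sub_const θ₀).const_mul l).const_add θ₀
    set uu : ℝ → ℝ × ℝ × ℝ := fun s =>
      (r' s * Real.cos (θh s) + r s * (-Real.sin (θh s) * (l * (K / r s ^ 2))),
       r' s * Real.sin (θh s) + r s * (Real.cos (θh s) * (l * (K / r s ^ 2))),
       w₀ * f (r s)) with huudef
    set γh : ℝ → ℝ × ℝ × ℝ := fun s =>
      (r s * Real.cos (θh s), r s * Real.sin (θh s), z s) with hγhdef
    have hxderiv : ∀ s : ℝ, HasDerivAt (fun τ => r τ * Real.cos (θh τ)) ((uu s).1) s :=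
      fun s => (hr s).mul ((hθhderiv s).cos)
    have hyderiv : ∀ s : ℝ, HasDerivAt (fun τ => r τ * Real.sin (θh τ)) ((uu s).2.1) s :=
      fun s => (hr s).mul ((hθhderiv s).sin)
    have hcosθhc : Continuous fun s => Real.cos (θh s) := Real.continuous_cos.comp hθhc
    have hsinθhc : Continuous fun s => Real.sin (θh s) := Real.continuous_sin.comp hθhc
    have hωc : Continuous fun s => l * (K / r s ^ 2) := continuous_const.mul hKrc
    have hu1c : Continuous fun s => (uu s).1 := by
      simp only [huudef]
      exact (hr'c.mul hcosθhc).add (hrc.mul ((hsinθhc.neg).mul hωc))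
    have hu2c : Continuous fun s => (uu s).2.1 := by
      simp only [huudef]
      exact (hr'c.mul hsinθhc).add (hrc.mul (hcosθhc.mul hωc))
    have hu3c : Continuous fun s => (uu s).2.2 := by
      simp only [huudef]
      exact continuous_const.mul hfc
    have huuc : Continuous uu := hu1c.prodMk (hu2c.prodMk hu3c)
    have hctrlc : Continuous fun s => ctrlNorm (uu s) := by
      have : Continuous ctrlNorm := by
        unfold ctrlNorm; fun_prop
      exact this.comp huuc
    -- pointwise norm bound
    have hnormsq : ∀ s : ℝ, (uu s).1 ^ 2 + (uu s).2.1 ^ 2 + (uu s).2.2 ^ 2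
        = c ^ 2 - (1 - l ^ 2) * (K ^ 2 / r s ^ 2) := by
      intro s
      have hcs := Real.sin_sq_add_cos_sq (θh s)
      have hrne' := hrne s
      have hB : (r s * (l * (K / r s ^ 2))) ^ 2 = l ^ 2 * (K ^ 2 / r s ^ 2) := by
        field_simp
      have h1 : (uu s).1 ^ 2 + (uu s).2.1 ^ 2 + (uu s).2.2 ^ 2
          = r' s ^ 2 + l ^ 2 * (K ^ 2 / r s ^ 2) + w₀ ^ 2 * f (r s) ^ 2 := by
        simp only [huudef]
        linear_combination (r' s ^ 2 + (r s * (l * (K / r s ^ 2))) ^ 2) * hcs + hB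
      rw [h1]
      have := hE s
      linarith [hE s]
    have hnorm : ∀ s : ℝ, ctrlNorm (uu s) < c := by
      intro s
      rw [ctrlNorm, Real.sqrt_lt' hcpos, hnormsq s]
      have h2 : 0 < (1 - l ^ 2) * (K ^ 2 / r s ^ 2) :=
        mul_pos (by linarith) (div_pos hK2 (pow_pos (hrpos s) 2))
      linarith
    -- length strictly less than c * t
    have hlen : pairLength t uu < c * t := by
      have hint1 : IntervalIntegrable (fun s => ctrlNorm (uu s)) MeasureTheory.volume 0 t :=
        hctrlc.intervalIntegrable 0 t
      have hpos : 0 < ∫ s in (0:ℝ)..t, (c - ctrlNorm (uu s)) :=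
        intervalIntegral.intervalIntegral_pos_of_pos_on
          ((continuous_const.sub hctrlc).intervalIntegrable 0 t)
          (fun x _ => sub_pos.2 (hnorm x)) ht0
      rw [intervalIntegral.integral_sub (intervalIntegrable_const) hint1,
        intervalIntegral.integral_const] at hpos
      simp only [sub_zero, smul_eq_mul] at hpos
      rw [pairLength]
      linarith
    -- admissibility
    have hradγh : ∀ s : ℝ, rad (γh s) = r s := by
      intro s
      simp only [hγhdef]
      exact rad_cyl (r s) (z s) (θh s) (hrpos s).le
    have hadm : IsAdmissiblePair f t γh uu := by
      refine ⟨ht0.le, huuc.aestronglyMeasurable, (hctrlc.pow 2).integrableOn_Icc, ?_, ?_, ?_⟩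
      · intro s hs
        have h1 := intervalIntegral.integral_eq_sub_of_hasDerivAt
          (f := fun τ => r τ * Real.cos (θh τ)) (f' := fun τ => (uu τ).1)
          (fun τ _ => hxderiv τ) (hu1c.intervalIntegrable 0 s)
        show (γh s).1 = (γh 0).1 + ∫ σ in (0:ℝ)..s, (uu σ).1
        rw [h1]
        simp only [hγhdef]
        ring
      · intro s hs
        have h1 := intervalIntegral.integral_eq_sub_of_hasDerivAt
          (f := fun τ => r τ * Real.sin (θh τ)) (f' := fun τ => (uu τ).2.1)
          (fun τ _ => hyderiv τ) (hu2c.intervalIntegrable 0 s)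
        show (γh s).2.1 = (γh 0).2.1 + ∫ σ in (0:ℝ)..s, (uu σ).2.1
        rw [h1]
        simp only [hγhdef]
        ring
      · intro s hs
        have hcongr : (∫ σ in (0:ℝ)..s, (uu σ).2.2 * f (rad (γh σ)))
            = ∫ σ in (0:ℝ)..s, w₀ * f (r σ) ^ 2 := by
          apply intervalIntegral.integral_congr
          intro σ _
          simp only [huudef, hradγh σ]
          ring
        have hFTCz := intervalIntegral.integral_eq_sub_of_hasDerivAt
          (f := z) (f' := fun τ => w₀ * f (r τ) ^ 2)
          (fun τ _ => hz τ) ((continuous_const.mul (hfc.pow 2)).intervalIntegrable 0 s)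
        show (γh s).2.2 = (γh 0).2.2 + ∫ σ in (0:ℝ)..s, (uu σ).2.2 * f (rad (γh σ))
        rw [hcongr, hFTCz]
        simp only [hγhdef]
        ring
    -- endpoints
    have hstart : γh 0 = γ 0 := by
      rw [hγ 0]
      simp only [hγhdef, hθhdef, hθ0]
      norm_num
    have hendθ : θh t = θ t - ε := by
      simp only [hθhdef]
      have : l * (θ t - θ₀) = D - ε := by rw [← hlD, hDdef, hθ0]
      linarith [this]
    have hend : γh t = γ t := by
      rw [hγ t]
      simp only [hγhdef]
      have hcos : Real.cos (θh t) = Real.cos (θ t) := by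
        rw [hendθ]
        by_cases hD : 0 < D
        · rw [hεdef, if_pos hD]; exact Real.cos_sub_two_pi (θ t)
        · rw [hεdef, if_neg hD, sub_neg_eq_add]; exact Real.cos_add_two_pi (θ t)
      have hsin : Real.sin (θh t) = Real.sin (θ t) := by
        rw [hendθ]
        by_cases hD : 0 < D
        · rw [hεdef, if_pos hD]; exact Real.sin_sub_two_pi (θ t)
        · rw [hεdef, if_neg hD, sub_neg_eq_add]; exact Real.sin_add_two_pi (θ t)
      rw [hcos, hsin]
    -- conclude via the infimum
    have hmem : pairLength t uu ∈
        {L : ℝ | ∃ T γ' u, IsAdmissiblePair f T γ' u ∧ γ' 0 = γ 0 ∧ γ' T = γ t ∧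
          L = pairLength T u} := ⟨t, γh, uu, hadm, hstart, hend, rfl⟩
    have hbdd : BddBelow {L : ℝ | ∃ T γ' u, IsAdmissiblePair f T γ' u ∧ γ' 0 = γ 0 ∧
        γ' T = γ t ∧ L = pairLength T u} := by
      refine ⟨0, ?_⟩
      rintro L ⟨T', γ', u', hadm', -, -, rfl⟩
      exact intervalIntegral.integral_nonneg hadm'.hT fun x _ => Real.sqrt_nonneg _
    calc dCC f (γ 0) (γ t) ≤ pairLength t uu := csInf_le hbdd hmem
      _ < c * t := hlen
  refine ⟨main, ?_⟩
  apply Real.sSup_le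
  · rintro x ⟨hx0, hxeq⟩
    by_contra hxT
    push_neg at hxT
    exact absurd hxeq (ne_of_lt (main x hxT))
  · exact hTpos.le
end
end

section
/- Let γ be the unit-speed straight-line geodesic from q₀=(x₀,y₀,z₀) with initial covector λ₀=(u₀,v₀,0), so γ(t)=(x₀+u₀t, y₀+v₀t, z₀). If v₀≠0, the Jacobian determinant of the exponential map in the coordinates (t,u₀,w₀) equals −(t/v₀)·∫₀^t f(r(s;u₀,v₀,0))² ds, and if u₀≠0, the Jacobian determinant in the coordinates (t,v₀,w₀) equals (t/u₀)·∫₀^t f(r(s;u₀,v₀,0))² ds. In particular these determinants are nonzero for all t>0, so the straight-line geodesics have no conjugate points. -/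
noncomputable section

/-- `γ` is a normal geodesic with initial covector `λ₀ = (u₀,v₀,w₀)`, i.e. the projection
of a solution of the Hamiltonian system of `H_f`; `φ` is the continuous extension of
`f(r)f'(r)/r`. -/
def IsNormalGeodesic (f φ : ℝ → ℝ) (γ : ℝ → ℝ × ℝ × ℝ) (lam : ℝ × ℝ × ℝ) : Prop :=
  ∃ u v : ℝ → ℝ, u 0 = lam.1 ∧ v 0 = lam.2.1 ∧
    (∀ t, HasDerivAt (fun s => (γ s).1) (u t) t) ∧
    (∀ t, HasDerivAt (fun s => (γ s).2.1) (v t) t) ∧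
    (∀ t, HasDerivAt (fun s => (γ s).2.2) (f (rad (γ t)) ^ 2 * lam.2.2) t) ∧
    (∀ t, HasDerivAt u (-(lam.2.2 ^ 2) * φ (rad (γ t)) * (γ t).1) t) ∧
    (∀ t, HasDerivAt v (-(lam.2.2 ^ 2) * φ (rad (γ t)) * (γ t).2.1) t)

private lemma affine_of_hasDerivAt_const {g : ℝ → ℝ} {c : ℝ}
    (h : ∀ t, HasDerivAt g c t) (t : ℝ) : g t = g 0 + c * t := by
  have hd : ∀ x : ℝ, HasDerivAt (fun s => g s - c * s) 0 x := by
    intro x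
    exact ((h x).sub ((hasDerivAt_id x).const_mul c)).congr_deriv (by ring)
  have hc := is_const_of_deriv_eq_zero (f := fun s => g s - c * s)
      (fun x => (hd x).differentiableAt) (fun x => (hd x).deriv) t 0
  simp only [mul_zero, sub_zero] at hc
  linarith

private lemma continuous_frad {f : ℝ → ℝ} (hf : MemF f) :
    Continuous fun q : ℝ × ℝ × ℝ => f (rad q) := by
  have hrad : Continuous rad := by
    unfold rad; fun_prop
  exact hf.cont.comp_continuous hrad fun q => Set.mem_Ici.mpr (Real.sqrt_nonneg _)

private lemma plane_eval {f φ : ℝ → ℝ} {E : ℝ × ℝ × ℝ → ℝ × ℝ × ℝ} {x₀ y₀ z₀ : ℝ}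
    (hE0 : E 0 = (x₀, y₀, z₀))
    (hgeo : ∀ lam : ℝ × ℝ × ℝ, IsNormalGeodesic f φ (fun t => E (t • lam)) lam)
    (x y : ℝ) : E (x, y, 0) = (x₀ + x, y₀ + y, z₀) := by
  obtain ⟨u, v, hu0, hv0, hdx, hdy, hdz, hdu, hdv⟩ := hgeo (x, y, 0)
  have hu : ∀ t, u t = x := by
    intro t
    have h0 : ∀ s : ℝ, HasDerivAt u 0 s := by
      intro s; simpa using hdu s
    simpa [hu0] using affine_of_hasDerivAt_const h0 t
  have hv : ∀ t, v t = y := by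
    intro t
    have h0 : ∀ s : ℝ, HasDerivAt v 0 s := by
      intro s; simpa using hdv s
    simpa [hv0] using affine_of_hasDerivAt_const h0 t
  have hx : (E ((1:ℝ) • ((x, y, 0) : ℝ × ℝ × ℝ))).1 = x₀ + x := by
    have h1 : ∀ s : ℝ, HasDerivAt (fun s : ℝ => (E (s • ((x, y, 0) : ℝ × ℝ × ℝ))).1) x s := by
      intro s; have := hdx s; rwa [hu s] at this
    simpa [hE0] using affine_of_hasDerivAt_const h1 1
  have hy : (E ((1:ℝ) • ((x, y, 0) : ℝ × ℝ × ℝ))).2.1 = y₀ + y := by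
    have h1 : ∀ s : ℝ, HasDerivAt (fun s : ℝ => (E (s • ((x, y, 0) : ℝ × ℝ × ℝ))).2.1) y s := by
      intro s; have := hdy s; rwa [hv s] at this
    simpa [hE0] using affine_of_hasDerivAt_const h1 1
  have hz : (E ((1:ℝ) • ((x, y, 0) : ℝ × ℝ × ℝ))).2.2 = z₀ := by
    have h1 : ∀ s : ℝ, HasDerivAt (fun s : ℝ => (E (s • ((x, y, 0) : ℝ × ℝ × ℝ))).2.2) 0 s := by
      intro s; simpa using hdz s
    simpa [hE0] using affine_of_hasDerivAt_const h1 1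
  rw [one_smul] at hx hy hz
  exact Prod.ext hx (Prod.ext hy hz)

private lemma hasDerivAt_third {f φ : ℝ → ℝ} (hf : MemF f)
    {E : ℝ × ℝ × ℝ → ℝ × ℝ × ℝ} {x₀ y₀ z₀ : ℝ}
    (hsm : ContDiff ℝ 1 E) (hE0 : E 0 = (x₀, y₀, z₀))
    (hgeo : ∀ lam : ℝ × ℝ × ℝ, IsNormalGeodesic f φ (fun t => E (t • lam)) lam)
    (u₀ v₀ t : ℝ) :
    HasDerivAt (fun w => (E (t * u₀, t * v₀, t * w)).2.2)
      (∫ s in (0:ℝ)..t, f (Real.sqrt ((x₀ + u₀ * s) ^ 2 + (y₀ + v₀ * s) ^ 2)) ^ 2) 0 := by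
  have hplane := plane_eval hE0 hgeo
  set G : ℝ → ℝ := fun w => ∫ s in (0:ℝ)..t, f (rad (E (s * u₀, s * v₀, s * w))) ^ 2 with hGdef
  have hGcont : Continuous G := by
    apply intervalIntegral.continuous_parametric_intervalIntegral_of_continuous'
      (f := fun w s => f (rad (E (s * u₀, s * v₀, s * w))) ^ 2) ?_ 0 t
    have h1 : Continuous fun p : ℝ × ℝ => E (p.2 * u₀, p.2 * v₀, p.2 * p.1) := by
      apply hsm.continuous.comp; fun_prop
    exact ((continuous_frad hf).comp h1).pow 2
  have hval : ∀ w, (E (t * u₀, t * v₀, t * w)).2.2 = z₀ + G w * w := by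
    intro w
    obtain ⟨u, v, _, _, _, _, hdz, _, _⟩ := hgeo (u₀, v₀, w)
    have hcont : Continuous fun s : ℝ =>
        f (rad (E (s • ((u₀, v₀, w) : ℝ × ℝ × ℝ)))) ^ 2 * w := by
      have h1 : Continuous fun s : ℝ => E (s • ((u₀, v₀, w) : ℝ × ℝ × ℝ)) := by
        apply hsm.continuous.comp; fun_prop
      exact (((continuous_frad hf).comp h1).pow 2).mul continuous_const
    have hFTC := intervalIntegral.integral_eq_sub_of_hasDerivAt (a := 0) (b := t)
      (f := fun s : ℝ => (E (s • ((u₀, v₀, w) : ℝ × ℝ × ℝ))).2.2)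
      (f' := fun s : ℝ => f (rad (E (s • ((u₀, v₀, w) : ℝ × ℝ × ℝ)))) ^ 2 * w)
      (fun s _ => hdz s) (hcont.intervalIntegrable 0 t)
    simp only [Prod.smul_mk, smul_eq_mul, zero_smul, mul_zero, hE0] at hFTC
    rw [intervalIntegral.integral_mul_const] at hFTC
    rw [hGdef]
    simp only []
    linarith [hFTC]
  have hG0 : G 0 = ∫ s in (0:ℝ)..t,
      f (Real.sqrt ((x₀ + u₀ * s) ^ 2 + (y₀ + v₀ * s) ^ 2)) ^ 2 := by
    rw [hGdef]
    simp only []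
    have heq : (fun s : ℝ => f (rad (E (s * u₀, s * v₀, s * 0))) ^ 2)
        = fun s : ℝ => f (Real.sqrt ((x₀ + u₀ * s) ^ 2 + (y₀ + v₀ * s) ^ 2)) ^ 2 := by
      funext s
      rw [mul_zero, hplane (s * u₀) (s * v₀)]
      simp only [rad]
      rw [mul_comm s u₀, mul_comm s v₀]
    rw [heq]
  rw [← hG0]
  rw [hasDerivAt_iff_tendsto_slope]
  have h1 : Filter.Tendsto G (nhdsWithin 0 {(0:ℝ)}ᶜ) (nhds (G 0)) :=
    (hGcont.continuousAt.tendsto).mono_left nhdsWithin_le_nhds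
  apply h1.congr'
  filter_upwards [self_mem_nhdsWithin] with w hw
  have hw' : w ≠ 0 := hw
  rw [slope_def_field, hval w, hval 0]
  field_simp
  ring

/-- The Jacobian determinant of a three–parameter family `F(t,a,b)` of points of `ℝ³`,
computed from partial derivatives. -/
def jac3 (F : ℝ → ℝ → ℝ → ℝ × ℝ × ℝ) (t a b : ℝ) : ℝ :=
  Matrix.det
    !![deriv (fun τ => (F τ a b).1) t, deriv (fun x => (F t x b).1) a,
         deriv (fun x => (F t a x).1) b;
       deriv (fun τ => (F τ a b).2.1) t, deriv (fun x => (F t x b).2.1) a,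
         deriv (fun x => (F t a x).2.1) b;
       deriv (fun τ => (F τ a b).2.2) t, deriv (fun x => (F t x b).2.2) a,
         deriv (fun x => (F t a x).2.2) b]

private lemma chart_det {E : ℝ × ℝ × ℝ → ℝ × ℝ × ℝ} (hE : Differentiable ℝ E)
    {x₀ y₀ z₀ u₀ v₀ : ℝ} (hunit : u₀ ^ 2 + v₀ ^ 2 = 1) (hv : v₀ ≠ 0)
    (hplane : ∀ x y : ℝ, E (x, y, 0) = (x₀ + x, y₀ + y, z₀))
    (σ c : ℝ) (hσ : σ * Real.sqrt (1 - u₀ ^ 2) = v₀)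
    (t I : ℝ)
    (hI : HasDerivAt (fun w => (E (t * u₀, t * v₀, t * w)).2.2) I 0) :
    jac3 (fun τ a b => E (τ * a, τ * (σ * Real.sqrt (1 - a ^ 2 - c * b ^ 2)), τ * b)) t u₀ 0
      = -(t / v₀) * I := by
  have hv2 : (0:ℝ) < v₀ ^ 2 := by positivity
  have h1u : 1 - u₀ ^ 2 = v₀ ^ 2 := by linarith
  have habs : Real.sqrt (1 - u₀ ^ 2) = |v₀| := by rw [h1u, Real.sqrt_sq_eq_abs]
  have habs0 : |v₀| ≠ 0 := abs_ne_zero.mpr hv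
  have hσ' : σ * |v₀| = v₀ := by rwa [habs] at hσ
  -- column 1
  have hc1 : (fun τ : ℝ => E (τ * u₀, τ * (σ * Real.sqrt (1 - u₀ ^ 2 - c * 0 ^ 2)), τ * 0))
      = fun τ => (x₀ + τ * u₀, y₀ + τ * v₀, z₀) := by
    funext τ
    rw [show (1 - u₀ ^ 2 - c * 0 ^ 2 : ℝ) = 1 - u₀ ^ 2 by ring, hσ, mul_zero]
    exact hplane _ _
  have e11 : deriv (fun τ : ℝ =>
      (E (τ * u₀, τ * (σ * Real.sqrt (1 - u₀ ^ 2 - c * 0 ^ 2)), τ * 0)).1) t = u₀ := by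
    have h : (fun τ : ℝ =>
        (E (τ * u₀, τ * (σ * Real.sqrt (1 - u₀ ^ 2 - c * 0 ^ 2)), τ * 0)).1)
        = fun τ => x₀ + τ * u₀ := by
      funext τ; rw [congrFun hc1 τ]
    rw [h]
    simpa using (((hasDerivAt_id t).mul_const u₀).const_add x₀).deriv
  have e21 : deriv (fun τ : ℝ =>
      (E (τ * u₀, τ * (σ * Real.sqrt (1 - u₀ ^ 2 - c * 0 ^ 2)), τ * 0)).2.1) t = v₀ := by
    have h : (fun τ : ℝ =>
        (E (τ * u₀, τ * (σ * Real.sqrt (1 - u₀ ^ 2 - c * 0 ^ 2)), τ * 0)).2.1)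
        = fun τ => y₀ + τ * v₀ := by
      funext τ; rw [congrFun hc1 τ]
    rw [h]
    simpa using (((hasDerivAt_id t).mul_const v₀).const_add y₀).deriv
  have e31 : deriv (fun τ : ℝ =>
      (E (τ * u₀, τ * (σ * Real.sqrt (1 - u₀ ^ 2 - c * 0 ^ 2)), τ * 0)).2.2) t = 0 := by
    have h : (fun τ : ℝ =>
        (E (τ * u₀, τ * (σ * Real.sqrt (1 - u₀ ^ 2 - c * 0 ^ 2)), τ * 0)).2.2)
        = fun _ => z₀ := by
      funext τ; rw [congrFun hc1 τ]
    rw [h, deriv_const]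
  -- column 2
  have hc2 : (fun x : ℝ => E (t * x, t * (σ * Real.sqrt (1 - x ^ 2 - c * 0 ^ 2)), t * 0))
      = fun x => (x₀ + t * x, y₀ + t * (σ * Real.sqrt (1 - x ^ 2)), z₀) := by
    funext x
    rw [show (1 - x ^ 2 - c * 0 ^ 2 : ℝ) = 1 - x ^ 2 by ring, mul_zero]
    exact hplane _ _
  have e12 : deriv (fun x : ℝ =>
      (E (t * x, t * (σ * Real.sqrt (1 - x ^ 2 - c * 0 ^ 2)), t * 0)).1) u₀ = t := by
    have h : (fun x : ℝ =>
        (E (t * x, t * (σ * Real.sqrt (1 - x ^ 2 - c * 0 ^ 2)), t * 0)).1)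
        = fun x => x₀ + t * x := by
      funext x; rw [congrFun hc2 x]
    rw [h]
    simpa using (((hasDerivAt_id u₀).const_mul t).const_add x₀).deriv
  have hinner : HasDerivAt (fun x : ℝ => 1 - x ^ 2) (-(2 * u₀)) u₀ := by
    simpa using (hasDerivAt_pow 2 u₀).const_sub 1
  have hne : (1 : ℝ) - u₀ ^ 2 ≠ 0 := by rw [h1u]; positivity
  have hsqrt : HasDerivAt (fun x : ℝ => Real.sqrt (1 - x ^ 2))
      (1 / (2 * Real.sqrt (1 - u₀ ^ 2)) * -(2 * u₀)) u₀ :=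
    (Real.hasDerivAt_sqrt hne).comp u₀ hinner
  have e22 : deriv (fun x : ℝ =>
      (E (t * x, t * (σ * Real.sqrt (1 - x ^ 2 - c * 0 ^ 2)), t * 0)).2.1) u₀
      = -(t * u₀ / v₀) := by
    have h : (fun x : ℝ =>
        (E (t * x, t * (σ * Real.sqrt (1 - x ^ 2 - c * 0 ^ 2)), t * 0)).2.1)
        = fun x => y₀ + t * (σ * Real.sqrt (1 - x ^ 2)) := by
      funext x; rw [congrFun hc2 x]
    rw [h, (((hsqrt.const_mul σ).const_mul t).const_add y₀).deriv, habs]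
    have hσ2 : σ ^ 2 = 1 := by
      have h2 : (σ * |v₀|) ^ 2 = v₀ ^ 2 := by rw [hσ']
      rw [mul_pow, sq_abs] at h2
      nlinarith [h2, hv2]
    field_simp
    linear_combination (t * u₀ * σ) * hσ' + (-(t * u₀ * |v₀|)) * hσ2
  have e32 : deriv (fun x : ℝ =>
      (E (t * x, t * (σ * Real.sqrt (1 - x ^ 2 - c * 0 ^ 2)), t * 0)).2.2) u₀ = 0 := by
    have h : (fun x : ℝ =>
        (E (t * x, t * (σ * Real.sqrt (1 - x ^ 2 - c * 0 ^ 2)), t * 0)).2.2)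
        = fun _ => z₀ := by
      funext x; rw [congrFun hc2 x]
    rw [h, deriv_const]
  -- column 3, entry (3,3)
  have hjinner : HasDerivAt (fun x : ℝ => 1 - u₀ ^ 2 - c * x ^ 2) 0 0 := by
    simpa using ((hasDerivAt_pow 2 (0:ℝ)).const_mul c).const_sub (1 - u₀ ^ 2)
  have hne0 : (1 - u₀ ^ 2 - c * 0 ^ 2 : ℝ) ≠ 0 := by
    rw [show (1 - u₀ ^ 2 - c * 0 ^ 2 : ℝ) = 1 - u₀ ^ 2 by ring]; exact hne
  have hy0 : HasDerivAt (fun x : ℝ =>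
      t * (σ * Real.sqrt (1 - u₀ ^ 2 - c * x ^ 2))) 0 0 := by
    have := (((Real.hasDerivAt_sqrt hne0).comp 0 hjinner).const_mul σ).const_mul t
    simpa using this
  have hκ : HasDerivAt (fun x : ℝ =>
      ((t * u₀, t * (σ * Real.sqrt (1 - u₀ ^ 2 - c * x ^ 2)), t * x) : ℝ × ℝ × ℝ))
      ((0:ℝ), (0:ℝ), t) 0 := by
    refine HasDerivAt.prodMk (hasDerivAt_const (0:ℝ) (t * u₀)) (hy0.prodMk ?_)
    simpa using (hasDerivAt_id (0:ℝ)).const_mul t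
  have hκ0 : ((t * u₀, t * (σ * Real.sqrt (1 - u₀ ^ 2 - c * 0 ^ 2)), t * 0) : ℝ × ℝ × ℝ)
      = (t * u₀, t * v₀, 0) := by
    rw [show (1 - u₀ ^ 2 - c * 0 ^ 2 : ℝ) = 1 - u₀ ^ 2 by ring, hσ, mul_zero]
  have hdiff : DifferentiableAt ℝ (fun q : ℝ × ℝ × ℝ => (E q).2.2)
      ((t * u₀, t * v₀, 0) : ℝ × ℝ × ℝ) := ((hE _).snd).snd
  have hD : HasDerivAt (fun x : ℝ =>
      (E (t * u₀, t * (σ * Real.sqrt (1 - u₀ ^ 2 - c * x ^ 2)), t * x)).2.2)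
      ((fderiv ℝ (fun q : ℝ × ℝ × ℝ => (E q).2.2) ((t * u₀, t * v₀, 0) : ℝ × ℝ × ℝ))
        ((0:ℝ), (0:ℝ), t)) 0 := by
    have hF : HasFDerivAt (fun q : ℝ × ℝ × ℝ => (E q).2.2)
        (fderiv ℝ (fun q : ℝ × ℝ × ℝ => (E q).2.2) ((t * u₀, t * v₀, 0) : ℝ × ℝ × ℝ))
        (((fun x : ℝ => ((t * u₀, t * (σ * Real.sqrt (1 - u₀ ^ 2 - c * x ^ 2)), t * x)
          : ℝ × ℝ × ℝ)) 0)) := by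
      rw [show ((fun x : ℝ => ((t * u₀, t * (σ * Real.sqrt (1 - u₀ ^ 2 - c * x ^ 2)), t * x)
          : ℝ × ℝ × ℝ)) 0) = ((t * u₀, t * v₀, 0) : ℝ × ℝ × ℝ) from hκ0]
      exact hdiff.hasFDerivAt
    exact hF.comp_hasDerivAt 0 hκ
  have hival : (fderiv ℝ (fun q : ℝ × ℝ × ℝ => (E q).2.2)
      ((t * u₀, t * v₀, 0) : ℝ × ℝ × ℝ)) ((0:ℝ), (0:ℝ), t) = I := by
    have hι : HasDerivAt (fun w : ℝ => ((t * u₀, t * v₀, t * w) : ℝ × ℝ × ℝ))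
        ((0:ℝ), (0:ℝ), t) 0 := by
      refine HasDerivAt.prodMk (hasDerivAt_const (0:ℝ) (t * u₀)) (HasDerivAt.prodMk (hasDerivAt_const (0:ℝ) (t * v₀)) ?_)
      simpa using (hasDerivAt_id (0:ℝ)).const_mul t
    have hF : HasFDerivAt (fun q : ℝ × ℝ × ℝ => (E q).2.2)
        (fderiv ℝ (fun q : ℝ × ℝ × ℝ => (E q).2.2) ((t * u₀, t * v₀, 0) : ℝ × ℝ × ℝ))
        ((fun w : ℝ => ((t * u₀, t * v₀, t * w) : ℝ × ℝ × ℝ)) 0) := by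
      rw [show ((fun w : ℝ => ((t * u₀, t * v₀, t * w) : ℝ × ℝ × ℝ)) 0)
        = ((t * u₀, t * v₀, 0) : ℝ × ℝ × ℝ) by simp]
      exact hdiff.hasFDerivAt
    exact (HasFDerivAt.comp_hasDerivAt (l := fun q : ℝ × ℝ × ℝ => (E q).2.2)
      (f := fun w : ℝ => ((t * u₀, t * v₀, t * w) : ℝ × ℝ × ℝ)) 0 hF hι).unique hI
  have e33 : deriv (fun x : ℝ =>
      (E (t * u₀, t * (σ * Real.sqrt (1 - u₀ ^ 2 - c * x ^ 2)), t * x)).2.2) 0 = I := by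
    rw [hD.deriv, hival]
  simp only [jac3]
  rw [e11, e21, e31, e12, e22, e32, e33]
  rw [Matrix.det_fin_three]
  norm_num [Matrix.cons_val_zero, Matrix.cons_val_one, Matrix.head_cons, Matrix.cons_val_two, Matrix.tail_cons]
  field_simp
  linear_combination (-(t * I)) * hunit

private lemma integral_pos' {f : ℝ → ℝ} (hf : MemF f) {x₀ y₀ u₀ v₀ : ℝ}
    (hunit : u₀ ^ 2 + v₀ ^ 2 = 1) {t : ℝ} (ht : 0 < t) :
    0 < ∫ s in (0:ℝ)..t, f (Real.sqrt ((x₀ + u₀ * s) ^ 2 + (y₀ + v₀ * s) ^ 2)) ^ 2 := by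
  set g : ℝ → ℝ := fun s => f (Real.sqrt ((x₀ + u₀ * s) ^ 2 + (y₀ + v₀ * s) ^ 2)) ^ 2 with hg
  have hgc : Continuous g := by
    have h1 : Continuous fun s : ℝ => Real.sqrt ((x₀ + u₀ * s) ^ 2 + (y₀ + v₀ * s) ^ 2) := by
      fun_prop
    exact ((hf.cont.comp_continuous h1
      (fun s => Set.mem_Ici.mpr (Real.sqrt_nonneg _)))).pow 2
  have hgnn : ∀ s, 0 ≤ g s := fun s => sq_nonneg _
  have hgpos : ∀ s : ℝ, (x₀ + u₀ * s ≠ 0 ∨ y₀ + v₀ * s ≠ 0) → 0 < g s := by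
    intro s hs
    apply pow_pos
    apply hf.pos
    apply Real.sqrt_pos.mpr
    rcases hs with h | h
    · have h2 : 0 < (x₀ + u₀ * s) ^ 2 := by positivity
      nlinarith [sq_nonneg (y₀ + v₀ * s)]
    · have h2 : 0 < (y₀ + v₀ * s) ^ 2 := by positivity
      nlinarith [sq_nonneg (x₀ + u₀ * s)]
  have huniq : ∀ s₁ s₂ : ℝ, x₀ + u₀ * s₁ = 0 → y₀ + v₀ * s₁ = 0 →
      x₀ + u₀ * s₂ = 0 → y₀ + v₀ * s₂ = 0 → s₁ = s₂ := by
    intro s₁ s₂ h1 h2 h3 h4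
    by_contra hne
    have hs : s₁ - s₂ ≠ 0 := sub_ne_zero.mpr hne
    have hu : u₀ = 0 := by
      have : u₀ * (s₁ - s₂) = 0 := by ring_nf; linarith
      rcases mul_eq_zero.mp this with h | h
      · exact h
      · exact absurd h hs
    have hv : v₀ = 0 := by
      have : v₀ * (s₁ - s₂) = 0 := by ring_nf; linarith
      rcases mul_eq_zero.mp this with h | h
      · exact h
      · exact absurd h hs
    rw [hu, hv] at hunit
    norm_num at hunit
  by_cases hex : ∃ s : ℝ, 0 < s ∧ s < t ∧ x₀ + u₀ * s = 0 ∧ y₀ + v₀ * s = 0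
  · obtain ⟨s₀, hs0, hst, hx, hy⟩ := hex
    have hsplit : (∫ s in (0:ℝ)..s₀, g s) + ∫ s in s₀..t, g s = ∫ s in (0:ℝ)..t, g s :=
      intervalIntegral.integral_add_adjacent_intervals
        (hgc.intervalIntegrable _ _) (hgc.intervalIntegrable _ _)
    have h1 : 0 ≤ ∫ s in (0:ℝ)..s₀, g s :=
      intervalIntegral.integral_nonneg hs0.le (fun s _ => hgnn s)
    have h2 : 0 < ∫ s in s₀..t, g s := by
      apply intervalIntegral.intervalIntegral_pos_of_pos_on (hgc.intervalIntegrable _ _) _ hst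
      intro s hs
      apply hgpos
      by_contra hc
      push_neg at hc
      exact absurd (huniq s s₀ hc.1 hc.2 hx hy) (ne_of_gt hs.1)
    linarith
  · push_neg at hex
    apply intervalIntegral.intervalIntegral_pos_of_pos_on (hgc.intervalIntegrable _ _) _ ht
    intro s hs
    apply hgpos
    by_contra hc
    push_neg at hc
    exact (hex s hs.1 hs.2 hc.1) hc.2

/-- along the unit-speed straight-line geodesics (`w₀ = 0`), the
Jacobian determinant of the exponential map in the chart `(t,u₀,w₀)` (for `v₀ ≠ 0`,
where `v = sign(v₀)√(1−u²−f(r₀)²w²)` on the unit shell) equals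
`−(t/v₀)·∫₀ᵗ f(r(s))² ds`, and in the chart `(t,v₀,w₀)` (for `u₀ ≠ 0`) it equals
`(t/u₀)·∫₀ᵗ f(r(s))² ds`; in particular straight-line geodesics have no conjugate
points. -/
theorem straight_line_jacobian_no_conjugate
    (f : ℝ → ℝ) (hf : MemF f)
    (φ : ℝ → ℝ) (hφc : ContinuousOn φ (Set.Ici 0))
    (hφeq : ∀ r : ℝ, 0 < r → φ r = f r * deriv f r / r)
    (x₀ y₀ z₀ : ℝ)
    (E : ℝ × ℝ × ℝ → ℝ × ℝ × ℝ)
    (hsm : ContDiff ℝ 1 E)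
    (hE0 : E 0 = (x₀, y₀, z₀))
    (hgeo : ∀ lam : ℝ × ℝ × ℝ, IsNormalGeodesic f φ (fun t => E (t • lam)) lam)
    (u₀ v₀ : ℝ) (hunit : u₀ ^ 2 + v₀ ^ 2 = 1)
    (r₀ : ℝ) (hr₀ : r₀ = Real.sqrt (x₀ ^ 2 + y₀ ^ 2)) :
    ((v₀ ≠ 0 → ∀ t : ℝ,
      jac3 (fun τ a b => E (τ * a,
          τ * ((if 0 < v₀ then (1:ℝ) else -1) * Real.sqrt (1 - a ^ 2 - f r₀ ^ 2 * b ^ 2)),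
          τ * b)) t u₀ 0
        = -(t / v₀) *
            ∫ s in (0:ℝ)..t, f (Real.sqrt ((x₀ + u₀ * s) ^ 2 + (y₀ + v₀ * s) ^ 2)) ^ 2) ∧
    (u₀ ≠ 0 → ∀ t : ℝ,
      jac3 (fun τ a b => E (
          τ * ((if 0 < u₀ then (1:ℝ) else -1) * Real.sqrt (1 - a ^ 2 - f r₀ ^ 2 * b ^ 2)),
          τ * a, τ * b)) t v₀ 0
        = (t / u₀) *
            ∫ s in (0:ℝ)..t, f (Real.sqrt ((x₀ + u₀ * s) ^ 2 + (y₀ + v₀ * s) ^ 2)) ^ 2)) ∧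
    (∀ t : ℝ, 0 < t →
      (v₀ ≠ 0 →
        jac3 (fun τ a b => E (τ * a,
            τ * ((if 0 < v₀ then (1:ℝ) else -1) * Real.sqrt (1 - a ^ 2 - f r₀ ^ 2 * b ^ 2)),
            τ * b)) t u₀ 0 ≠ 0) ∧
      (u₀ ≠ 0 →
        jac3 (fun τ a b => E (
            τ * ((if 0 < u₀ then (1:ℝ) else -1) * Real.sqrt (1 - a ^ 2 - f r₀ ^ 2 * b ^ 2)),
            τ * a, τ * b)) t v₀ 0 ≠ 0)) := by
  have hE : Differentiable ℝ E := hsm.differentiable (by norm_num)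
  have hplane : ∀ x y : ℝ, E (x, y, 0) = (x₀ + x, y₀ + y, z₀) := plane_eval hE0 hgeo
  have hkey := hasDerivAt_third hf hsm hE0 hgeo u₀ v₀
  have chart1 : ∀ (hv : v₀ ≠ 0) (t : ℝ),
      jac3 (fun τ a b => E (τ * a,
          τ * ((if 0 < v₀ then (1:ℝ) else -1) * Real.sqrt (1 - a ^ 2 - f r₀ ^ 2 * b ^ 2)),
          τ * b)) t u₀ 0
        = -(t / v₀) *
            ∫ s in (0:ℝ)..t, f (Real.sqrt ((x₀ + u₀ * s) ^ 2 + (y₀ + v₀ * s) ^ 2)) ^ 2 := by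
    intro hv t
    have hσ : (if 0 < v₀ then (1:ℝ) else -1) * Real.sqrt (1 - u₀ ^ 2) = v₀ := by
      rw [show (1:ℝ) - u₀ ^ 2 = v₀ ^ 2 by linarith, Real.sqrt_sq_eq_abs]
      rcases lt_or_gt_of_ne hv with h | h
      · rw [if_neg (not_lt.mpr h.le), abs_of_neg h]; ring
      · rw [if_pos h, abs_of_pos h, one_mul]
    exact chart_det hE hunit hv hplane _ _ hσ t _ (hkey t)
  have chart2 : ∀ (hu : u₀ ≠ 0) (t : ℝ),
      jac3 (fun τ a b => E (
          τ * ((if 0 < u₀ then (1:ℝ) else -1) * Real.sqrt (1 - a ^ 2 - f r₀ ^ 2 * b ^ 2)),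
          τ * a, τ * b)) t v₀ 0
        = (t / u₀) *
            ∫ s in (0:ℝ)..t, f (Real.sqrt ((x₀ + u₀ * s) ^ 2 + (y₀ + v₀ * s) ^ 2)) ^ 2 := by
    intro hu t
    have hunit' : v₀ ^ 2 + u₀ ^ 2 = 1 := by linarith
    have hσ : (if 0 < u₀ then (1:ℝ) else -1) * Real.sqrt (1 - v₀ ^ 2) = u₀ := by
      rw [show (1:ℝ) - v₀ ^ 2 = u₀ ^ 2 by linarith, Real.sqrt_sq_eq_abs]
      rcases lt_or_gt_of_ne hu with h | h
      · rw [if_neg (not_lt.mpr h.le), abs_of_neg h]; ring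
      · rw [if_pos h, abs_of_pos h, one_mul]
    have hplane' : ∀ x y : ℝ,
        (fun q : ℝ × ℝ × ℝ => (((E (q.2.1, q.1, q.2.2)).2.1, (E (q.2.1, q.1, q.2.2)).1,
          (E (q.2.1, q.1, q.2.2)).2.2) : ℝ × ℝ × ℝ)) (x, y, 0) = (y₀ + x, x₀ + y, z₀) := by
      intro x y
      show (((E (y, x, 0)).2.1, (E (y, x, 0)).1, (E (y, x, 0)).2.2) : ℝ × ℝ × ℝ)
        = (y₀ + x, x₀ + y, z₀)
      rw [hplane y x]
    have hE' : Differentiable ℝ (fun q : ℝ × ℝ × ℝ => (((E (q.2.1, q.1, q.2.2)).2.1,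
        (E (q.2.1, q.1, q.2.2)).1, (E (q.2.1, q.1, q.2.2)).2.2) : ℝ × ℝ × ℝ)) := by
      have hsw : Differentiable ℝ (fun q : ℝ × ℝ × ℝ => ((q.2.1, q.1, q.2.2) : ℝ × ℝ × ℝ)) := by
        fun_prop
      have hEc : Differentiable ℝ (fun q : ℝ × ℝ × ℝ => E (q.2.1, q.1, q.2.2)) := hE.comp hsw
      exact Differentiable.prodMk (hEc.snd.fst) (Differentiable.prodMk (hEc.fst) (hEc.snd.snd))
    have hI' : HasDerivAt (fun w => (((fun q : ℝ × ℝ × ℝ => (((E (q.2.1, q.1, q.2.2)).2.1,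
        (E (q.2.1, q.1, q.2.2)).1, (E (q.2.1, q.1, q.2.2)).2.2) : ℝ × ℝ × ℝ))
          (t * v₀, t * u₀, t * w)).2.2))
        (∫ s in (0:ℝ)..t, f (Real.sqrt ((x₀ + u₀ * s) ^ 2 + (y₀ + v₀ * s) ^ 2)) ^ 2) 0 :=
      hkey t
    have hmain := chart_det hE' hunit' hu hplane' _ (f r₀ ^ 2) hσ t _ hI'
    have hswap : jac3 (fun τ a b => (fun q : ℝ × ℝ × ℝ => (((E (q.2.1, q.1, q.2.2)).2.1,
          (E (q.2.1, q.1, q.2.2)).1, (E (q.2.1, q.1, q.2.2)).2.2) : ℝ × ℝ × ℝ))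
          (τ * a, τ * ((if 0 < u₀ then (1:ℝ) else -1)
            * Real.sqrt (1 - a ^ 2 - f r₀ ^ 2 * b ^ 2)), τ * b)) t v₀ 0
        = - jac3 (fun τ a b => E (
          τ * ((if 0 < u₀ then (1:ℝ) else -1) * Real.sqrt (1 - a ^ 2 - f r₀ ^ 2 * b ^ 2)),
          τ * a, τ * b)) t v₀ 0 := by
      simp only [jac3]
      rw [Matrix.det_fin_three, Matrix.det_fin_three]
      norm_num [Matrix.cons_val_zero, Matrix.cons_val_one, Matrix.head_cons, Matrix.cons_val_two, Matrix.tail_cons]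
      ring
    rw [hswap] at hmain
    linarith [hmain]
  refine ⟨⟨chart1, chart2⟩, ?_⟩
  intro t ht
  have hIpos := integral_pos' (x₀ := x₀) (y₀ := y₀) hf hunit ht
  constructor
  · intro hv
    rw [chart1 hv t]
    exact mul_ne_zero (neg_ne_zero.mpr (div_ne_zero (ne_of_gt ht) hv)) (ne_of_gt hIpos)
  · intro hu
    rw [chart2 hu t]
    exact mul_ne_zero (div_ne_zero (ne_of_gt ht) hu) (ne_of_gt hIpos)
end
end

section
/- Fix 0<r_min<r_max, φ∈(0,π/2), and set w₀ = 1/√(r_min²+r_max²), s = w₀t+φ, r(t) = √(r_min² + (r_max²−r_min²)sin²(s)). Define D(t) = (1/r(t))·[ (w₀³t·(cot(φ)·r_max² − tan(φ)·r_min²) + 2)·sin(s)cos(s) + (−w₀³t·r_max² − tan(φ))·cos²(s) + (w₀³t·r_min² − cot(φ))·sin²(s) ]. Then D(0)=0 and the first strictly positive zero of D is exactly t = π/w₀. -/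
noncomputable section

set_option maxHeartbeats 800000 in
/-- the explicit Jacobian determinant
`D(t) = (1/r(t))·[(w₀³t(cotφ·r_max² − tanφ·r_min²) + 2)·sin s·cos s
        + (−w₀³t·r_max² − tanφ)·cos²s + (w₀³t·r_min² − cotφ)·sin²s]`,
with `w₀ = 1/√(r_min²+r_max²)`, `s = w₀t+φ` and
`r(t) = √(r_min²+(r_max²−r_min²)sin²s)`, vanishes at `t = 0`, and its first strictly
positive zero is exactly `t = π/w₀`. -/
theorem first_positive_zero_of_jacobian
    (rmin rmax φ : ℝ) (h1 : 0 < rmin) (h2 : rmin < rmax)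
    (hφ : φ ∈ Set.Ioo (0:ℝ) (Real.pi / 2))
    (w₀ : ℝ) (hw : w₀ = 1 / Real.sqrt (rmin ^ 2 + rmax ^ 2))
    (s : ℝ → ℝ) (hs : ∀ t, s t = w₀ * t + φ)
    (r : ℝ → ℝ)
    (hr : ∀ t, r t = Real.sqrt (rmin ^ 2 + (rmax ^ 2 - rmin ^ 2) * Real.sin (s t) ^ 2))
    (D : ℝ → ℝ)
    (hD : ∀ t, D t = (1 / r t) *
      ((w₀ ^ 3 * t * ((Real.cos φ / Real.sin φ) * rmax ^ 2 - Real.tan φ * rmin ^ 2) + 2) *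
          Real.sin (s t) * Real.cos (s t)
        + (-(w₀ ^ 3 * t * rmax ^ 2) - Real.tan φ) * Real.cos (s t) ^ 2
        + (w₀ ^ 3 * t * rmin ^ 2 - Real.cos φ / Real.sin φ) * Real.sin (s t) ^ 2)) :
    D 0 = 0 ∧ D (Real.pi / w₀) = 0 ∧ ∀ t ∈ Set.Ioo 0 (Real.pi / w₀), D t ≠ 0 := by
  obtain ⟨hφ0, hφ2⟩ := hφ
  have hsφ : 0 < Real.sin φ := Real.sin_pos_of_pos_of_lt_pi hφ0
    (lt_trans hφ2 (by linarith [Real.pi_pos]))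
  have hcφ : 0 < Real.cos φ := Real.cos_pos_of_mem_Ioo ⟨by linarith [Real.pi_pos], hφ2⟩
  have hSpos : 0 < rmin ^ 2 + rmax ^ 2 := by positivity
  have hsqrt : 0 < Real.sqrt (rmin ^ 2 + rmax ^ 2) := Real.sqrt_pos.mpr hSpos
  have hw0 : 0 < w₀ := by rw [hw]; positivity
  have hw2 : w₀ ^ 2 * (rmin ^ 2 + rmax ^ 2) = 1 := by
    rw [hw]
    rw [div_pow, one_pow, Real.sq_sqrt hSpos.le]
    field_simp
  -- the key algebraic identity
  have key : ∀ t : ℝ, Real.sin φ * Real.cos φ *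
      ((w₀ ^ 3 * t * ((Real.cos φ / Real.sin φ) * rmax ^ 2 - Real.tan φ * rmin ^ 2) + 2) *
          Real.sin (s t) * Real.cos (s t)
        + (-(w₀ ^ 3 * t * rmax ^ 2) - Real.tan φ) * Real.cos (s t) ^ 2
        + (w₀ ^ 3 * t * rmin ^ 2 - Real.cos φ / Real.sin φ) * Real.sin (s t) ^ 2)
      = Real.sin (w₀ * t) *
        (w₀ ^ 3 * t * (rmax ^ 2 * Real.cos φ * Real.cos (s t)
            + rmin ^ 2 * Real.sin φ * Real.sin (s t)) - Real.sin (w₀ * t)) := by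
    intro t
    rw [hs]
    set sp := Real.sin φ with hsp
    set cp := Real.cos φ with hcp
    set su := Real.sin (w₀ * t) with hsu
    set cu := Real.cos (w₀ * t) with hcu
    have hS : Real.sin (w₀ * t + φ) = su * cp + cu * sp := Real.sin_add _ _
    have hC : Real.cos (w₀ * t + φ) = cu * cp - su * sp := Real.cos_add _ _
    have hT : Real.tan φ = sp / cp := Real.tan_eq_sin_div_cos φ
    have hpy : sp ^ 2 + cp ^ 2 = 1 := Real.sin_sq_add_cos_sq φ
    rw [hS, hC, hT]
    have hclear : sp * cp *
        ((w₀ ^ 3 * t * ((cp / sp) * rmax ^ 2 - (sp / cp) * rmin ^ 2) + 2) *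
            (su * cp + cu * sp) * (cu * cp - su * sp)
          + (-(w₀ ^ 3 * t * rmax ^ 2) - sp / cp) * (cu * cp - su * sp) ^ 2
          + (w₀ ^ 3 * t * rmin ^ 2 - cp / sp) * (su * cp + cu * sp) ^ 2)
      = (w₀ ^ 3 * t * (cp ^ 2 * rmax ^ 2 - sp ^ 2 * rmin ^ 2) + 2 * sp * cp) *
            ((su * cp + cu * sp) * (cu * cp - su * sp))
          + (-(w₀ ^ 3 * t * rmax ^ 2 * sp * cp) - sp ^ 2) * (cu * cp - su * sp) ^ 2
          + (w₀ ^ 3 * t * rmin ^ 2 * sp * cp - cp ^ 2) * (su * cp + cu * sp) ^ 2 := by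
      field_simp
    rw [hclear]
    linear_combination (-su^2 + cp^2*su*cu*(w₀^3*t)*rmax^2 - cp^2*su^2
      - sp*cp*su^2*(w₀^3*t)*rmax^2 + sp*cp*su^2*(w₀^3*t)*rmin^2
      + sp^2*su*cu*(w₀^3*t)*rmin^2 - sp^2*su^2) * hpy
  have hspcp : Real.sin φ * Real.cos φ ≠ 0 := by positivity
  -- the bracket vanishes iff the RHS of key does
  have bracket_eq : ∀ t : ℝ,
      ((w₀ ^ 3 * t * ((Real.cos φ / Real.sin φ) * rmax ^ 2 - Real.tan φ * rmin ^ 2) + 2) *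
          Real.sin (s t) * Real.cos (s t)
        + (-(w₀ ^ 3 * t * rmax ^ 2) - Real.tan φ) * Real.cos (s t) ^ 2
        + (w₀ ^ 3 * t * rmin ^ 2 - Real.cos φ / Real.sin φ) * Real.sin (s t) ^ 2)
      = (Real.sin (w₀ * t) *
        (w₀ ^ 3 * t * (rmax ^ 2 * Real.cos φ * Real.cos (s t)
            + rmin ^ 2 * Real.sin φ * Real.sin (s t)) - Real.sin (w₀ * t)))
        / (Real.sin φ * Real.cos φ) := by
    intro t
    rw [eq_div_iff hspcp, ← key t]
    ring
  refine ⟨?_, ?_, ?_⟩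
  · rw [hD 0, bracket_eq 0]
    simp
  · rw [hD (Real.pi / w₀), bracket_eq (Real.pi / w₀)]
    rw [mul_div_cancel₀ _ hw0.ne']
    simp
  · intro t ht
    obtain ⟨ht0, htπ⟩ := ht
    have hu0 : 0 < w₀ * t := mul_pos hw0 ht0
    have huπ : w₀ * t < Real.pi := by
      rw [lt_div_iff₀ hw0] at htπ; linarith [htπ]
    have hsu : 0 < Real.sin (w₀ * t) := Real.sin_pos_of_pos_of_lt_pi hu0 huπ
    -- the second factor is negative
    have hG : w₀ ^ 3 * t * (rmax ^ 2 * Real.cos φ * Real.cos (s t)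
        + rmin ^ 2 * Real.sin φ * Real.sin (s t)) - Real.sin (w₀ * t) < 0 := by
      rw [hs]
      rw [Real.sin_add, Real.cos_add]
      set sp := Real.sin φ
      set cp := Real.cos φ
      set su := Real.sin (w₀ * t)
      set cu := Real.cos (w₀ * t)
      have hpy : sp ^ 2 + cp ^ 2 = 1 := Real.sin_sq_add_cos_sq φ
      set A := rmax ^ 2 * cp ^ 2 + rmin ^ 2 * sp ^ 2 with hA
      set B := (rmax ^ 2 - rmin ^ 2) * sp * cp with hBdef
      have hba : 0 < rmax ^ 2 - rmin ^ 2 := by nlinarith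
      have hB : 0 < B := mul_pos (mul_pos hba hsφ) hcφ
      have hApos : 0 < A := by positivity
      have hw2pos : 0 < w₀ ^ 2 := by positivity
      have hinner : rmax ^ 2 * cp * (cu * cp - su * sp)
          + rmin ^ 2 * sp * (su * cp + cu * sp) = A * cu - B * su := by
        rw [hA, hBdef]; ring
      rw [hinner]
      have hgoal : w₀ ^ 3 * t * (A * cu - B * su)
          = w₀ ^ 2 * A * ((w₀ * t) * cu) - w₀ ^ 2 * (w₀ * t) * B * su := by ring
      rw [hgoal]
      have h7 : 0 < w₀ ^ 2 * (w₀ * t) * B * su :=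
        mul_pos (mul_pos (mul_pos hw2pos hu0) hB) hsu
      rcases le_or_gt cu 0 with hcu | hcu
      · have h5 : w₀ ^ 2 * A * ((w₀ * t) * cu) ≤ 0 := by
          apply mul_nonpos_of_nonneg_of_nonpos (by positivity)
          exact mul_nonpos_of_nonneg_of_nonpos hu0.le hcu
        linarith
      · have hu2 : w₀ * t < Real.pi / 2 := by
          by_contra hcon
          push_neg at hcon
          have := Real.cos_nonpos_of_pi_div_two_le_of_le hcon (by linarith [Real.pi_pos])
          linarith
        have htan := Real.lt_tan hu0 hu2
        have hucu : (w₀ * t) * cu < su := by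
          rw [Real.tan_eq_sin_div_cos, lt_div_iff₀ hcu] at htan
          exact htan
        have hA1 : w₀ ^ 2 * A < 1 := by
          have hAlt : A < rmin ^ 2 + rmax ^ 2 := by
            rw [hA]
            nlinarith [mul_nonneg hba.le (sq_nonneg sp), mul_pos h1 h1, sq_nonneg rmin,
              mul_nonneg (sq_nonneg rmax) (sq_nonneg sp)]
          nlinarith [mul_lt_mul_of_pos_left hAlt hw2pos]
        have h5 : w₀ ^ 2 * A * ((w₀ * t) * cu) < w₀ ^ 2 * A * su :=
          mul_lt_mul_of_pos_left hucu (by positivity)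
        have h6 : w₀ ^ 2 * A * su < 1 * su := mul_lt_mul_of_pos_right hA1 hsu
        linarith
    have hbpos : 0 < r t := by
      rw [hr]
      apply Real.sqrt_pos.mpr
      nlinarith [mul_nonneg (by nlinarith : (0:ℝ) ≤ rmax ^ 2 - rmin ^ 2) (sq_nonneg (Real.sin (s t))), mul_pos h1 h1]
    rw [hD t, bracket_eq t]
    have hnum : Real.sin (w₀ * t) *
        (w₀ ^ 3 * t * (rmax ^ 2 * Real.cos φ * Real.cos (s t)
            + rmin ^ 2 * Real.sin φ * Real.sin (s t)) - Real.sin (w₀ * t)) < 0 :=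
      mul_neg_of_pos_of_neg hsu hG
    have hfrac : (Real.sin (w₀ * t) *
        (w₀ ^ 3 * t * (rmax ^ 2 * Real.cos φ * Real.cos (s t)
            + rmin ^ 2 * Real.sin φ * Real.sin (s t)) - Real.sin (w₀ * t)))
        / (Real.sin φ * Real.cos φ) < 0 :=
      div_neg_of_neg_of_pos hnum (by positivity)
    have h1r : 0 < 1 / r t := by positivity
    exact ne_of_lt (mul_neg_of_pos_of_neg h1r hfrac)
end
end
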